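/- arXiv:1206.3821 — 10 statements merged into one kernel-verified Lean document; each statement's English description precedes it below -/
import Mathlib

section
/- Let G be a locally compact topological abelian group, X a Banach space, and f : G → X continuous. Then f is recurrent if and only if for every ε > 0 and every compact set K ⊆ G there exists a finite set F ⊆ G with E(f, ε, K) + F = G. -/
open Pointwise

/-- `E(f, ε, K)`: the set of `ε`-`K`-periods of `f`. -/
def EsetG {G X : Type*} [AddCommGroup G] [NormedAddCommGroup X]
    (f : G → X) (ε : ℝ) (K : Set G) : Set G :=
  {τ | ∀ t ∈ K, ‖f (t + τ) - f t‖ ≤ ε}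

/-- A subset `E` of `G` is relatively dense if `E + L = G` for some compact `L`. -/
def RelDenseG {G : Type*} [AddCommGroup G] [TopologicalSpace G] (E : Set G) : Prop :=
  ∃ L : Set G, IsCompact L ∧ E + L = Set.univ

/-- A continuous `f : G → X` is recurrent if all its sets of `ε`-`K`-periods are
relatively dense. -/
def RecurrentG {G X : Type*} [AddCommGroup G] [TopologicalSpace G] [NormedAddCommGroup X]
    (f : G → X) : Prop :=
  Continuous f ∧ ∀ ε > (0 : ℝ), ∀ K : Set G, IsCompact K → RelDenseG (EsetG f ε K)


lemma exists_nhds_zero_of_compact {G X : Type*} [AddCommGroup G] [TopologicalSpace G]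
    [IsTopologicalAddGroup G] [NormedAddCommGroup X]
    (f : G → X) (hf : Continuous f) {K : Set G} (hK : IsCompact K) {ε : ℝ} (hε : 0 < ε) :
    ∃ U : Set G, IsOpen U ∧ (0 : G) ∈ U ∧ ∀ t ∈ K, ∀ u ∈ U, ‖f (t + u) - f t‖ ≤ ε := by
  set S : Set (G × G) := {p | ‖f (p.1 + p.2) - f p.1‖ < ε} with hS
  have hSo : IsOpen S := by
    have : Continuous fun p : G × G => ‖f (p.1 + p.2) - f p.1‖ :=
      ((hf.comp (continuous_fst.add continuous_snd)).sub (hf.comp continuous_fst)).norm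
    exact isOpen_lt this continuous_const
  have hsub : K ×ˢ ({0} : Set G) ⊆ S := by
    rintro ⟨t, u⟩ ⟨-, hu⟩
    simp only [Set.mem_singleton_iff] at hu
    simp [hS, hu, hε]
  obtain ⟨u, v, hu, hv, hKu, h0v, huv⟩ :=
    generalized_tube_lemma hK isCompact_singleton hSo hsub
  refine ⟨v, hv, h0v rfl, fun t ht w hw => ?_⟩
  exact le_of_lt (huv (Set.mk_mem_prod (hKu ht) hw))

/-- A continuous function on a locally compact abelian group is recurrent iff for every
`ε > 0` and compact `K` there is a finite `F` with `E(f, ε, K) + F = G`. -/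
theorem recurrent_iff_finite_cover {G X : Type*} [AddCommGroup G] [TopologicalSpace G]
    [IsTopologicalAddGroup G] [LocallyCompactSpace G]
    [NormedAddCommGroup X] [NormedSpace ℝ X] [CompleteSpace X]
    (f : G → X) (hf : Continuous f) :
    RecurrentG f ↔ ∀ ε > (0 : ℝ), ∀ K : Set G, IsCompact K →
      ∃ F : Set G, F.Finite ∧ EsetG f ε K + F = Set.univ := by
  constructor
  · rintro ⟨-, hrec⟩ ε hε K hK
    obtain ⟨V, hVc, hV0⟩ := exists_compact_mem_nhds (0 : G)
    have hK' : IsCompact (K + V) := hK.add hVc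
    obtain ⟨L, hL, hEL⟩ := hrec (ε / 2) (by linarith) (K + V) hK'
    obtain ⟨U, hUo, hU0, hU⟩ := exists_nhds_zero_of_compact f hf hK (half_pos hε)
    set W : Set G := U ∩ interior V with hWdef
    have hWo : IsOpen W := hUo.inter isOpen_interior
    have hW0 : (0 : G) ∈ W := ⟨hU0, mem_interior_iff_mem_nhds.mpr hV0⟩
    obtain ⟨F, hF⟩ := hL.elim_nhds_subcover (fun l => l +ᵥ W) (fun l _ =>
      (hWo.vadd l).mem_nhds ⟨0, hW0, add_zero l⟩)
    refine ⟨↑F, F.finite_toSet, ?_⟩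
    apply Set.eq_univ_of_forall
    intro g
    have hg : g ∈ EsetG f (ε / 2) (K + V) + L := hEL.symm ▸ Set.mem_univ g
    rcases Set.mem_add.mp hg with ⟨τ, hτ, l, hl, hgl⟩
    rcases Set.mem_iUnion₂.mp (hF.2 hl) with ⟨x, hxF, hx⟩
    rcases hx with ⟨w, hwW, hxw⟩
    refine Set.mem_add.mpr ⟨τ + w, ?_, x, hxF, ?_⟩
    · intro t ht
      have htw : t + w ∈ K + V :=
        Set.add_mem_add ht (interior_subset hwW.2)
      have h1 : ‖f (t + w + τ) - f (t + w)‖ ≤ ε / 2 := hτ (t + w) htw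
      have h2 : ‖f (t + w) - f t‖ ≤ ε / 2 := hU t ht w hwW.1
      calc ‖f (t + (τ + w)) - f t‖
          = ‖(f (t + w + τ) - f (t + w)) + (f (t + w) - f t)‖ := by
            rw [show t + (τ + w) = t + w + τ by abel]; abel_nf
        _ ≤ ‖f (t + w + τ) - f (t + w)‖ + ‖f (t + w) - f t‖ := norm_add_le _ _
        _ ≤ ε / 2 + ε / 2 := add_le_add h1 h2
        _ = ε := by ring
    · have : x + w = l := hxw
      rw [← hgl, ← this]; abel
  · rintro h
    refine ⟨hf, fun ε hε K hK => ?_⟩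
    obtain ⟨F, hFfin, hF⟩ := h ε hε K hK
    exact ⟨F, hFfin.isCompact, hF⟩
end

section
/- Let G be a path-connected topological abelian group and X a Banach space. Then every uniformly continuous recurrent function f : G → X is bounded. -/
open Pointwise

/-- On a path-connected topological abelian group, every uniformly continuous recurrent
function with values in a Banach space is bounded. -/
theorem recurrent_uniformlyContinuous_bounded {G X : Type*} [AddCommGroup G] [UniformSpace G]
    [IsUniformAddGroup G] [PathConnectedSpace G]
    [NormedAddCommGroup X] [NormedSpace ℝ X] [CompleteSpace X]
    (f : G → X) (hrec : RecurrentG f) (huc : UniformContinuous f) :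
    Bornology.IsBounded (Set.range f) := by
  classical
  -- Step 1: from uniform continuity, get a neighborhood `V` of `0` controlling oscillation.
  obtain ⟨V, hV0, hV⟩ : ∃ V ∈ nhds (0 : G), ∀ a b : G, b - a ∈ V → ‖f b - f a‖ ≤ 1 := by
    have h1 : {p : X × X | dist p.1 p.2 < 1} ∈ uniformity X := Metric.dist_mem_uniformity one_pos
    have h2 := huc h1
    rw [uniformity_eq_comap_nhds_zero G, Filter.mem_map, Filter.mem_comap] at h2
    obtain ⟨V, hV, hVs⟩ := h2
    refine ⟨V, hV, fun a b hab => ?_⟩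
    have := hVs (show ((a, b) : G × G) ∈ _ from hab)
    simp only [Set.mem_preimage, Set.mem_setOf_eq, Prod.map] at this
    rw [← dist_eq_norm, dist_comm]
    exact le_of_lt this
  -- Step 2: the set of `g` with bounded oscillation is a subgroup.
  set S : AddSubgroup G :=
    { carrier := {g | ∃ C : ℝ, ∀ t : G, ‖f (t + g) - f t‖ ≤ C}
      zero_mem' := ⟨0, fun t => by simp⟩
      add_mem' := by
        rintro a b ⟨Ca, ha⟩ ⟨Cb, hb⟩
        refine ⟨Cb + Ca, fun t => ?_⟩
        calc ‖f (t + (a + b)) - f t‖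
            ≤ ‖f (t + (a + b)) - f (t + a)‖ + ‖f (t + a) - f t‖ := by
              simpa [dist_eq_norm] using dist_triangle (f (t + (a + b))) (f (t + a)) (f t)
          _ ≤ Cb + Ca := by
              have h1 : ‖f ((t + a) + b) - f (t + a)‖ ≤ Cb := hb (t + a)
              rw [← add_assoc]
              exact add_le_add h1 (ha t)
      neg_mem' := by
        rintro a ⟨C, h⟩
        refine ⟨C, fun t => ?_⟩
        have h1 : ‖f ((t - a) + a) - f (t - a)‖ ≤ C := h (t - a)
        rw [sub_add_cancel] at h1
        rw [norm_sub_rev]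
        simpa [sub_eq_add_neg] using h1 } with hSdef
  have hVS : V ⊆ (S : Set G) := by
    intro v hv
    exact ⟨1, fun t => hV t (t + v) (by simpa using hv)⟩
  have hSopen : IsOpen (S : Set G) :=
    S.isOpen_of_mem_nhds (Filter.mem_of_superset hV0 hVS)
  have hSuniv : ∀ g : G, g ∈ S := by
    have hclopen : IsClopen (S : Set G) := ⟨S.isClosed_of_isOpen hSopen, hSopen⟩
    have := hclopen.eq_univ (s := (S : Set G)) ⟨0, S.zero_mem⟩
    intro g
    have : g ∈ (S : Set G) := this ▸ Set.mem_univ g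
    exact this
  -- Step 3: uniform control of oscillation on compact sets.
  have hall : ∀ g : G, ∃ C : ℝ, 0 ≤ C ∧ ∀ t : G, ‖f (t + g) - f t‖ ≤ C := by
    intro g
    obtain ⟨C, hC⟩ := hSuniv g
    exact ⟨max C 0, le_max_right _ _, fun t => (hC t).trans (le_max_left _ _)⟩
  have hcomp : ∀ L : Set G, IsCompact L →
      ∃ C : ℝ, ∀ l ∈ L, ∀ t : G, ‖f (t + l) - f t‖ ≤ C := by
    intro L hL
    obtain ⟨tset, htL, hcover⟩ := hL.elim_nhds_subcover (fun g => {x | x - g ∈ V})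
      (fun g _ => by
        have hc : ContinuousAt (fun x : G => x - g) g := (continuous_sub_right g).continuousAt
        have := hc.preimage_mem_nhds (by simpa using hV0)
        exact this)
    refine ⟨1 + ∑ g ∈ tset, Classical.choose (hall g), fun l hl t => ?_⟩
    have := hcover hl
    simp only [Set.mem_iUnion, Set.mem_setOf_eq] at this
    obtain ⟨g, hg, hlg⟩ := this
    have h1 : ‖f (t + l) - f (t + g)‖ ≤ 1 := by
      apply hV
      simpa [add_sub_add_left_eq_sub] using hlg
    have h2 : ‖f (t + g) - f t‖ ≤ Classical.choose (hall g) :=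
      (Classical.choose_spec (hall g)).2 t
    have h3 : Classical.choose (hall g) ≤ ∑ g ∈ tset, Classical.choose (hall g) :=
      Finset.single_le_sum (fun i _ => (Classical.choose_spec (hall i)).1) hg
    calc ‖f (t + l) - f t‖
        ≤ ‖f (t + l) - f (t + g)‖ + ‖f (t + g) - f t‖ := by
          simpa [dist_eq_norm] using dist_triangle (f (t + l)) (f (t + g)) (f t)
      _ ≤ 1 + ∑ g ∈ tset, Classical.choose (hall g) := add_le_add h1 (h2.trans h3)
  -- Step 4: recurrence with `ε = 1`, `K = {0}`.
  obtain ⟨L, hLcomp, hEL⟩ := hrec.2 1 one_pos {0} isCompact_singleton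
  obtain ⟨C, hC⟩ := hcomp L hLcomp
  rw [isBounded_iff_forall_norm_le]
  refine ⟨‖f 0‖ + 1 + C, ?_⟩
  rintro x ⟨g, rfl⟩
  have hg : g ∈ EsetG f 1 {0} + L := by rw [hEL]; trivial
  obtain ⟨τ, hτ, l, hl, rfl⟩ := hg
  have h1 : ‖f τ - f 0‖ ≤ 1 := by simpa using hτ 0 rfl
  have h2 : ‖f (τ + l) - f τ‖ ≤ C := hC l hl τ
  calc ‖f (τ + l)‖
      ≤ ‖f (τ + l) - f τ‖ + ‖f τ - f 0‖ + ‖f 0‖ := by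
        have := dist_triangle4 (f (τ + l)) (f τ) (f 0) 0
        simpa [dist_eq_norm] using this
    _ ≤ C + 1 + ‖f 0‖ := by gcongr
    _ = ‖f 0‖ + 1 + C := by ring
end

section
/- Let G be a locally compact topological abelian group, X a Banach space, and f : G → X continuous. Then the orbit O(f) is compact and minimal in C(G, X) if and only if f is recurrent, uniformly continuous, and f(G) is relatively compact in X. -/
open Pointwise

/-- The translateMap `g(· + s)` of a continuous map `g`. -/
def translateMap {G X : Type*} [AddCommGroup G] [TopologicalSpace G] [IsTopologicalAddGroup G]
    [TopologicalSpace X] (s : G) (g : C(G, X)) : C(G, X) :=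
  g.comp ⟨fun t => t + s, by continuity⟩

/-- The orbit of `f`: the closure of the set of translates of `f` in `C(G, X)` with the
topology of uniform convergence on compact sets (the compact-open topology). -/
def orbitOf {G X : Type*} [AddCommGroup G] [TopologicalSpace G] [IsTopologicalAddGroup G]
    [TopologicalSpace X] (f : C(G, X)) : Set C(G, X) :=
  closure {g | ∃ s : G, g = translateMap s f}

/-- The orbit of `f` is minimal: every nonempty closed translation invariant subset of the
orbit equals the orbit. -/
def IsMinimalOrbit {G X : Type*} [AddCommGroup G] [TopologicalSpace G] [IsTopologicalAddGroup G]
    [TopologicalSpace X] (f : C(G, X)) : Prop :=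
  ∀ U : Set C(G, X), U ⊆ orbitOf f → U.Nonempty → IsClosed U →
    (∀ g ∈ U, ∀ s : G, translateMap s g ∈ U) → U = orbitOf f

section Helpers

set_option linter.unusedSectionVars false

variable {G X : Type*} [AddCommGroup G] [UniformSpace G] [IsUniformAddGroup G]
  [NormedAddCommGroup X]

lemma tm_apply (s : G) (g : C(G, X)) (t : G) : translateMap s g t = g (t + s) := rfl

lemma tm_zero (g : C(G, X)) : translateMap (0 : G) g = g := by
  ext t; simp [tm_apply]

lemma tm_tm (s s' : G) (g : C(G, X)) :
    translateMap s (translateMap s' g) = translateMap (s' + s) g := by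
  ext t; simp only [tm_apply]; congr 1; abel

lemma tm_cont (s : G) : Continuous (translateMap s : C(G, X) → C(G, X)) :=
  ContinuousMap.continuous_precomp _

/-- neighborhood basis in `C(G,X)` -/
lemma nhds_basis' (h : C(G, X)) :
    (nhds h).HasBasis (fun p : Set G × ℝ => IsCompact p.1 ∧ 0 < p.2)
      (fun p => {g | ∀ t ∈ p.1, dist (h t) (g t) < p.2}) := by
  have hb := (Metric.uniformity_basis_dist (α := X)).compactConvergenceUniformity (α := G)
  rw [nhds_eq_comap_uniformity]
  exact hb.comap (Prod.mk h)

lemma mem_closure_iff'' {S : Set C(G, X)} {h : C(G, X)} :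
    h ∈ closure S ↔ ∀ K : Set G, IsCompact K → ∀ ε : ℝ, 0 < ε →
      ∃ g ∈ S, ∀ t ∈ K, dist (h t) (g t) < ε := by
  rw [mem_closure_iff_nhds_basis (nhds_basis' h)]
  constructor
  · intro H K hK ε hε; exact H (K, ε) ⟨hK, hε⟩
  · intro H p hp; exact H p.1 hp.1 p.2 hp.2

lemma ball_mem_nhds' (h : C(G, X)) {K : Set G} (hK : IsCompact K) {ε : ℝ} (hε : 0 < ε) :
    {g : C(G, X) | ∀ t ∈ K, dist (h t) (g t) < ε} ∈ nhds h :=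
  (nhds_basis' h).mem_of_mem (i := (K, ε)) ⟨hK, hε⟩

lemma self_mem_orbit (f : C(G, X)) : f ∈ orbitOf f :=
  subset_closure ⟨0, (tm_zero f).symm⟩

lemma translate_mem_orbit (f : C(G, X)) (s : G) : translateMap s f ∈ orbitOf f :=
  subset_closure ⟨s, rfl⟩

lemma orbit_invariant {f g : C(G, X)} (hg : g ∈ orbitOf f) (s : G) :
    translateMap s g ∈ orbitOf f := by
  have h1 : translateMap s g ∈ translateMap s '' (closure {g | ∃ s : G, g = translateMap s f}) :=
    ⟨g, hg, rfl⟩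
  have h2 := image_closure_subset_closure_image (f := (translateMap s : C(G, X) → C(G, X)))
    (s := {g | ∃ s : G, g = translateMap s f}) (tm_cont s) h1
  refine closure_mono ?_ h2
  rintro - ⟨-, ⟨s', rfl⟩, rfl⟩
  exact ⟨s' + s, tm_tm s s' f⟩

lemma orbit_of_mem_subset {f g : C(G, X)} (hg : g ∈ orbitOf f) : orbitOf g ⊆ orbitOf f := by
  refine closure_minimal ?_ isClosed_closure
  rintro - ⟨s, rfl⟩
  exact orbit_invariant hg s

end Helpers

section Main

set_option linter.unusedSectionVars false
set_option maxHeartbeats 1000000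

open Filter Set

variable {G X : Type*} [AddCommGroup G] [UniformSpace G] [IsUniformAddGroup G]
  [LocallyCompactSpace G] [NormedAddCommGroup X] [CompleteSpace X]

lemma minimal_of_recurrent {f : G → X} (hf : Continuous f) (hrec : RecurrentG f) :
    IsMinimalOrbit (⟨f, hf⟩ : C(G, X)) := by
  set F : C(G, X) := ⟨f, hf⟩ with hF
  rintro U hUsub ⟨g, hgU⟩ hUcl hUinv
  have hfU : F ∈ U := by
    rw [← hUcl.closure_eq, mem_closure_iff'']
    intro K hK ε hε
    obtain ⟨L, hL, hEL⟩ := hrec.2 (ε/3) (by linarith) K hK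
    have hK' : IsCompact (K + (-L)) := hK.add hL.neg
    have hg : g ∈ closure {g | ∃ s : G, g = translateMap s F} := hUsub hgU
    rw [mem_closure_iff''] at hg
    obtain ⟨-, ⟨s, rfl⟩, hclose⟩ := hg (K + (-L)) hK' (ε/3) (by linarith)
    have hs : s ∈ EsetG f (ε/3) K + L := by rw [hEL]; trivial
    obtain ⟨τ, hτ, l, hl, hτl⟩ := Set.mem_add.1 hs
    refine ⟨translateMap (-l) g, hUinv g hgU _, ?_⟩
    intro t ht
    have htl : t + -l ∈ K + (-L) := Set.add_mem_add ht (Set.neg_mem_neg.2 hl)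
    have h1 : dist (g (t + -l)) (f (t + -l + s)) < ε/3 := hclose _ htl
    have he : t + -l + s = t + τ := by rw [← hτl]; abel
    have h2 : dist (f t) (f (t + τ)) ≤ ε/3 := by
      rw [dist_comm, dist_eq_norm]; exact hτ t ht
    have h1' : dist (f (t + τ)) (g (t + -l)) < ε/3 := by rw [dist_comm, ← he]; exact h1
    calc dist (F t) (translateMap (-l) g t)
        = dist (f t) (g (t + -l)) := rfl
      _ ≤ dist (f t) (f (t + τ)) + dist (f (t + τ)) (g (t + -l)) := dist_triangle _ _ _
      _ < ε := by linarith
  refine subset_antisymm hUsub (closure_minimal ?_ hUcl)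
  rintro - ⟨s, rfl⟩
  exact hUinv F hfU s

lemma orbit_compact_of {f : G → X} (hf : Continuous f) (huc : UniformContinuous f)
    (hrng : IsCompact (closure (Set.range f))) :
    IsCompact (orbitOf (⟨f, hf⟩ : C(G, X))) := by
  set F : C(G, X) := ⟨f, hf⟩ with hF
  have hb := (Metric.uniformity_basis_dist (α := X)).compactConvergenceUniformity (α := G)
  have hS : TotallyBounded {g | ∃ s : G, g = translateMap s F} := by
    rw [hb.totallyBounded_iff]
    rintro ⟨K, ε⟩ ⟨hK, hε⟩
    have hW : {p : G × G | dist (f p.1) (f p.2) < ε/4} ∈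
        Filter.comap (fun p : G × G => p.2 - p.1) (nhds (0 : G)) := by
      rw [← uniformity_eq_comap_nhds_zero G]
      exact huc (Metric.dist_mem_uniformity (by linarith))
    obtain ⟨V, hV0, hVsub⟩ := Filter.mem_comap.1 hW
    have hVd : ∀ a b : G, b - a ∈ V → dist (f a) (f b) < ε/4 := by
      intro a b hab
      exact hVsub (show ((a, b) : G × G) ∈ (fun p : G × G => p.2 - p.1) ⁻¹' V from hab)
    -- cover K by finitely many translates of V
    obtain ⟨T, hTK, hTcov⟩ := hK.elim_nhds_subcover (fun t => {u | u - t ∈ V}) (by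
      intro t _
      have : Continuous fun u : G => u - t := continuous_id.sub continuous_const
      exact this.continuousAt.preimage_mem_nhds (by rw [show t - t = 0 from sub_self t]; exact hV0))
    -- pointwise total boundedness
    let Φ : G → (↥T → X) := fun s t => f (↑t + s)
    have hA : Set.range Φ ⊆ Set.univ.pi (fun _ : ↥T => closure (Set.range f)) := by
      rintro - ⟨s, rfl⟩ t -
      exact subset_closure (Set.mem_range_self _)
    have hTB : TotallyBounded (Set.range Φ) :=
      ((isCompact_univ_pi fun _ => hrng).totallyBounded).subset hA
    obtain ⟨C, hCA, hCfin, hCcov⟩ := totallyBounded_iff_subset.1 hTB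
      {p : (↥T → X) × (↥T → X) | dist p.1 p.2 < ε/4} (Metric.dist_mem_uniformity (by linarith))
    -- selection of representatives
    let sel : (↥T → X) → G := fun c => open scoped Classical in if h : ∃ s, Φ s = c then h.choose else 0
    have hsel : ∀ c ∈ C, Φ (sel c) = c := by
      intro c hc
      obtain ⟨s, hs⟩ := hCA hc
      have hex : ∃ s, Φ s = c := ⟨s, hs⟩
      simp only [sel, dif_pos hex]
      exact hex.choose_spec
    refine ⟨(fun c => translateMap (sel c) F) '' C, hCfin.image _, ?_⟩
    rintro - ⟨s, rfl⟩
    have hΦs : Φ s ∈ ⋃ c ∈ C, {x | (x, c) ∈ {p : (↥T → X) × (↥T → X) | dist p.1 p.2 < ε/4}} :=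
      hCcov (Set.mem_range_self s)
    obtain ⟨c, hcC, hc⟩ := Set.mem_iUnion₂.1 hΦs
    refine Set.mem_iUnion₂.2 ⟨translateMap (sel c) F, ⟨c, hcC, rfl⟩, ?_⟩
    intro u hu
    obtain ⟨t, htT, htu⟩ := Set.mem_iUnion₂.1 (hTcov hu)
    have htu' : u - t ∈ V := htu
    have d1 : dist (f (t + s)) (f (u + s)) < ε/4 := by
      refine hVd _ _ ?_
      have : u + s - (t + s) = u - t := by abel
      rw [this]; exact htu'
    have d3 : dist (f (t + sel c)) (f (u + sel c)) < ε/4 := by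
      refine hVd _ _ ?_
      have : u + sel c - (t + sel c) = u - t := by abel
      rw [this]; exact htu'
    have d2 : dist (f (t + s)) (f (t + sel c)) < ε/4 := by
      have h1 : dist (Φ s ⟨t, htT⟩) (c ⟨t, htT⟩) ≤ dist (Φ s) c := dist_le_pi_dist _ _ _
      have h2 : f (t + sel c) = c ⟨t, htT⟩ := congrFun (hsel c hcC) ⟨t, htT⟩
      have := lt_of_le_of_lt h1 hc
      rw [← h2] at this
      exact this
    have : dist (f (u + s)) (f (u + sel c)) < ε := by
      calc dist (f (u + s)) (f (u + sel c))
          ≤ dist (f (u + s)) (f (t + s)) + dist (f (t + s)) (f (t + sel c))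
              + dist (f (t + sel c)) (f (u + sel c)) := dist_triangle4 _ _ _ _
        _ < ε/4 + ε/4 + ε/4 := by rw [dist_comm (f (u + s))]; exact add_lt_add (add_lt_add d1 d2) d3
        _ < ε := by linarith
    exact this
  exact TotallyBounded.isCompact_of_isClosed hS.closure isClosed_closure

lemma range_compact_of {f : G → X} (hf : Continuous f)
    (hcomp : IsCompact (orbitOf (⟨f, hf⟩ : C(G, X)))) :
    IsCompact (closure (Set.range f)) := by
  set F : C(G, X) := ⟨f, hf⟩ with hF
  have himg : IsCompact ((fun g : C(G, X) => g 0) '' orbitOf F) :=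
    hcomp.image (continuous_eval_const 0)
  refine IsCompact.of_isClosed_subset himg isClosed_closure ?_
  refine closure_minimal ?_ himg.isClosed
  rintro - ⟨s, rfl⟩
  exact ⟨translateMap s F, translate_mem_orbit F s, by simp only [tm_apply, zero_add]; rfl⟩

lemma uc_of_compact_orbit {f : G → X} (hf : Continuous f)
    (hcomp : IsCompact (orbitOf (⟨f, hf⟩ : C(G, X)))) : UniformContinuous f := by
  set F : C(G, X) := ⟨f, hf⟩ with hF
  have hb := (Metric.uniformity_basis_dist (α := X)).compactConvergenceUniformity (α := G)
  rw [UniformContinuous, Metric.uniformity_basis_dist.tendsto_right_iff]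
  intro ε hε
  obtain ⟨K₀, hK₀c, hK₀⟩ := exists_compact_mem_nhds (0 : G)
  have hS : TotallyBounded {g | ∃ s : G, g = translateMap s F} :=
    hcomp.totallyBounded.subset subset_closure
  rw [hb.totallyBounded_iff] at hS
  obtain ⟨C, hCfin, hCcov⟩ := hS (K₀, ε/4) ⟨hK₀c, by linarith⟩
  have hVg : ∀ g : C(G, X), {v : G | dist (g v) (g 0) < ε/4} ∈ nhds (0 : G) := by
    intro g
    have : {v : G | dist (g v) (g 0) < ε/4} = g ⁻¹' Metric.ball (g 0) (ε/4) := rfl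
    rw [this]
    exact g.continuous.continuousAt.preimage_mem_nhds (Metric.ball_mem_nhds _ (by linarith))
  have hV : K₀ ∩ ⋂ g ∈ C, {v : G | dist (g v) (g 0) < ε/4} ∈ nhds (0 : G) :=
    Filter.inter_mem hK₀ ((Filter.biInter_mem hCfin).2 fun g _ => hVg g)
  rw [Filter.eventually_iff, uniformity_eq_comap_nhds_zero G]
  refine Filter.mem_comap.2 ⟨_, hV, ?_⟩
  rintro ⟨a, b⟩ hab
  simp only [Set.mem_preimage, Set.mem_inter_iff, Set.mem_iInter] at hab
  obtain ⟨habK, habV⟩ := hab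
  have hmemS : translateMap a F ∈ ⋃ y ∈ C, {x : C(G, X) |
      (x, y) ∈ {fg : C(G, X) × C(G, X) | ∀ u ∈ K₀, (fg.1 u, fg.2 u) ∈
        {q : X × X | dist q.1 q.2 < ε/4}}} := hCcov ⟨a, rfl⟩
  obtain ⟨g, hgC, hg⟩ := Set.mem_iUnion₂.1 hmemS
  have h0K : (0 : G) ∈ K₀ := mem_of_mem_nhds hK₀
  have e1 : dist (f (b - a + a)) (g (b - a)) < ε/4 := hg _ habK
  have e2 : dist (g (b - a)) (g 0) < ε/4 := habV g hgC
  have e3 : dist (f (0 + a)) (g 0) < ε/4 := hg _ h0K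
  have hba : b - a + a = b := sub_add_cancel b a
  have h0a : (0 : G) + a = a := zero_add a
  rw [hba] at e1
  rw [h0a] at e3
  show dist (f a) (f b) < ε
  calc dist (f a) (f b) ≤ dist (f a) (g 0) + dist (g 0) (g (b - a)) + dist (g (b - a)) (f b) :=
        dist_triangle4 _ _ _ _
    _ < ε/4 + ε/4 + ε/4 := by
        rw [dist_comm (g 0) (g (b - a)), dist_comm (g (b - a)) (f b)]
        exact add_lt_add (add_lt_add e3 e2) e1
    _ < ε := by linarith

lemma recurrent_of_compact_minimal {f : G → X} (hf : Continuous f)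
    (hcomp : IsCompact (orbitOf (⟨f, hf⟩ : C(G, X))))
    (hmin : IsMinimalOrbit (⟨f, hf⟩ : C(G, X))) : RecurrentG f := by
  set F : C(G, X) := ⟨f, hf⟩ with hF
  refine ⟨hf, ?_⟩
  intro ε hε K hK
  have key : ∀ h ∈ orbitOf F, ∃ s : G, ∀ t ∈ K, dist (f t) (h (t + s)) < ε/2 := by
    intro h hh
    have h1 : orbitOf h = orbitOf F := hmin (orbitOf h) (orbit_of_mem_subset hh)
      ⟨h, self_mem_orbit h⟩ isClosed_closure (fun g hg s => orbit_invariant hg s)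
    have h2 : F ∈ orbitOf h := h1 ▸ self_mem_orbit F
    rw [orbitOf, mem_closure_iff''] at h2
    obtain ⟨-, ⟨s, rfl⟩, hcl⟩ := h2 K hK (ε/2) (by linarith)
    exact ⟨s, fun t ht => hcl t ht⟩
  classical
  let P : C(G, X) → G → Prop := fun h s => ∀ t ∈ K, dist (f t) (h (t + s)) < ε/2
  let sel : C(G, X) → G := fun h => if hh : ∃ s, P h s then hh.choose else 0
  have hsel : ∀ h ∈ orbitOf F, P h (sel h) := by
    intro h hh
    have hex : ∃ s, P h s := key h hh
    simp only [sel, dif_pos hex]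
    exact hex.choose_spec
  have hnbhd : ∀ h ∈ orbitOf F, (translateMap (sel h) : C(G, X) → C(G, X)) ⁻¹'
      {g : C(G, X) | ∀ t ∈ K, dist (translateMap (sel h) h t) (g t) < ε/2} ∈ nhds h :=
    fun h _ => (tm_cont (sel h)).continuousAt.preimage_mem_nhds
      (ball_mem_nhds' _ hK (by linarith))
  obtain ⟨T, hTsub, hTcov⟩ := hcomp.elim_nhds_subcover _ hnbhd
  refine ⟨↑(T.image fun h => -(sel h)), (T.image fun h => -(sel h)).finite_toSet.isCompact, ?_⟩
  refine Set.eq_univ_of_forall fun s => ?_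
  have hsF : translateMap s F ∈ orbitOf F := translate_mem_orbit F s
  obtain ⟨h, hhT, hh⟩ := Set.mem_iUnion₂.1 (hTcov hsF)
  have hhO : h ∈ orbitOf F := hTsub h hhT
  have hball : ∀ t ∈ K, dist (h (t + sel h)) (f (t + sel h + s)) < ε/2 := fun t ht => hh t ht
  have hτE : s + sel h ∈ EsetG f ε K := by
    intro t ht
    have e1 : dist (f t) (h (t + sel h)) < ε/2 := hsel h hhO t ht
    have e2 : dist (h (t + sel h)) (f (t + sel h + s)) < ε/2 := hball t ht
    have he : t + sel h + s = t + (s + sel h) := by abel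
    rw [he] at e2
    have : dist (f (t + (s + sel h))) (f t) < ε := by
      calc dist (f (t + (s + sel h))) (f t)
          ≤ dist (f (t + (s + sel h))) (h (t + sel h)) + dist (h (t + sel h)) (f t) :=
            dist_triangle _ _ _
        _ < ε/2 + ε/2 := add_lt_add (by rw [dist_comm]; exact e2) (by rw [dist_comm]; exact e1)
        _ = ε := by ring
    rw [← dist_eq_norm]
    exact le_of_lt this
  refine Set.mem_add.2 ⟨s + sel h, hτE, -(sel h), ?_, by abel⟩
  exact Finset.mem_coe.2 (Finset.mem_image_of_mem _ hhT)

end Main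

/-- Flor's theorem: for a continuous function on a locally compact abelian group, the orbit
is compact and minimal iff the function is recurrent, uniformly continuous, and has
relatively compact range. -/
theorem orbit_compact_minimal_iff {G X : Type*} [AddCommGroup G] [UniformSpace G]
    [IsUniformAddGroup G] [LocallyCompactSpace G]
    [NormedAddCommGroup X] [NormedSpace ℝ X] [CompleteSpace X]
    (f : G → X) (hf : Continuous f) :
    (IsCompact (orbitOf ⟨f, hf⟩) ∧ IsMinimalOrbit (⟨f, hf⟩ : C(G, X))) ↔
      (RecurrentG f ∧ UniformContinuous f ∧ IsCompact (closure (Set.range f))) := by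
  constructor
  · rintro ⟨hcomp, hmin⟩
    exact ⟨recurrent_of_compact_minimal hf hcomp hmin, uc_of_compact_orbit hf hcomp,
      range_compact_of hf hcomp⟩
  · rintro ⟨hrec, huc, hrng⟩
    exact ⟨orbit_compact_of hf huc hrng, minimal_of_recurrent hf hrec⟩
end

section
/- Let G be a locally compact topological abelian group, X a Banach space, and f : G → X recurrent, uniformly continuous, with relatively compact range. Then every g in the orbit O(f) is recurrent, uniformly continuous, and has relatively compact range. -/
open Pointwise

section Aux

open Filter Topology

variable {G X : Type*} [AddCommGroup G] [UniformSpace G] [IsUniformAddGroup G]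
  [NormedAddCommGroup X]

lemma cc_nhds_basis (g : C(G, X)) :
    (nhds g).HasBasis (fun p : Set G × ℝ => IsCompact p.1 ∧ 0 < p.2)
      (fun p => {h : C(G, X) | ∀ x ∈ p.1, dist (g x) (h x) ≤ p.2}) :=
  nhds_basis_uniformity' (Metric.uniformity_basis_dist_le.compactConvergenceUniformity)

lemma mem_closure_cc {S : Set C(G, X)} {g : C(G, X)} :
    g ∈ closure S ↔ ∀ K : Set G, IsCompact K → ∀ ε : ℝ, 0 < ε →
      ∃ h ∈ S, ∀ x ∈ K, dist (g x) (h x) ≤ ε := by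
  rw [mem_closure_iff_nhds_basis (cc_nhds_basis g)]
  constructor
  · intro H K hK ε hε
    obtain ⟨h, hS, hh⟩ := H (K, ε) ⟨hK, hε⟩
    exact ⟨h, hS, hh⟩
  · intro H p hp
    obtain ⟨h, hS, hh⟩ := H p.1 hp.1 p.2 hp.2
    exact ⟨h, hS, hh⟩

lemma exists_transl_inv (f : G → X) (huc : UniformContinuous f) {ε : ℝ} (hε : 0 < ε) :
    ∃ V ∈ nhds (0 : G), ∀ a b : G, b - a ∈ V → dist (f a) (f b) ≤ ε := by
  have hU : {p : X × X | dist p.1 p.2 < ε} ∈ uniformity X := Metric.dist_mem_uniformity hε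
  have h2 := huc hU
  rw [uniformity_eq_comap_nhds_zero G, Filter.mem_map, Filter.mem_comap] at h2
  obtain ⟨V, hV, hVsub⟩ := h2
  refine ⟨V, hV, fun a b hab => le_of_lt ?_⟩
  exact hVsub (show ((a, b) : G × G) ∈ _ from hab)

lemma isCompact_orbit [LocallyCompactSpace G] (f : G → X) (hf : Continuous f)
    (huc : UniformContinuous f) (hrc : IsCompact (closure (Set.range f))) :
    IsCompact (closure {g : C(G, X) | ∃ s : G, g = translateMap s ⟨f, hf⟩}) := by
  set S : Set C(G, X) := {g | ∃ s : G, g = translateMap s ⟨f, hf⟩}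
  have hclemb : IsClosedEmbedding
      (UniformOnFun.ofFun {K : Set G | IsCompact K} ∘ (fun h : C(G, X) => (h : G → X))) := by
    refine ⟨ContinuousMap.isUniformEmbedding_toUniformOnFunIsCompact.isEmbedding, ?_⟩
    have : Set.range (UniformOnFun.ofFun {K : Set G | IsCompact K} ∘
        (fun h : C(G, X) => (h : G → X))) =
        {f : UniformOnFun G X {K : Set G | IsCompact K} | Continuous (UniformOnFun.toFun _ f)} :=
      ContinuousMap.range_toUniformOnFunIsCompact
    rw [this]
    exact UniformOnFun.isClosed_setOf_continuous
      CompactlyCoherentSpace.isCoherentWith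
  refine ArzelaAscoli.isCompact_closure_of_isClosedEmbedding (fun K hK => hK) hclemb ?_ ?_
  · intro K hK
    apply Equicontinuous.equicontinuousOn
    apply UniformEquicontinuous.equicontinuous
    intro U hU
    obtain ⟨ε, hε, hball⟩ := Metric.mem_uniformity_dist.mp hU
    obtain ⟨V, hV, hVf⟩ := exists_transl_inv f huc (half_pos hε)
    have hW : {p : G × G | p.2 - p.1 ∈ V} ∈ uniformity G := by
      rw [uniformity_eq_comap_nhds_zero G]
      exact Filter.preimage_mem_comap hV
    filter_upwards [hW] with p hp
    rintro ⟨h, s, rfl⟩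
    have : (p.2 + s) - (p.1 + s) ∈ V := by simpa using hp
    have hd := hVf _ _ this
    exact hball (lt_of_le_of_lt hd (half_lt_self hε))
  · intro K hK x hx
    refine ⟨closure (Set.range f), hrc, ?_⟩
    rintro h ⟨s, rfl⟩
    exact subset_closure ⟨x + s, rfl⟩

/-- Quantitative minimality: any member of the orbit closure of a recurrent `f`
has translates approximating `f` on any compact set. -/
lemma minimality_aux (f : G → X) (hf : Continuous f)
    (hrec2 : ∀ ε > (0 : ℝ), ∀ K : Set G, IsCompact K → RelDenseG (EsetG f ε K))
    {h : C(G, X)} (hh : h ∈ closure {g : C(G, X) | ∃ s : G, g = translateMap s ⟨f, hf⟩})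
    (K : Set G) (hK : IsCompact K) {ε : ℝ} (hε : 0 < ε) :
    ∃ τ : G, ∀ t ∈ K, dist (h (t + τ)) (f t) ≤ ε := by
  obtain ⟨L, hL, hEL⟩ := hrec2 (ε / 3) (by positivity) K hK
  set C : Set G := K + (-L) with hC
  have hCc : IsCompact C := hK.add hL.neg
  obtain ⟨h', ⟨s, rfl⟩, hs⟩ := mem_closure_cc.mp hh C hCc (ε / 3) (by positivity)
  have hsmem : s ∈ EsetG f (ε / 3) K + L := by rw [hEL]; exact Set.mem_univ s
  obtain ⟨e, he, l, hl, hels⟩ := Set.mem_add.mp hsmem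
  refine ⟨-l, fun t ht => ?_⟩
  have h1 : t + -l ∈ C := Set.add_mem_add ht (Set.neg_mem_neg.mpr hl)
  have h2 := hs _ h1
  have h3 : t + -l + s = t + e := by rw [← hels]; abel
  have h4 : dist (f (t + e)) (f t) ≤ ε / 3 := by
    rw [dist_eq_norm]; exact he t ht
  have h2' : dist (h (t + -l)) (f (t + e)) ≤ ε / 3 := by
    have : (translateMap s (⟨f, hf⟩ : C(G, X))) (t + -l) = f (t + e) := by
      show f (t + -l + s) = f (t + e)
      rw [h3]
    rw [← this]
    exact h2
  calc dist (h (t + -l)) (f t)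
      ≤ dist (h (t + -l)) (f (t + e)) + dist (f (t + e)) (f t) := dist_triangle _ _ _
    _ ≤ ε / 3 + ε / 3 := add_le_add h2' h4
    _ ≤ ε := by linarith

end Aux

/-- If `f` is recurrent, uniformly continuous, with relatively compact range, then every
member of its orbit is recurrent, uniformly continuous, with relatively compact range. -/
theorem orbit_of_recurrent_urc {G X : Type*} [AddCommGroup G] [UniformSpace G]
    [IsUniformAddGroup G] [LocallyCompactSpace G]
    [NormedAddCommGroup X] [NormedSpace ℝ X] [CompleteSpace X]
    (f : G → X) (hrec : RecurrentG f) (huc : UniformContinuous f)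
    (hrc : IsCompact (closure (Set.range f))) :
    ∀ g ∈ orbitOf (⟨f, hrec.1⟩ : C(G, X)),
      RecurrentG (g : G → X) ∧ UniformContinuous (g : G → X) ∧
        IsCompact (closure (Set.range (g : G → X))) := by
  classical
  intro g hg
  set S : Set C(G, X) := {h | ∃ s : G, h = translateMap s (⟨f, hrec.1⟩ : C(G, X))} with hS
  have hgY : g ∈ closure S := hg
  -- approximation of g by translates of f on compacts
  have happrox : ∀ K : Set G, IsCompact K → ∀ ε : ℝ, 0 < ε →
      ∃ s : G, ∀ t ∈ K, dist (g t) (f (t + s)) ≤ ε := by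
    intro K hK ε hε
    obtain ⟨h', ⟨s, rfl⟩, hs⟩ := mem_closure_cc.mp hgY K hK ε hε
    exact ⟨s, fun t ht => hs t ht⟩
  -- uniform continuity
  have hucg : UniformContinuous (g : G → X) := by
    rw [UniformContinuous, Metric.uniformity_basis_dist_le.tendsto_right_iff]
    intro ε hε
    obtain ⟨V, hV, hVf⟩ := exists_transl_inv f huc (show (0:ℝ) < ε / 3 by positivity)
    have hW : {p : G × G | p.2 - p.1 ∈ V} ∈ uniformity G := by
      rw [uniformity_eq_comap_nhds_zero G]
      exact Filter.preimage_mem_comap hV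
    filter_upwards [hW] with p hp
    have hcpt : IsCompact ({p.1, p.2} : Set G) :=
      ((Set.finite_singleton p.2).insert p.1).isCompact
    obtain ⟨s, hs⟩ := happrox _ hcpt (ε / 3) (by positivity)
    have h1 := hs p.1 (Set.mem_insert _ _)
    have h2 := hs p.2 (Set.mem_insert_of_mem _ rfl)
    have h3 : dist (f (p.1 + s)) (f (p.2 + s)) ≤ ε / 3 := hVf _ _ (by simpa using hp)
    calc dist (g p.1) (g p.2)
        ≤ dist (g p.1) (f (p.1 + s)) + dist (f (p.1 + s)) (f (p.2 + s))
            + dist (f (p.2 + s)) (g p.2) := dist_triangle4 _ _ _ _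
      _ ≤ ε / 3 + ε / 3 + ε / 3 := by
          have h2' : dist (f (p.2 + s)) (g p.2) ≤ ε / 3 := by rw [dist_comm]; exact h2
          exact add_le_add (add_le_add h1 h3) h2'
      _ ≤ ε := by linarith
  -- relatively compact range
  have hsub : closure (Set.range (g : G → X)) ⊆ closure (Set.range f) := by
    apply closure_minimal ?_ isClosed_closure
    rintro _ ⟨t, rfl⟩
    rw [Metric.mem_closure_iff]
    intro ε hε
    obtain ⟨s, hs⟩ := happrox {t} isCompact_singleton (ε / 2) (half_pos hε)
    exact ⟨f (t + s), ⟨t + s, rfl⟩, lt_of_le_of_lt (hs t rfl) (half_lt_self hε)⟩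
  have hrcg : IsCompact (closure (Set.range (g : G → X))) :=
    hrc.of_isClosed_subset isClosed_closure hsub
  refine ⟨⟨g.continuous, ?_⟩, hucg, hrcg⟩
  -- recurrence
  intro ε hε K hK
  have hYcomp : IsCompact (closure S) := isCompact_orbit f hrec.1 huc hrc
  have hYinv : ∀ σ : G, ∀ h ∈ closure S, translateMap σ h ∈ closure S := by
    intro σ h hh
    have hcont : Continuous (fun h : C(G, X) => translateMap σ h) :=
      ContinuousMap.continuous_precomp _
    have himg : (fun h : C(G, X) => translateMap σ h) '' S ⊆ S := by
      rintro _ ⟨_, ⟨s, rfl⟩, rfl⟩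
      refine ⟨σ + s, ?_⟩
      ext t
      show f (t + σ + s) = f (t + (σ + s))
      rw [add_assoc]
    have hmem : translateMap σ h ∈ (fun h : C(G, X) => translateMap σ h) '' closure S :=
      Set.mem_image_of_mem _ hh
    have hsub2 := image_closure_subset_closure_image (s := S) hcont
    exact closure_mono himg (hsub2 hmem)
  -- selection of approximate return times for each member of the orbit closure
  have hsel : ∀ h : C(G, X), ∃ τ : G, h ∈ closure S →
      ∀ t ∈ K, dist (h (t + τ)) (g t) ≤ ε / 4 := by
    intro h
    by_cases hh : h ∈ closure S
    · obtain ⟨s, hs⟩ := happrox K hK (ε / 8) (by positivity)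
      have hKs : IsCompact ((fun t => t + s) '' K) := hK.image (by continuity)
      obtain ⟨τ', hτ'⟩ := minimality_aux f hrec.1 hrec.2 hh _ hKs
        (show (0:ℝ) < ε / 8 by positivity)
      refine ⟨s + τ', fun _ t ht => ?_⟩
      have h1 := hτ' (t + s) ⟨t, ht, rfl⟩
      have h2 := hs t ht
      have heq : t + (s + τ') = t + s + τ' := by rw [add_assoc]
      calc dist (h (t + (s + τ'))) (g t)
          ≤ dist (h (t + (s + τ'))) (f (t + s)) + dist (f (t + s)) (g t) := dist_triangle _ _ _
        _ ≤ ε / 8 + ε / 8 := by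
            refine add_le_add ?_ (by rw [dist_comm]; exact h2)
            rw [heq]; exact h1
        _ ≤ ε / 4 := by linarith
    · exact ⟨0, fun c => absurd c hh⟩
  choose τfun hτfun using hsel
  set U : C(G, X) → Set C(G, X) := fun h =>
    {h' | ∀ r ∈ (fun t => t + τfun h) '' K, dist (h r) (h' r) ≤ ε / 4} with hUdef
  have hU : ∀ h ∈ closure S, U h ∈ nhds h := by
    intro h _
    exact (cc_nhds_basis h).mem_of_mem (i := ((fun t => t + τfun h) '' K, ε / 4))
      ⟨hK.image (by continuity), by positivity⟩
  obtain ⟨T, hTS, hTcover⟩ := hYcomp.elim_nhds_subcover U hU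
  refine ⟨(↑(T.image (fun h => -τfun h)) : Set G),
    (T.image (fun h => -τfun h)).finite_toSet.isCompact, ?_⟩
  rw [Set.eq_univ_iff_forall]
  intro σ
  have hσ : translateMap σ g ∈ closure S := hYinv σ g hgY
  obtain ⟨h, hhT, hhU⟩ := Set.mem_iUnion₂.mp (hTcover hσ)
  have hhY : h ∈ closure S := hTS h hhT
  have hper : τfun h + σ ∈ EsetG (g : G → X) ε K := by
    intro t ht
    have h1 := hτfun h hhY t ht
    have h2 := hhU (t + τfun h) ⟨t, ht, rfl⟩
    have h2' : dist (h (t + τfun h)) (g (t + τfun h + σ)) ≤ ε / 4 := h2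
    have heq : t + (τfun h + σ) = t + τfun h + σ := by rw [add_assoc]
    have : dist (g (t + (τfun h + σ))) (g t) ≤ ε := by
      rw [heq]
      calc dist (g (t + τfun h + σ)) (g t)
          ≤ dist (g (t + τfun h + σ)) (h (t + τfun h)) + dist (h (t + τfun h)) (g t) :=
            dist_triangle _ _ _
        _ ≤ ε / 4 + ε / 4 := add_le_add (by rw [dist_comm]; exact h2') h1
        _ ≤ ε := by linarith
    rw [← dist_eq_norm]
    exact this
  refine Set.mem_add.mpr ⟨τfun h + σ, hper, -τfun h, ?_, by abel⟩
  exact Finset.mem_coe.mpr (Finset.mem_image_of_mem _ hhT)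
end

section
/- Let X be a Banach space and let f, g : ℝ → X be uniformly continuous with relatively compact range. Assume f is (Bochner) almost automorphic and g is recurrent. Then the pair (f, g) is recurrent, i.e. for every ε > 0 and every compact K ⊆ ℝ the set {τ ∈ ℝ : ‖f(t + τ) − f(t)‖ ≤ ε and ‖g(t + τ) − g(t)‖ ≤ ε for all t ∈ K} is relatively dense. -/
open Filter Topology

/-- `E(f, ε, K)`: the set of `ε`-`K`-periods of `f`. -/
def Eset {X : Type*} [NormedAddCommGroup X] (f : ℝ → X) (ε : ℝ) (K : Set ℝ) : Set ℝ :=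
  {τ | ∀ t ∈ K, ‖f (t + τ) - f t‖ ≤ ε}

/-- A set `E ⊆ ℝ` is relatively dense if for some `L ≥ 0` it meets every
interval `[a, a + L]`. -/
def RelDense (E : Set ℝ) : Prop :=
  ∃ L ≥ (0 : ℝ), ∀ a : ℝ, (E ∩ Set.Icc a (a + L)).Nonempty

/-- A continuous `f : ℝ → X` is recurrent if all its sets of `ε`-`K`-periods are
relatively dense. -/
def Recurrent {X : Type*} [NormedAddCommGroup X] (f : ℝ → X) : Prop :=
  Continuous f ∧ ∀ ε > (0 : ℝ), ∀ K : Set ℝ, IsCompact K → RelDense (Eset f ε K)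

/-- `f : ℝ → X` is (Bochner) almost automorphic. -/
def AlmostAutomorphic {X : Type*} [NormedAddCommGroup X] (f : ℝ → X) : Prop :=
  ∀ s : ℕ → ℝ, ∃ σ : ℕ → ℕ, StrictMono σ ∧ ∃ h : ℝ → X,
    (∀ t : ℝ, Tendsto (fun n => f (t + s (σ n))) atTop (nhds (h t))) ∧
    (∀ t : ℝ, Tendsto (fun n => h (t - s (σ n))) atTop (nhds (f t)))

open Set Metric

attribute [local instance] Ultrafilter.addSemigroup Ultrafilter.add

section UlimLayer
variable {E : Type*} [NormedAddCommGroup E]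

noncomputable def ulim (p : Ultrafilter ℝ) (ψ : ℝ → E) : E :=
  @lim E _ ⟨ψ 0⟩ (↑(p.map ψ))

lemma ulim_spec {C : Set E} (hC : IsCompact C) {ψ : ℝ → E} (hr : ∀ s, ψ s ∈ C)
    (p : Ultrafilter ℝ) : Tendsto ψ ↑p (𝓝 (ulim p ψ)) := by
  have h1 : (↑(p.map ψ) : Filter E) ≤ 𝓟 C := by
    rw [Ultrafilter.coe_map, le_principal_iff]
    exact mem_map.mpr (Filter.univ_mem' hr)
  obtain ⟨x, -, hx⟩ := hC.ultrafilter_le_nhds (p.map ψ) h1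
  have h2 := le_nhds_lim ⟨x, hx⟩
  unfold ulim
  rw [Tendsto, ← Ultrafilter.coe_map]
  exact h2

lemma ulim_eq {p : Ultrafilter ℝ} {ψ : ℝ → E} {x : E} (h : Tendsto ψ ↑p (𝓝 x)) :
    ulim p ψ = x := by
  unfold ulim
  exact lim_eq (by rwa [Ultrafilter.coe_map])

lemma ulim_mem {C : Set E} (hC : IsCompact C) {ψ : ℝ → E} (hr : ∀ s, ψ s ∈ C)
    (p : Ultrafilter ℝ) : ulim p ψ ∈ C :=
  hC.isClosed.mem_of_tendsto (ulim_spec hC hr p) (Filter.Eventually.of_forall hr)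

lemma tendsto_mem_ultra {p : Ultrafilter ℝ} {ψ : ℝ → E} {x : E}
    (h : Tendsto ψ ↑p (𝓝 x)) {ε : ℝ} (hε : 0 < ε) : {s | dist (ψ s) x < ε} ∈ p := by
  have := Metric.tendsto_nhds.mp h ε hε
  rwa [Filter.eventually_iff, Ultrafilter.mem_coe] at this

end UlimLayer

-- star membership
lemma mem_add_ultra {p q : Ultrafilter ℝ} {A : Set ℝ} :
    A ∈ p + q ↔ {a | {b | a + b ∈ A} ∈ q} ∈ p := by
  have := Ultrafilter.eventually_add p q (· ∈ A)
  simpa [Filter.eventually_iff] using this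

section SmulLayer
variable {E : Type*} [NormedAddCommGroup E]

noncomputable def usmul (p : Ultrafilter ℝ) (w : ℝ → E) : ℝ → E :=
  fun t => ulim p fun s => w (t + s)

lemma usmul_spec {C : Set E} (hC : IsCompact C) {w : ℝ → E} (hr : ∀ s, w s ∈ C)
    (p : Ultrafilter ℝ) (t : ℝ) :
    Tendsto (fun s => w (t + s)) ↑p (𝓝 (usmul p w t)) :=
  ulim_spec hC (fun s => hr (t + s)) p

lemma usmul_mem {C : Set E} (hC : IsCompact C) {w : ℝ → E} (hr : ∀ s, w s ∈ C)
    (p : Ultrafilter ℝ) (t : ℝ) : usmul p w t ∈ C :=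
  ulim_mem hC (fun s => hr (t + s)) p

lemma usmul_add {C : Set E} (hC : IsCompact C) {w : ℝ → E} (hr : ∀ s, w s ∈ C)
    (p q : Ultrafilter ℝ) : usmul (p + q) w = usmul p (usmul q w) := by
  funext t
  apply ulim_eq
  rw [Metric.tendsto_nhds]
  intro ε hε
  rw [Filter.eventually_iff, Ultrafilter.mem_coe, mem_add_ultra]
  have h1 : {a | dist (usmul q w (t + a)) (usmul p (usmul q w) t) < ε / 2} ∈ p :=
    tendsto_mem_ultra (usmul_spec hC (usmul_mem hC hr q) p t) (by linarith)
  refine Filter.mem_of_superset h1 ?_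
  intro a ha
  have h2 : {b | dist (w ((t + a) + b)) (usmul q w (t + a)) < ε / 2} ∈ q :=
    tendsto_mem_ultra (usmul_spec hC hr q (t + a)) (by linarith)
  refine Filter.mem_of_superset h2 ?_
  intro b hb
  have : dist (w (t + (a + b))) (usmul p (usmul q w) t) < ε := by
    rw [← add_assoc]
    calc dist (w (t + a + b)) (usmul p (usmul q w) t)
        ≤ dist (w (t + a + b)) (usmul q w (t + a)) + dist (usmul q w (t + a)) (usmul p (usmul q w) t) := dist_triangle _ _ _
      _ < ε / 2 + ε / 2 := add_lt_add hb ha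
      _ = ε := by ring
  exact this

lemma usmul_pair {X : Type*} [NormedAddCommGroup X] {Cf Cg : Set X}
    (hCf : IsCompact Cf) (hCg : IsCompact Cg) {f g : ℝ → X}
    (hf : ∀ s, f s ∈ Cf) (hg : ∀ s, g s ∈ Cg) (p : Ultrafilter ℝ) :
    usmul p (fun t => ((f t, g t) : X × X)) = fun t => (usmul p f t, usmul p g t) := by
  funext t
  exact ulim_eq ((usmul_spec hCf hf p t).prodMk_nhds (usmul_spec hCg hg p t))

end SmulLayer

section OrbLayer
variable {E : Type*} [NormedAddCommGroup E]

/-- `w` is in the pointwise closure of the translates of `u`. -/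
def approxOrb (u w : ℝ → E) : Prop :=
  ∀ (F : Finset ℝ) (ε : ℝ), 0 < ε → ∃ s : ℝ, ∀ t ∈ F, dist (w t) (u (t + s)) < ε

lemma approxOrb_self (u : ℝ → E) : approxOrb u u := by
  intro F ε hε
  exact ⟨0, fun t _ => by simp [hε]⟩

lemma approxOrb.range_mem {u w : ℝ → E} (h : approxOrb u w) (t : ℝ) :
    w t ∈ closure (Set.range u) := by
  rw [Metric.mem_closure_iff]
  intro ε hε
  obtain ⟨s, hs⟩ := h {t} ε hε
  exact ⟨u (t + s), ⟨t + s, rfl⟩, hs t (Finset.mem_singleton_self t)⟩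

lemma approxOrb.trans_translate {u w : ℝ → E} (h : approxOrb u w) (c : ℝ) :
    approxOrb u (fun t => w (t + c)) := by
  intro F ε hε
  obtain ⟨s, hs⟩ := h (F.image (· + c)) ε hε
  refine ⟨c + s, fun t ht => ?_⟩
  have := hs (t + c) (Finset.mem_image_of_mem _ ht)
  rwa [add_assoc] at this

lemma approxOrb.uc {u : ℝ → E} (hu : UniformContinuous u) {ε : ℝ} (hε : 0 < ε) :
    ∃ δ > 0, ∀ w : ℝ → E, approxOrb u w → ∀ t t' : ℝ, dist t t' < δ →
      dist (w t) (w t') ≤ ε := by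
  obtain ⟨δ, hδ, hmod⟩ := Metric.uniformContinuous_iff.mp hu (ε / 3) (by linarith)
  refine ⟨δ, hδ, fun w hw t t' htt => ?_⟩
  obtain ⟨s, hs⟩ := hw {t, t'} (ε / 3) (by linarith)
  have h1 := hs t (by simp)
  have h2 := hs t' (by simp)
  have h3 : dist (u (t + s)) (u (t' + s)) < ε / 3 := by
    apply hmod
    rwa [dist_add_right]
  calc dist (w t) (w t') ≤ dist (w t) (u (t + s)) + dist (u (t + s)) (u (t' + s))
        + dist (u (t' + s)) (w t') := dist_triangle4 _ _ _ _
    _ ≤ ε / 3 + ε / 3 + ε / 3 := by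
        rw [dist_comm (u (t' + s))]
        exact add_le_add (add_le_add h1.le h3.le) h2.le
    _ = ε := by ring

lemma approxOrb.usmul_mem {u w : ℝ → E} (hC : IsCompact (closure (Set.range u)))
    (h : approxOrb u w) (p : Ultrafilter ℝ) : approxOrb u (usmul p w) := by
  intro F ε hε
  have hrw : ∀ s, w s ∈ closure (Set.range u) := h.range_mem
  have hA : ∀ t ∈ F, {σ : ℝ | dist (w (t + σ)) (usmul p w t) < ε / 2} ∈ p := fun t _ =>
    tendsto_mem_ultra (usmul_spec hC hrw p t) (by linarith)
  have hAall : {σ : ℝ | ∀ t ∈ F, dist (w (t + σ)) (usmul p w t) < ε / 2} ∈ p := by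
    have := (Filter.biInter_finset_mem F).mpr hA
    refine Filter.mem_of_superset this ?_
    intro σ hσ
    simp only [Set.mem_iInter] at hσ
    exact hσ
  obtain ⟨σ, hσ⟩ := p.nonempty_of_mem hAall
  obtain ⟨s, hs⟩ := h (F.image (· + σ)) (ε / 2) (by linarith)
  refine ⟨σ + s, fun t ht => ?_⟩
  have h1 := hσ t ht
  have h2 := hs (t + σ) (Finset.mem_image_of_mem _ ht)
  calc dist (usmul p w t) (u (t + (σ + s)))
      ≤ dist (usmul p w t) (w (t + σ)) + dist (w (t + σ)) (u (t + (σ + s))) := dist_triangle _ _ _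
    _ < ε / 2 + ε / 2 := by
        rw [← add_assoc]
        exact add_lt_add (by rw [dist_comm]; exact h1) h2
    _ = ε := by ring

end OrbLayer

section IdealLayer

/-- nonempty closed left ideal of the ultrafilter semigroup -/
def IsLI (L : Set (Ultrafilter ℝ)) : Prop :=
  L.Nonempty ∧ IsClosed L ∧ ∀ p ∈ L, ∀ q : Ultrafilter ℝ, q + p ∈ L

lemma exists_minimal_LI : ∃ L, IsLI L ∧ ∀ L', IsLI L' → L' ⊆ L → L' = L := by
  obtain ⟨m, -, hm⟩ := zorn_superset_nonempty {L : Set (Ultrafilter ℝ) | IsLI L}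
    (fun c hc hchain hcne => by
      refine ⟨⋂₀ c, ?_, fun s hs => Set.sInter_subset_of_mem hs⟩
      have hne : (⋂₀ c).Nonempty := by
        haveI : Nonempty c := hcne.coe_sort
        exact IsCompact.nonempty_sInter_of_directed_nonempty_isCompact_isClosed
          (IsChain.directedOn hchain.symm)
          (fun L hL => (hc hL).1)
          (fun L hL => (hc hL).2.1.isCompact)
          (fun L hL => (hc hL).2.1)
      refine ⟨hne, isClosed_sInter (fun L hL => (hc hL).2.1), ?_⟩
      intro p hp q
      rw [Set.mem_sInter] at hp ⊢
      exact fun L hL => (hc hL).2.2 p (hp L hL) q)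
    Set.univ ⟨⟨pure 0, trivial⟩, isClosed_univ, fun _ _ _ => trivial⟩
  exact ⟨m, hm.1, fun L' hL' hsub => Set.Subset.antisymm hsub (hm.2 hL' hsub)⟩

end IdealLayer

section Ideal2

lemma LI_cyclic {L : Set (Ultrafilter ℝ)} (hL : IsLI L)
    (hmin : ∀ L', IsLI L' → L' ⊆ L → L' = L) {r : Ultrafilter ℝ} (hr : r ∈ L)
    (v : Ultrafilter ℝ) (hv : v ∈ L) : ∃ q : Ultrafilter ℝ, q + r = v := by
  have hT : IsLI (Set.range (· + r)) := by
    refine ⟨⟨pure 0 + r, ⟨pure 0, rfl⟩⟩, ?_, ?_⟩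
    · exact (isCompact_range (Ultrafilter.continuous_add_left r)).isClosed
    · rintro p ⟨q, rfl⟩ q'
      exact ⟨q' + q, add_assoc q' q r⟩
  have hsub : Set.range (· + r) ⊆ L := by
    rintro p ⟨q, rfl⟩
    exact hL.2.2 r hr q
  have := hmin _ hT hsub
  rw [← this] at hv
  exact hv

lemma isClosed_fixer {E : Type*} [NormedAddCommGroup E] {C : Set E} (hC : IsCompact C)
    {w : ℝ → E} (hr : ∀ s, w s ∈ C) (v : ℝ → E) :
    IsClosed {p : Ultrafilter ℝ | usmul p w = v} := by
  rw [← isOpen_compl_iff]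
  rw [isOpen_iff_forall_mem_open]
  intro p₀ hp₀
  have : ∃ t₀, usmul p₀ w t₀ ≠ v t₀ := by
    by_contra hcon
    push_neg at hcon
    exact hp₀ (funext hcon)
  obtain ⟨t₀, ht₀⟩ := this
  set d := dist (usmul p₀ w t₀) (v t₀) with hd
  have hdpos : 0 < d := dist_pos.mpr ht₀
  set A : Set ℝ := {s | dist (w (t₀ + s)) (usmul p₀ w t₀) < d / 3} with hA
  have hAp : A ∈ p₀ := tendsto_mem_ultra (usmul_spec hC hr p₀ t₀) (by linarith)
  refine ⟨{q : Ultrafilter ℝ | A ∈ q}, ?_, ultrafilter_isOpen_basic A, hAp⟩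
  intro q hq
  simp only [Set.mem_compl_iff, Set.mem_setOf_eq]
  intro hqeq
  have hB : {s : ℝ | dist (w (t₀ + s)) (usmul q w t₀) < d / 3} ∈ q :=
    tendsto_mem_ultra (usmul_spec hC hr q t₀) (by linarith)
  obtain ⟨s, hsA, hsB⟩ := q.nonempty_of_mem (q.inter_mem hq hB)
  have : dist (usmul q w t₀) (usmul p₀ w t₀) < 2 * d / 3 := by
    calc dist (usmul q w t₀) (usmul p₀ w t₀)
        ≤ dist (usmul q w t₀) (w (t₀ + s)) + dist (w (t₀ + s)) (usmul p₀ w t₀) := dist_triangle _ _ _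
      _ < d / 3 + d / 3 := add_lt_add (by rw [dist_comm]; exact hsB) hsA
      _ = 2 * d / 3 := by ring
  rw [hqeq] at this
  rw [dist_comm] at this
  have : d < 2 * d / 3 := by rwa [hd]
  linarith

lemma exists_idem_fixing_in {E : Type*} [NormedAddCommGroup E] {C : Set E} (hC : IsCompact C)
    {g : ℝ → E} (hr : ∀ s, g s ∈ C)
    {L : Set (Ultrafilter ℝ)} (hL : IsLI L)
    {r₀ : Ultrafilter ℝ} (hr₀L : r₀ ∈ L) (hr₀ : usmul r₀ g = g) :
    ∃ v : Ultrafilter ℝ, v ∈ L ∧ v + v = v ∧ usmul v g = g := by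
  have hcont : ∀ r : Ultrafilter ℝ, Continuous (· + r) := Ultrafilter.continuous_add_left
  have key := exists_idempotent_in_compact_add_subsemigroup hcont
    (L ∩ {p | usmul p g = g}) ⟨r₀, hr₀L, hr₀⟩
    ((hL.2.1.inter (isClosed_fixer hC hr g)).isCompact)
    (by
      rintro x ⟨hxL, hxfix⟩ y ⟨hyL, hyfix⟩
      refine ⟨hL.2.2 y hyL x, ?_⟩
      simp only [Set.mem_setOf_eq] at *
      rw [usmul_add hC hr, hyfix, hxfix])
  obtain ⟨v, ⟨hvL, hvfix⟩, hidem⟩ := key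
  exact ⟨v, hvL, hidem, hvfix⟩

end Ideal2

section GLayer
variable {X : Type*} [NormedAddCommGroup X]

lemma recur_approx {g : ℝ → X} (hgu : UniformContinuous g) (hgrec : Recurrent g)
    {w : ℝ → X} (hw : approxOrb g w) (F : Finset ℝ) {ε : ℝ} (hε : 0 < ε) :
    ∃ τ : ℝ, ∀ t ∈ F, dist (w (t + τ)) (g t) < ε := by
  -- bound for F
  obtain ⟨N₀, hN₀⟩ := (F.image abs).exists_le
  set N : ℝ := max N₀ 0 with hNdef
  have hN0 : 0 ≤ N := le_max_right _ _
  have hNb : ∀ t ∈ F, |t| ≤ N := fun t ht =>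
    le_trans (hN₀ _ (Finset.mem_image_of_mem abs ht)) (le_max_left _ _)
  -- relative density of periods
  obtain ⟨L, hL0, hLdense⟩ := hgrec.2 (ε / 6) (by linarith) (Set.Icc (-N) N) isCompact_Icc
  -- moduli of continuity
  obtain ⟨δ₁, hδ₁pos, hδ₁⟩ := Metric.uniformContinuous_iff.mp hgu (ε / 6) (by linarith)
  obtain ⟨δ₂, hδ₂pos, hδ₂⟩ := approxOrb.uc hgu (ε := ε / 6) (by linarith)
  set δ : ℝ := min δ₁ δ₂ with hδdef
  have hδpos : 0 < δ := lt_min hδ₁pos hδ₂pos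
  -- finite net of the big interval
  obtain ⟨Fnet, hFnet⟩ := (isCompact_Icc (a := -(N + L)) (b := N + L)).elim_finite_subcover
    (fun x : ℝ => Metric.ball x δ) (fun _ => isOpen_ball)
    (fun u _ => Set.mem_iUnion.2 ⟨u, Metric.mem_ball_self hδpos⟩)
  -- approximate w by a translate of g on the net
  obtain ⟨σ, hσ⟩ := hw Fnet (ε / 6) (by linarith)
  -- pick a period in [σ, σ + L]
  obtain ⟨P, hPE, hPIcc⟩ := hLdense σ
  refine ⟨P - σ, fun t ht => ?_⟩
  have htN := hNb t ht
  have hτ0 : 0 ≤ P - σ := by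
    have := hPIcc.1; linarith
  have hτL : P - σ ≤ L := by
    have := hPIcc.2; linarith
  have huIcc : t + (P - σ) ∈ Set.Icc (-(N + L)) (N + L) := by
    rw [Set.mem_Icc]
    have h1 := abs_le.mp htN
    constructor <;> linarith [h1.1, h1.2]
  obtain ⟨x, hxF, hxball⟩ : ∃ x ∈ Fnet, t + (P - σ) ∈ Metric.ball x δ := by
    have := hFnet huIcc
    simpa using this
  have hdist_ux : dist (t + (P - σ)) x < δ := by rwa [Metric.mem_ball] at hxball
  -- four bounds
  have b1 : dist (w (t + (P - σ))) (w x) ≤ ε / 6 :=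
    hδ₂ w hw _ _ (lt_of_lt_of_le hdist_ux (min_le_right _ _))
  have b2 : dist (w x) (g (x + σ)) < ε / 6 := hσ x hxF
  have b3 : dist (g (x + σ)) (g (t + (P - σ) + σ)) < ε / 6 := by
    apply hδ₁
    rw [dist_add_right, dist_comm]
    exact lt_of_lt_of_le hdist_ux (min_le_left _ _)
  have b4 : dist (g (t + (P - σ) + σ)) (g t) ≤ ε / 6 := by
    have : t + (P - σ) + σ = t + P := by ring
    rw [this, dist_eq_norm]
    exact hPE t (by rw [Set.mem_Icc]; exact abs_le.mp htN)
  have h5 : dist (w (t + (P - σ))) (g t)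
      ≤ dist (w (t + (P - σ))) (w x) + dist (w x) (g (x + σ))
        + dist (g (x + σ)) (g (t + (P - σ) + σ)) + dist (g (t + (P - σ) + σ)) (g t) := by
    calc dist (w (t + (P - σ))) (g t)
        ≤ dist (w (t + (P - σ))) (g (t + (P - σ) + σ)) + dist (g (t + (P - σ) + σ)) (g t) :=
          dist_triangle _ _ _
      _ ≤ (dist (w (t + (P - σ))) (w x) + dist (w x) (g (x + σ))
          + dist (g (x + σ)) (g (t + (P - σ) + σ))) + dist (g (t + (P - σ) + σ)) (g t) := by
          gcongr
          exact dist_triangle4 _ _ _ _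
  linarith [b1, b2, b3, b4, h5]

lemma exists_ultra_inverse {g : ℝ → X} (hgu : UniformContinuous g) (hgrec : Recurrent g)
    {w : ℝ → X} (hw : approxOrb g w) : ∃ q : Ultrafilter ℝ, usmul q w = g := by
  set S : Finset ℝ × {e : ℝ // 0 < e} → Set ℝ :=
    fun i => {τ | ∀ t ∈ i.1, dist (w (t + τ)) (g t) < i.2.1} with hS
  have hdir : Directed (· ≥ ·) (fun i => (𝓟 (S i) : Filter ℝ)) := by
    intro i j
    refine ⟨⟨i.1 ∪ j.1, ⟨min i.2.1 j.2.1, lt_min i.2.2 j.2.2⟩⟩, ?_, ?_⟩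
    · show 𝓟 (S _) ≤ 𝓟 (S i)
      refine principal_mono.mpr fun τ hτ => fun t ht => lt_of_lt_of_le (hτ t ?_) (min_le_left _ _)
      exact Finset.mem_union_left _ ht
    · show 𝓟 (S _) ≤ 𝓟 (S j)
      refine principal_mono.mpr fun τ hτ => fun t ht => lt_of_lt_of_le (hτ t ?_) (min_le_right _ _)
      exact Finset.mem_union_right _ ht
  haveI hne : ∀ i, Filter.NeBot (𝓟 (S i)) := by
    intro i
    rw [principal_neBot_iff]
    obtain ⟨τ, hτ⟩ := recur_approx hgu hgrec hw i.1 i.2.2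
    exact ⟨τ, hτ⟩
  haveI : Filter.NeBot (⨅ i, 𝓟 (S i)) := Filter.iInf_neBot_of_directed hdir hne
  obtain ⟨q, hq⟩ := Ultrafilter.exists_le (⨅ i, 𝓟 (S i))
  have hmem : ∀ i, S i ∈ q := fun i =>
    le_principal_iff.mp (hq.trans (iInf_le _ i))
  refine ⟨q, funext fun t => ?_⟩
  apply ulim_eq
  rw [Metric.tendsto_nhds]
  intro ε hε
  rw [Filter.eventually_iff, Ultrafilter.mem_coe]
  refine Filter.mem_of_superset (hmem ⟨{t}, ⟨ε, hε⟩⟩) ?_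
  intro τ hτ
  exact hτ t (Finset.mem_singleton_self t)

end GLayer

section AALayer
variable {X : Type*} [NormedAddCommGroup X]

def negU (p : Ultrafilter ℝ) : Ultrafilter ℝ := p.map (fun x : ℝ => -x)

lemma negU_negU (p : Ultrafilter ℝ) : negU (negU p) = p := by
  unfold negU
  rw [Ultrafilter.map_map]
  have hcomp : ((fun x : ℝ => -x) ∘ fun x : ℝ => -x) = id := funext fun x => neg_neg x
  rw [hcomp]
  exact Ultrafilter.map_id p

lemma aa_ultra {f : ℝ → X} (hfrc : IsCompact (closure (Set.range f)))
    (hfaa : AlmostAutomorphic f) (p : Ultrafilter ℝ) :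
    usmul (negU p) (usmul p f) = f := by
  have hrf : ∀ s, f s ∈ closure (Set.range f) := fun s => subset_closure ⟨s, rfl⟩
  set h : ℝ → X := usmul p f with hh
  have hrh : ∀ s, h s ∈ closure (Set.range f) := usmul_mem hfrc hrf p
  funext t₀
  by_contra hne
  set ξ := usmul (negU p) h t₀ with hξ
  set d := dist ξ (f t₀) with hd
  have hdpos : 0 < d := dist_pos.mpr hne
  have hAstar : {s : ℝ | dist (h (t₀ - s)) ξ < d / 3} ∈ p := by
    have hsp := usmul_spec hfrc hrh (negU p) t₀
    have hm := tendsto_mem_ultra hsp (show (0:ℝ) < d/3 by linarith)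
    rw [show negU p = p.map (fun x : ℝ => -x) from rfl, Ultrafilter.mem_map] at hm
    refine Filter.mem_of_superset hm ?_
    intro s hs
    simpa [sub_eq_add_neg, hξ, negU] using hs
  have hmemA : ∀ (u : ℝ) (ε : ℝ), 0 < ε → {s : ℝ | dist (f (u + s)) (h u) < ε} ∈ p :=
    fun u ε hε => tendsto_mem_ultra (usmul_spec hfrc hrf p u) hε
  have hlist : ∀ (l : List ℝ) (ε : ℝ), 0 < ε →
      {s : ℝ | ∀ u ∈ l, dist (f ((t₀ - u) + s)) (h (t₀ - u)) < ε} ∈ p := by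
    intro l ε hε
    induction l with
    | nil =>
      have : {s : ℝ | ∀ u ∈ ([] : List ℝ), dist (f ((t₀ - u) + s)) (h (t₀ - u)) < ε} = Set.univ := by
        ext s; simp
      rw [this]; exact Filter.univ_mem
    | cons a tl ih =>
      have h1 := hmemA (t₀ - a) ε hε
      have := inter_mem h1 ih
      refine Filter.mem_of_superset this ?_
      rintro s ⟨hs1, hs2⟩ u hu
      rcases List.mem_cons.mp hu with rfl | hu
      · exact hs1
      · exact hs2 u hu
  have hnext : ∀ l : List ℝ, ∃ s : ℝ, dist (h (t₀ - s)) ξ < d / 3 ∧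
      dist (f (t₀ + s)) (h t₀) < 1 / (l.length + 1) ∧
      ∀ u ∈ l, dist (f ((t₀ - u) + s)) (h (t₀ - u)) < 1 / (l.length + 1) := by
    intro l
    have hpos : (0:ℝ) < 1 / (l.length + 1) := by positivity
    have := p.nonempty_of_mem (inter_mem hAstar (inter_mem (hmemA t₀ _ hpos) (hlist l _ hpos)))
    obtain ⟨s, hs1, hs2, hs3⟩ := this
    exact ⟨s, hs1, hs2, hs3⟩
  choose next hnext1 hnext2 hnext3 using hnext
  let pref : ℕ → List ℝ := fun n => Nat.rec ([] : List ℝ) (fun _ l => l ++ [next l]) n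
  set s : ℕ → ℝ := fun n => next (pref n) with hsdef
  have hpref_succ : ∀ n, pref (n + 1) = pref n ++ [next (pref n)] := fun n => rfl
  have hpref_len : ∀ n, (pref n).length = n := by
    intro n
    induction n with
    | zero => rfl
    | succ m ih => rw [hpref_succ, List.length_append, ih]; rfl
  have hpref_mem : ∀ j n, j < n → s j ∈ pref n := by
    intro j n
    induction n with
    | zero => omega
    | succ m ih =>
      intro hj
      rw [hpref_succ]
      rcases Nat.lt_succ_iff_lt_or_eq.mp hj with hlt | rfl
      · exact List.mem_append_left _ (ih hlt)
      · exact List.mem_append_right _ (by simp [hsdef])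
  have hseq1 : ∀ n, dist (h (t₀ - s n)) ξ < d / 3 := fun n => hnext1 _
  have hbound : ∀ n : ℕ, (1 : ℝ) / ((pref n).length + 1) = 1 / (n + 1) := by
    intro n; rw [hpref_len]
  have hseq3 : ∀ j, Tendsto (fun n => f ((t₀ - s j) + s n)) atTop (𝓝 (h (t₀ - s j))) := by
    intro j
    rw [tendsto_iff_dist_tendsto_zero]
    apply tendsto_of_tendsto_of_tendsto_of_le_of_le' (g := fun _ => (0:ℝ))
      (h := fun n : ℕ => 1 / (n + 1 : ℝ))
    · exact tendsto_const_nhds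
    · exact tendsto_one_div_add_atTop_nhds_zero_nat
    · exact Filter.Eventually.of_forall fun n => dist_nonneg
    · filter_upwards [Filter.eventually_gt_atTop j] with n hn
      have := hnext3 (pref n) (s j) (hpref_mem j n hn)
      rw [hbound] at this
      exact this.le
  obtain ⟨σ, hσmono, htil, hconv1, hconv2⟩ := hfaa s
  have hagree : ∀ j, htil (t₀ - s j) = h (t₀ - s j) := by
    intro j
    exact tendsto_nhds_unique (hconv1 (t₀ - s j))
      ((hseq3 j).comp hσmono.tendsto_atTop)
  have hfinal : Tendsto (fun n => h (t₀ - s (σ n))) atTop (𝓝 (f t₀)) := by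
    have := hconv2 t₀
    convert this using 1
    funext n
    rw [hagree (σ n)]
  have hle : dist (f t₀) ξ ≤ d / 3 := by
    have hdd : Tendsto (fun n => dist (h (t₀ - s (σ n))) ξ) atTop (𝓝 (dist (f t₀) ξ)) :=
      hfinal.dist tendsto_const_nhds
    exact le_of_tendsto hdd (Filter.Eventually.of_forall fun n => (hseq1 (σ n)).le)
  rw [dist_comm] at hle
  rw [← hd] at hle
  linarith

lemma idem_fixes_aa {f : ℝ → X} (hfrc : IsCompact (closure (Set.range f)))
    (hfaa : AlmostAutomorphic f) {u : Ultrafilter ℝ} (hidem : u + u = u) :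
    usmul u f = f := by
  have hrf : ∀ s, f s ∈ closure (Set.range f) := fun s => subset_closure ⟨s, rfl⟩
  have key : usmul u (usmul (negU u) f) = f := by
    have := aa_ultra hfrc hfaa (negU u)
    rwa [negU_negU] at this
  have hry : ∀ s, usmul (negU u) f s ∈ closure (Set.range f) := usmul_mem hfrc hrf (negU u)
  calc usmul u f = usmul u (usmul u (usmul (negU u) f)) := by rw [key]
    _ = usmul (u + u) (usmul (negU u) f) := (usmul_add hfrc hry u u).symm
    _ = usmul u (usmul (negU u) f) := by rw [hidem]
    _ = f := key

end AALayer


section Main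
variable {X : Type*} [NormedAddCommGroup X]

theorem pair_almostAutomorphic_recurrent' (f g : ℝ → X)
    (hfu : UniformContinuous f) (hfrc : IsCompact (closure (Set.range f)))
    (hgu : UniformContinuous g) (hgrc : IsCompact (closure (Set.range g)))
    (hfaa : AlmostAutomorphic f) (hgrec : Recurrent g) :
    ∀ ε > (0 : ℝ), ∀ K : Set ℝ, IsCompact K →
      RelDense {τ : ℝ | ∀ t ∈ K, ‖f (t + τ) - f t‖ ≤ ε ∧ ‖g (t + τ) - g t‖ ≤ ε} := by
  intro ε hε K hK
  set z : ℝ → X × X := fun t => (f t, g t) with hzdef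
  have hrfmem : ∀ s, f s ∈ closure (Set.range f) := fun s => subset_closure ⟨s, rfl⟩
  have hrgmem : ∀ s, g s ∈ closure (Set.range g) := fun s => subset_closure ⟨s, rfl⟩
  have hrz : ∀ s, z s ∈ closure (Set.range z) := fun s => subset_closure ⟨s, rfl⟩
  have hCrz : IsCompact (closure (Set.range z)) := by
    refine (hfrc.prod hgrc).of_isClosed_subset isClosed_closure ?_
    refine closure_minimal ?_ (hfrc.prod hgrc).isClosed
    rintro x ⟨s, rfl⟩
    exact ⟨hrfmem s, hrgmem s⟩
  have hzu : UniformContinuous z := hfu.prodMk hgu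
  -- minimal left ideal and a minimal idempotent fixing both f and g
  obtain ⟨Lmin, hLmin, hmin⟩ := exists_minimal_LI
  obtain ⟨v₀, hv₀⟩ := hLmin.1
  have hw₀ : approxOrb g (usmul v₀ g) := (approxOrb_self g).usmul_mem hgrc v₀
  obtain ⟨q₀, hq₀⟩ := exists_ultra_inverse hgu hgrec hw₀
  have hr₀fix : usmul (q₀ + v₀) g = g := by
    rw [usmul_add hgrc hrgmem, hq₀]
  have hr₀L : q₀ + v₀ ∈ Lmin := hLmin.2.2 v₀ hv₀ q₀
  obtain ⟨v, hvL, hvidem, hvg⟩ := exists_idem_fixing_in hgrc hrgmem hLmin hr₀L hr₀fix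
  have hvf : usmul v f = f := idem_fixes_aa hfrc hfaa hvidem
  have hvz : usmul v z = z := by
    rw [hzdef]
    rw [usmul_pair hfrc hgrc hrfmem hrgmem v]
    funext t
    rw [hvf, hvg]
  -- reduce the goal to the distance formulation
  have hTD : {τ : ℝ | ∀ t ∈ K, ‖f (t + τ) - f t‖ ≤ ε ∧ ‖g (t + τ) - g t‖ ≤ ε}
      = {τ : ℝ | ∀ t ∈ K, dist (z (t + τ)) (z t) ≤ ε} := by
    ext τ
    simp only [Set.mem_setOf_eq]
    constructor
    · intro h t ht
      rw [Prod.dist_eq]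
      rcases h t ht with ⟨h1, h2⟩
      rw [max_le_iff]
      constructor
      · rw [dist_eq_norm]; exact h1
      · rw [dist_eq_norm]; exact h2
    · intro h t ht
      have := h t ht
      rw [Prod.dist_eq, max_le_iff] at this
      rcases this with ⟨h1, h2⟩
      rw [dist_eq_norm] at h1 h2
      exact ⟨h1, h2⟩
  rw [hTD]
  set D : Set ℝ := {τ : ℝ | ∀ t ∈ K, dist (z (t + τ)) (z t) ≤ ε} with hDdef
  by_contra hcon
  rw [RelDense] at hcon
  push_neg at hcon
  have hgaps : ∀ n : ℕ, ∃ x : ℝ, D ∩ Set.Icc x (x + 3 * n) = ∅ := fun n =>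
    hcon (3 * n) (by positivity)
  choose a ha using hgaps
  -- deep interiors of the gap intervals
  set B : ℕ → Set ℝ := fun R => ⋃ n ∈ {n : ℕ | R ≤ n}, Set.Icc (a n + R) (a n + 3 * n - R)
    with hBdef
  have hBmono : ∀ R R' : ℕ, R ≤ R' → B R' ⊆ B R := by
    intro R R' hRR x hx
    rw [hBdef, Set.mem_iUnion₂] at hx ⊢
    obtain ⟨n, hn, hxn⟩ := hx
    refine ⟨n, le_trans hRR hn, ?_⟩
    rw [Set.mem_Icc] at hxn ⊢
    have hc : (R : ℝ) ≤ (R' : ℝ) := by exact_mod_cast hRR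
    constructor <;> linarith [hxn.1, hxn.2]
  have hBne : ∀ R : ℕ, (B R).Nonempty := by
    intro R
    refine ⟨a R + R, ?_⟩
    rw [hBdef, Set.mem_iUnion₂]
    refine ⟨R, le_refl R, ?_⟩
    rw [Set.mem_Icc]
    constructor
    · exact le_refl _
    · have : (0:ℝ) ≤ (R:ℝ) := Nat.cast_nonneg R
      linarith
  have hBdir : Directed (· ≥ ·) (fun R => (𝓟 (B R) : Filter ℝ)) := by
    intro R R'
    refine ⟨max R R', ?_, ?_⟩
    · show 𝓟 (B (max R R')) ≤ 𝓟 (B R)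
      exact principal_mono.mpr (hBmono _ _ (le_max_left _ _))
    · show 𝓟 (B (max R R')) ≤ 𝓟 (B R')
      exact principal_mono.mpr (hBmono _ _ (le_max_right _ _))
  haveI : ∀ R : ℕ, Filter.NeBot (𝓟 (B R)) := fun R => principal_neBot_iff.mpr (hBne R)
  haveI : Filter.NeBot (⨅ R : ℕ, 𝓟 (B R)) := Filter.iInf_neBot_of_directed hBdir this
  obtain ⟨p, hple⟩ := Ultrafilter.exists_le (⨅ R : ℕ, 𝓟 (B R))
  have hBp : ∀ R : ℕ, B R ∈ p := fun R => le_principal_iff.mp (hple.trans (iInf_le _ R))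
  have hBkey : ∀ (R : ℕ) (r : ℝ), |r| ≤ R → ∀ x ∈ B R, x + r ∉ D := by
    intro R r hr x hx hmem
    rw [hBdef, Set.mem_iUnion₂] at hx
    obtain ⟨n, -, hxn⟩ := hx
    rw [Set.mem_Icc] at hxn
    have habs := abs_le.mp hr
    have : x + r ∈ D ∩ Set.Icc (a n) (a n + 3 * n) := by
      refine ⟨hmem, ?_⟩
      rw [Set.mem_Icc]
      constructor <;> linarith [hxn.1, hxn.2, habs.1, habs.2]
    rw [ha n] at this
    exact this
  -- the translated point and the return ultrafilter
  set w : ℝ → X × X := usmul p z with hwdef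
  have hwOrb : approxOrb z w := (approxOrb_self z).usmul_mem hCrz p
  have hwmem : ∀ s, w s ∈ closure (Set.range z) := usmul_mem hCrz hrz p
  obtain ⟨q, hq⟩ := LI_cyclic hLmin hmin (hLmin.2.2 v hvL p) v hvL
  have hqw : usmul q w = z := by
    have e0 : usmul (p + v) z = usmul p z := by
      rw [usmul_add hCrz hrz, hvz]
    have e1 : usmul (q + (p + v)) z = usmul q (usmul (p + v) z) := by
      rw [usmul_add hCrz hrz]
    rw [hq] at e1
    rw [hvz] at e1
    rw [e0] at e1
    exact e1.symm
  -- equicontinuity and a finite net of K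
  obtain ⟨δ, hδpos, hδ⟩ := approxOrb.uc hzu (ε := ε / 8) (by linarith)
  obtain ⟨Fnet, hFnet⟩ := hK.elim_finite_subcover (fun x : ℝ => Metric.ball x δ)
    (fun _ => isOpen_ball) (fun t _ => Set.mem_iUnion.2 ⟨t, Metric.mem_ball_self hδpos⟩)
  have hnet : ∀ t ∈ K, ∃ x ∈ Fnet, dist t x < δ := by
    intro t ht
    have := hFnet ht
    rw [Set.mem_iUnion₂] at this
    obtain ⟨x, hx1, hx2⟩ := this
    exact ⟨x, hx1, by rwa [Metric.mem_ball] at hx2⟩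
  -- choose r with w(·+r) close to z on the net
  have hAq : {r : ℝ | ∀ x ∈ Fnet, dist (w (x + r)) (z x) < ε / 4} ∈ q := by
    have hper : ∀ x ∈ Fnet, {r : ℝ | dist (w (x + r)) (z x) < ε / 4} ∈ q := by
      intro x _
      have : z x = usmul q w x := by rw [hqw]
      rw [this]
      exact tendsto_mem_ultra (usmul_spec hCrz hwmem q x) (by linarith)
    have := (Filter.biInter_finset_mem Fnet).mpr hper
    refine Filter.mem_of_superset this ?_
    intro r hr
    simp only [Set.mem_iInter] at hr
    exact hr
  obtain ⟨r, hr⟩ := q.nonempty_of_mem hAq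
  have claim1 : ∀ t ∈ K, dist (w (t + r)) (z t) ≤ ε / 2 := by
    intro t ht
    obtain ⟨x, hxF, hxd⟩ := hnet t ht
    have b1 : dist (w (t + r)) (w (x + r)) ≤ ε / 8 := by
      apply hδ w hwOrb
      rwa [dist_add_right]
    have b2 : dist (w (x + r)) (z x) < ε / 4 := hr x hxF
    have b3 : dist (z x) (z t) ≤ ε / 8 := by
      apply hδ z (approxOrb_self z)
      rwa [dist_comm]
    calc dist (w (t + r)) (z t)
        ≤ dist (w (t + r)) (w (x + r)) + dist (w (x + r)) (z x) + dist (z x) (z t) :=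
          dist_triangle4 _ _ _ _
      _ ≤ ε / 8 + ε / 4 + ε / 8 := by linarith [b1, b2, b3]
      _ = ε / 2 := by ring
  set R : ℕ := ⌈|r|⌉₊ with hRdef
  have hRr : |r| ≤ (R : ℝ) := Nat.le_ceil _
  -- choose s deep in a long gap with z(·+r+s) close to w(·+r) on the net
  have hAp : {s : ℝ | ∀ x ∈ Fnet, dist (z (x + r + s)) (w (x + r)) < ε / 4} ∈ p := by
    have hper : ∀ x ∈ Fnet, {s : ℝ | dist (z (x + r + s)) (w (x + r)) < ε / 4} ∈ p := by
      intro x _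
      have : w (x + r) = usmul p z (x + r) := by rw [hwdef]
      rw [this]
      exact tendsto_mem_ultra (usmul_spec hCrz hrz p (x + r)) (by linarith)
    have := (Filter.biInter_finset_mem Fnet).mpr hper
    refine Filter.mem_of_superset this ?_
    intro s hs
    simp only [Set.mem_iInter] at hs
    exact hs
  obtain ⟨s, hsA, hsB⟩ := p.nonempty_of_mem (inter_mem hAp (hBp R))
  have claim2 : ∀ t ∈ K, dist (z (t + r + s)) (w (t + r)) ≤ ε / 2 := by
    intro t ht
    obtain ⟨x, hxF, hxd⟩ := hnet t ht
    have b1 : dist (z (t + r + s)) (z (x + r + s)) ≤ ε / 8 := by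
      apply hδ z (approxOrb_self z)
      rw [dist_add_right, dist_add_right]
      exact hxd
    have b2 : dist (z (x + r + s)) (w (x + r)) < ε / 4 := hsA x hxF
    have b3 : dist (w (x + r)) (w (t + r)) ≤ ε / 8 := by
      apply hδ w hwOrb
      rw [dist_add_right, dist_comm]
      exact hxd
    calc dist (z (t + r + s)) (w (t + r))
        ≤ dist (z (t + r + s)) (z (x + r + s)) + dist (z (x + r + s)) (w (x + r))
          + dist (w (x + r)) (w (t + r)) := dist_triangle4 _ _ _ _
      _ ≤ ε / 8 + ε / 4 + ε / 8 := by linarith [b1, b2, b3]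
      _ = ε / 2 := by ring
  have hmemD : s + r ∈ D := by
    rw [hDdef]
    intro t ht
    have h1 := claim2 t ht
    have h2 := claim1 t ht
    have : t + (s + r) = t + r + s := by ring
    rw [this]
    calc dist (z (t + r + s)) (z t)
        ≤ dist (z (t + r + s)) (w (t + r)) + dist (w (t + r)) (z t) := dist_triangle _ _ _
      _ ≤ ε / 2 + ε / 2 := by linarith [h1, h2]
      _ = ε := by ring
  exact hBkey R r hRr s hsB hmemD

end Main

/-- Flor's theorem: the pair of a uniformly continuous almost automorphic function with
relatively compact range and a uniformly continuous recurrent function with relatively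
compact range is recurrent. -/
theorem pair_almostAutomorphic_recurrent {X : Type*} [NormedAddCommGroup X]
    [NormedSpace ℝ X] [CompleteSpace X] (f g : ℝ → X)
    (hfu : UniformContinuous f) (hfrc : IsCompact (closure (Set.range f)))
    (hgu : UniformContinuous g) (hgrc : IsCompact (closure (Set.range g)))
    (hfaa : AlmostAutomorphic f) (hgrec : Recurrent g) :
    ∀ ε > (0 : ℝ), ∀ K : Set ℝ, IsCompact K →
      RelDense {τ : ℝ | ∀ t ∈ K, ‖f (t + τ) - f t‖ ≤ ε ∧ ‖g (t + τ) - g t‖ ≤ ε} :=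
  pair_almostAutomorphic_recurrent' f g hfu hfrc hgu hgrc hfaa hgrec
end

section
/- Define φ : ℤ → ℂ by φ(n) := (1 + e^{in})/|1 + e^{in}| (note 1 + e^{in} ≠ 0 for all integers n). Then φ is (Bochner) almost automorphic on ℤ: for every sequence (m'_k) of integers there exist a subsequence (m_k) and ψ : ℤ → ℂ such that φ(n + m_k) → ψ(n) and ψ(n − m_k) → φ(n) for every n ∈ ℤ; but φ is not Bohr almost periodic on ℤ: there exists ε > 0 such that the set {τ ∈ ℤ : |φ(n + τ) − φ(n)| ≤ ε for all n ∈ ℤ} is not relatively dense in ℤ. -/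
open Filter Topology

/-- A set `E ⊆ ℤ` is relatively dense in `ℤ` if for some `N ∈ ℕ` every set of `N`
consecutive integers meets `E`. -/
def RelDenseZ (E : Set ℤ) : Prop :=
  ∃ N : ℕ, ∀ a : ℤ, ∃ τ ∈ E, τ ∈ Set.Ico a (a + N)


lemma int_ne_int_mul_pi (a b : ℤ) (hb : b ≠ 0) : (a : ℝ) ≠ (b : ℝ) * Real.pi := by
  intro h
  have : Irrational ((b : ℝ) * Real.pi) := (irrational_pi.intCast_mul hb)
  rw [← h] at this
  exact this.ne_int a rfl

lemma cos_half_int_ne (n : ℤ) : Real.cos ((n : ℝ) / 2) ≠ 0 := by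
  intro h
  rw [Real.cos_eq_zero_iff] at h
  obtain ⟨k, hk⟩ := h
  have : (n : ℝ) = ((2 * k + 1 : ℤ) : ℝ) * Real.pi := by push_cast at hk ⊢; linarith
  exact int_ne_int_mul_pi n (2 * k + 1) (by omega) this

lemma half_angle (θ : ℝ) :
    (1 : ℂ) + Complex.exp (Complex.I * θ) =
      ((2 * Real.cos (θ / 2) : ℝ) : ℂ) * Complex.exp (Complex.I * ((θ / 2 : ℝ) : ℂ)) := by
  have e2 : ((Real.cos (θ/2) : ℝ) : ℂ) =
      (Complex.exp (((θ/2:ℝ):ℂ) * Complex.I) + Complex.exp (-((θ/2:ℝ):ℂ) * Complex.I)) / 2 := by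
    rw [Complex.ofReal_cos]; rfl
  push_cast [e2]
  have e3 : Complex.exp (-((θ:ℂ)/2) * Complex.I) * Complex.exp (Complex.I * ((θ:ℂ)/2)) = 1 := by
    rw [← Complex.exp_add]; ring_nf; exact Complex.exp_zero
  have e4 : Complex.exp (((θ:ℂ)/2) * Complex.I) * Complex.exp (Complex.I * ((θ:ℂ)/2)) =
      Complex.exp (Complex.I * (θ:ℂ)) := by
    rw [← Complex.exp_add]; ring_nf
  linear_combination -e3 - e4

lemma abs_one_add_exp (θ : ℝ) :
    ‖1 + Complex.exp (Complex.I * θ)‖ = 2 * |Real.cos (θ / 2)| := by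
  rw [half_angle θ, norm_mul, Complex.norm_real, Real.norm_eq_abs]
  rw [mul_comm Complex.I, Complex.norm_exp_ofReal_mul_I, mul_one, abs_mul]
  norm_num

lemma one_add_exp_ne (n : ℤ) : (1 : ℂ) + Complex.exp (Complex.I * (n : ℂ)) ≠ 0 := by
  intro h
  have h2 : ((n : ℝ) : ℂ) = (n : ℂ) := by push_cast; rfl
  have := abs_one_add_exp (n : ℝ)
  rw [h2, h] at this
  simp only [norm_zero] at this
  have := cos_half_int_ne n
  have h3 : |Real.cos ((n:ℝ)/2)| = 0 := by linarith [abs_nonneg (Real.cos ((n:ℝ)/2))]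
  exact this (abs_eq_zero.mp h3)

noncomputable def sgn (n : ℤ) : ℝ := if 0 < Real.cos ((n : ℝ) / 2) then 1 else -1

lemma sgn_eq_one_iff (n : ℤ) : sgn n = 1 ↔ 0 < Real.cos ((n:ℝ)/2) := by
  unfold sgn
  split <;> rename_i h
  · simpa using h
  · exact ⟨fun hh => absurd hh (by norm_num), fun hh => absurd hh h⟩

lemma sgn_eq (n : ℤ) : sgn n = 1 ∨ sgn n = -1 := by unfold sgn; split <;> simp

lemma phi_rep (n : ℤ) :
    (1 + Complex.exp (Complex.I * (n : ℂ))) /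
        ((‖1 + Complex.exp (Complex.I * (n : ℂ))‖ : ℝ) : ℂ)
      = (sgn n : ℂ) * Complex.exp (Complex.I * (((n : ℝ) / 2 : ℝ) : ℂ)) := by
  have hc := cos_half_int_ne n
  have h2 : (n : ℂ) = ((n : ℝ) : ℂ) := by push_cast; rfl
  rw [h2, abs_one_add_exp, half_angle]
  have hexp := Complex.exp_ne_zero (Complex.I * (((n : ℝ) / 2 : ℝ) : ℂ))
  have habs : (0:ℝ) < 2 * |Real.cos ((n:ℝ)/2)| := by
    have := abs_pos.mpr hc; linarith
  have hccx : Complex.cos ((n : ℂ) / 2) ≠ 0 := by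
    have h3 : ((n:ℂ)/2) = (((n:ℝ)/2 : ℝ) : ℂ) := by push_cast; ring
    rw [h3, ← Complex.ofReal_cos]
    exact_mod_cast hc
  rw [mul_div_assoc]  -- maybe not needed
  unfold sgn
  split
  · rename_i hpos
    rw [abs_of_pos hpos]
    field_simp [hccx]
    simp
  · rename_i hneg
    have hlt : Real.cos ((n:ℝ)/2) < 0 := lt_of_le_of_ne (not_lt.mp hneg) hc
    rw [abs_of_neg hlt]
    push_cast
    field_simp [hccx]

lemma phi_dist (n τ : ℤ) :
    ‖(1 + Complex.exp (Complex.I * ((n+τ : ℤ) : ℂ))) /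
        ((‖1 + Complex.exp (Complex.I * ((n+τ:ℤ) : ℂ))‖ : ℝ) : ℂ)
      - (1 + Complex.exp (Complex.I * (n : ℂ))) /
        ((‖1 + Complex.exp (Complex.I * (n : ℂ))‖ : ℝ) : ℂ)‖
    = ‖(sgn (n+τ) : ℂ) * Complex.exp (Complex.I * (((τ:ℝ)/2 : ℝ):ℂ)) - (sgn n : ℂ)‖ := by
  rw [phi_rep, phi_rep]
  have hsplit : Complex.exp (Complex.I * ((((n+τ:ℤ):ℝ)/2 : ℝ):ℂ)) =
      Complex.exp (Complex.I * (((n:ℝ)/2 : ℝ):ℂ)) * Complex.exp (Complex.I * (((τ:ℝ)/2:ℝ):ℂ)) := by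
    rw [← Complex.exp_add]; congr 1; push_cast; ring
  rw [hsplit]
  have hfac : (sgn (n+τ) : ℂ) * (Complex.exp (Complex.I * (((n:ℝ)/2 : ℝ):ℂ)) *
        Complex.exp (Complex.I * (((τ:ℝ)/2:ℝ):ℂ))) -
        (sgn n : ℂ) * Complex.exp (Complex.I * (((n:ℝ)/2 : ℝ):ℂ))
      = Complex.exp (Complex.I * (((n:ℝ)/2 : ℝ):ℂ)) *
        ((sgn (n+τ) : ℂ) * Complex.exp (Complex.I * (((τ:ℝ)/2:ℝ):ℂ)) - (sgn n : ℂ)) := by ring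
  rw [hfac, norm_mul, mul_comm Complex.I, Complex.norm_exp_ofReal_mul_I, one_mul]

lemma dense_orbit (y δ : ℝ) (hδ : 0 < δ) :
    ∃ n k : ℤ, |(n:ℝ)/2 + (k:ℝ) * (2*Real.pi) - y| < δ := by
  rcases AddSubgroup.dense_or_cyclic (AddSubgroup.closure ({(1:ℝ)/2, 2*Real.pi} : Set ℝ)) with
    hd | ⟨a, ha⟩
  · obtain ⟨g, hg, hgy⟩ := Metric.mem_closure_iff.mp (hd y) δ hδ
    obtain ⟨m, k, hmk⟩ := AddSubgroup.mem_closure_pair.mp hg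
    refine ⟨m, k, ?_⟩
    have : (m:ℝ)/2 + (k:ℝ)*(2*Real.pi) = g := by
      rw [← hmk]; simp [zsmul_eq_mul]; ring
    rw [this, ← Real.dist_eq, dist_comm]
    exact hgy
  · exfalso
    have h1 : (1:ℝ)/2 ∈ AddSubgroup.closure ({(1:ℝ)/2, 2*Real.pi} : Set ℝ) :=
      AddSubgroup.subset_closure (by simp)
    have h2 : 2*Real.pi ∈ AddSubgroup.closure ({(1:ℝ)/2, 2*Real.pi} : Set ℝ) :=
      AddSubgroup.subset_closure (by simp)
    rw [ha, AddSubgroup.mem_closure_singleton] at h1 h2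
    obtain ⟨p, hp⟩ := h1
    obtain ⟨q, hq⟩ := h2
    rw [zsmul_eq_mul] at hp hq
    have hp0 : p ≠ 0 := by rintro rfl; norm_num at hp
    have hq0 : (q:ℝ) = (4*p : ℤ) * Real.pi := by
      have hpR : (p:ℝ) ≠ 0 := Int.cast_ne_zero.mpr hp0
      have ha' : a = 1/(2*p) := by field_simp at hp ⊢; linarith
      rw [ha'] at hq
      push_cast
      field_simp at hq ⊢
      linarith
    exact int_ne_int_mul_pi q (4*p) (by omega) hq0

lemma cos_lip (x y : ℝ) : |Real.cos x - Real.cos y| ≤ |x - y| := by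
  rw [Real.cos_sub_cos, abs_mul, abs_mul]
  have h1 : |Real.sin ((x+y)/2)| ≤ 1 := abs_le.mpr ⟨Real.neg_one_le_sin _, Real.sin_le_one _⟩
  have h2 : |Real.sin ((x-y)/2)| ≤ |(x-y)/2| := Real.abs_sin_le_abs
  have h3 : |(x-y)/2| = |x-y|/2 := by rw [abs_div]; norm_num
  rw [h3] at h2
  have : |(-2 : ℝ)| = 2 := by norm_num
  rw [this]
  nlinarith [abs_nonneg (Real.sin ((x+y)/2)), abs_nonneg (x - y)]

lemma sign_transfer {x c : ℝ} (h : |x - c| < |c|) : 0 < x * c := by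
  rw [abs_lt] at h
  rcases lt_trichotomy c 0 with h1 | h1 | h1
  · rw [abs_of_neg h1] at h
    nlinarith
  · simp [h1] at h; linarith [abs_nonneg (x - c), h.1, h.2]
  · rw [abs_of_pos h1] at h
    nlinarith

lemma find_n (β y : ℝ) (hy : Real.cos y ≠ 0) (hyb : Real.cos (y + β) ≠ 0) :
    ∃ n : ℤ, 0 < Real.cos ((n:ℝ)/2) * Real.cos y ∧
      0 < Real.cos ((n:ℝ)/2 + β) * Real.cos (y + β) := by
  set δ : ℝ := min |Real.cos y| |Real.cos (y + β)| with hδdef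
  have hδ : 0 < δ := lt_min (abs_pos.mpr hy) (abs_pos.mpr hyb)
  obtain ⟨n, k, hnk⟩ := dense_orbit y δ hδ
  refine ⟨n, ?_, ?_⟩
  · apply sign_transfer
    have e1 : Real.cos ((n:ℝ)/2) = Real.cos ((n:ℝ)/2 + k * (2*Real.pi)) :=
      (Real.cos_add_int_mul_two_pi _ _).symm
    rw [e1]
    calc |Real.cos ((n:ℝ)/2 + k*(2*Real.pi)) - Real.cos y| ≤ |(n:ℝ)/2 + k*(2*Real.pi) - y| :=
          cos_lip _ _
      _ < δ := hnk
      _ ≤ |Real.cos y| := min_le_left _ _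
  · apply sign_transfer
    have e1 : Real.cos ((n:ℝ)/2 + β) = Real.cos (((n:ℝ)/2 + β) + k * (2*Real.pi)) :=
      (Real.cos_add_int_mul_two_pi _ _).symm
    rw [e1]
    calc |Real.cos (((n:ℝ)/2 + β) + k*(2*Real.pi)) - Real.cos (y + β)|
        ≤ |((n:ℝ)/2 + β + k*(2*Real.pi)) - (y + β)| := cos_lip _ _
      _ = |(n:ℝ)/2 + k*(2*Real.pi) - y| := by ring_nf
      _ < δ := hnk
      _ ≤ |Real.cos (y + β)| := min_le_right _ _

lemma tau_eq_zero (τ : ℤ)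
    (h : ∀ n : ℤ, ‖(sgn (n+τ) : ℂ) *
        Complex.exp (Complex.I * (((τ:ℝ)/2 : ℝ):ℂ)) - (sgn n : ℂ)‖ ≤ 1/2) :
    τ = 0 := by
  by_contra hτ
  set E : ℂ := Complex.exp (Complex.I * (((τ:ℝ)/2 : ℝ):ℂ)) with hE
  have hcos4 : Real.cos ((τ:ℝ)/4) ≠ 0 := by
    intro hz
    rw [Real.cos_eq_zero_iff] at hz
    obtain ⟨k, hk⟩ := hz
    have : (τ:ℝ) = ((2*(2*k+1) : ℤ):ℝ) * Real.pi := by push_cast at hk ⊢; linarith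
    exact int_ne_int_mul_pi τ _ (by omega) this
  have hsin4 : Real.sin ((τ:ℝ)/4) ≠ 0 := by
    intro hz
    rw [Real.sin_eq_zero_iff] at hz
    obtain ⟨k, hk⟩ := hz
    have hk0 : k ≠ 0 := by
      rintro rfl
      norm_num at hk
      have hz0 : (τ:ℝ) = 0 := by linarith
      exact hτ (by exact_mod_cast hz0)
    have : (τ:ℝ) = ((4*k : ℤ):ℝ) * Real.pi := by push_cast at hk ⊢; linarith
    exact int_ne_int_mul_pi τ _ (by omega) this
  -- first n : same signs
  have heq1 : -((τ:ℝ)/4) + (τ:ℝ)/2 = (τ:ℝ)/4 := by ring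
  obtain ⟨n₁, hA, hB⟩ := find_n ((τ:ℝ)/2) (-((τ:ℝ)/4))
    (by rw [Real.cos_neg]; exact hcos4) (by rw [heq1]; exact hcos4)
  rw [Real.cos_neg] at hA
  rw [heq1] at hB
  have hc2 : 0 < Real.cos ((τ:ℝ)/4) * Real.cos ((τ:ℝ)/4) := by
    rcases lt_or_gt_of_ne hcos4 with hc | hc
    · exact mul_pos_of_neg_of_neg hc hc
    · exact mul_pos hc hc
  have hP1 : 0 < Real.cos ((n₁:ℝ)/2) * Real.cos ((n₁:ℝ)/2 + (τ:ℝ)/2) := by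
    nlinarith [mul_pos hA hB, hc2]
  -- second n : opposite signs
  have heq2 : Real.pi/2 - (τ:ℝ)/4 + (τ:ℝ)/2 = Real.pi/2 - (-((τ:ℝ)/4)) := by ring
  have hcos2' : Real.cos (Real.pi/2 - (τ:ℝ)/4 + (τ:ℝ)/2) = -Real.sin ((τ:ℝ)/4) := by
    rw [heq2, Real.cos_pi_div_two_sub, Real.sin_neg]
  obtain ⟨n₂, hA', hB'⟩ := find_n ((τ:ℝ)/2) (Real.pi/2 - (τ:ℝ)/4)
    (by rw [Real.cos_pi_div_two_sub]; exact hsin4)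
    (by rw [hcos2']; simpa using hsin4)
  rw [Real.cos_pi_div_two_sub] at hA'
  rw [hcos2'] at hB'
  have hs2 : 0 < Real.sin ((τ:ℝ)/4) * Real.sin ((τ:ℝ)/4) := by
    rcases lt_or_gt_of_ne hsin4 with hc | hc
    · exact mul_pos_of_neg_of_neg hc hc
    · exact mul_pos hc hc
  have hP2 : Real.cos ((n₂:ℝ)/2) * Real.cos ((n₂:ℝ)/2 + (τ:ℝ)/2) < 0 := by
    nlinarith [mul_pos hA' hB', hs2]
  -- sign bookkeeping
  have harg1 : ((n₁+τ : ℤ):ℝ)/2 = (n₁:ℝ)/2 + (τ:ℝ)/2 := by push_cast; ring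
  have harg2 : ((n₂+τ : ℤ):ℝ)/2 = (n₂:ℝ)/2 + (τ:ℝ)/2 := by push_cast; ring
  have hsgn1 : sgn (n₁ + τ) = sgn n₁ := by
    unfold sgn
    rw [harg1]
    by_cases hpos : 0 < Real.cos ((n₁:ℝ)/2)
    · have h' : 0 < Real.cos ((n₁:ℝ)/2 + (τ:ℝ)/2) := by nlinarith
      simp [hpos, h']
    · have h0 : Real.cos ((n₁:ℝ)/2) < 0 :=
        lt_of_le_of_ne (not_lt.mp hpos) (cos_half_int_ne n₁)
      have h' : Real.cos ((n₁:ℝ)/2 + (τ:ℝ)/2) < 0 := by nlinarith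
      simp [hpos, not_lt.mpr h'.le]
  have hsgn2 : sgn (n₂ + τ) = -sgn n₂ := by
    unfold sgn
    rw [harg2]
    by_cases hpos : 0 < Real.cos ((n₂:ℝ)/2)
    · have h' : Real.cos ((n₂:ℝ)/2 + (τ:ℝ)/2) < 0 := by nlinarith
      simp [hpos, not_lt.mpr h'.le]
    · have h0 : Real.cos ((n₂:ℝ)/2) < 0 :=
        lt_of_le_of_ne (not_lt.mp hpos) (cos_half_int_ne n₂)
      have h' : 0 < Real.cos ((n₂:ℝ)/2 + (τ:ℝ)/2) := by nlinarith
      simp [hpos, h']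
  -- derive the two estimates
  have h1 : ‖E - 1‖ ≤ 1/2 := by
    have hh := h n₁
    rw [hsgn1] at hh
    rcases sgn_eq n₁ with hs | hs <;> rw [hs] at hh <;> push_cast at hh
    · simpa using hh
    · rw [show (-1 : ℂ) * E - (-1) = -(E - 1) by ring, norm_neg] at hh
      exact hh
  have h2 : ‖E + 1‖ ≤ 1/2 := by
    have hh := h n₂
    rw [hsgn2] at hh
    rcases sgn_eq n₂ with hs | hs <;> rw [hs] at hh <;> push_cast at hh
    · rw [show (-1 : ℂ) * E - 1 = -(E + 1) by ring, norm_neg] at hh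
      exact hh
    · rw [show -(-1 : ℂ) * E - (-1) = E + 1 by ring] at hh
      exact hh
  have hfin : (2:ℝ) = ‖(E+1) - (E-1)‖ := by
    rw [show (E+1) - (E-1) = 2 by ring]
    simp
  have htri := norm_sub_le (E+1) (E-1)
  rw [← hfin] at htri
  linarith

noncomputable def phiF : ℤ → ℂ := fun n =>
  (1 + Complex.exp (Complex.I * (n : ℂ))) /
    ((‖1 + Complex.exp (Complex.I * (n : ℂ))‖ : ℝ) : ℂ)

noncomputable def gF : ℂ → ℂ := fun z => (1 + z) / ((‖1 + z‖ : ℝ) : ℂ)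

lemma phiF_eq (n : ℤ) : phiF n = gF (Complex.exp (Complex.I * (n:ℂ))) := rfl

lemma gF_contAt {z : ℂ} (hz : 1 + z ≠ 0) : ContinuousAt gF z := by
  apply ContinuousAt.div
  · exact (continuous_const.add continuous_id).continuousAt
  · exact (Complex.continuous_ofReal.comp
      (continuous_norm.comp (continuous_const.add continuous_id))).continuousAt
  · exact Complex.ofReal_ne_zero.mpr (norm_ne_zero_iff.mpr hz)

lemma exp_int_abs (a : ℤ) : ‖Complex.exp (Complex.I * (a:ℂ))‖ = 1 := by
  rw [show (a:ℂ) = ((a:ℝ):ℂ) by push_cast; rfl, mul_comm, Complex.norm_exp_ofReal_mul_I]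

lemma exp_int_add (a b : ℤ) : Complex.exp (Complex.I * ((a+b:ℤ):ℂ)) =
    Complex.exp (Complex.I * (a:ℂ)) * Complex.exp (Complex.I * (b:ℂ)) := by
  rw [← Complex.exp_add]; congr 1; push_cast; ring

lemma exp_int_sub (a b : ℤ) : Complex.exp (Complex.I * ((a-b:ℤ):ℂ)) =
    Complex.exp (Complex.I * (a:ℂ)) / Complex.exp (Complex.I * (b:ℂ)) := by
  rw [← Complex.exp_sub]; congr 1; push_cast; ring

lemma phiF_abs (n : ℤ) : ‖phiF n‖ = 1 := by
  unfold phiF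
  rw [norm_div, Complex.norm_real, Real.norm_eq_abs, abs_of_nonneg (norm_nonneg _)]
  exact div_self (norm_ne_zero_iff.mpr (one_add_exp_ne n))

lemma part1 (m' : ℕ → ℤ) :
    ∃ σ : ℕ → ℕ, StrictMono σ ∧ ∃ ψ : ℤ → ℂ,
      (∀ n : ℤ, Filter.Tendsto (fun k => phiF (n + m' (σ k))) Filter.atTop (nhds (ψ n))) ∧
      (∀ n : ℤ, Filter.Tendsto (fun k => ψ (n - m' (σ k))) Filter.atTop (nhds (phiF n))) := by
  have hSc : IsCompact ((Set.univ.pi fun _ : ℤ => Metric.closedBall (0:ℂ) 1) ×ˢ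
      Metric.closedBall (0:ℂ) 1) :=
    (isCompact_univ_pi fun _ => isCompact_closedBall _ _).prod (isCompact_closedBall _ _)
  have hmem : ∀ k : ℕ, ((fun n => phiF (n + m' k), Complex.exp (Complex.I * (m' k : ℂ))) :
      (ℤ → ℂ) × ℂ) ∈ (Set.univ.pi fun _ : ℤ => Metric.closedBall (0:ℂ) 1) ×ˢ
      Metric.closedBall (0:ℂ) 1 := by
    intro k
    constructor
    · intro n _
      simp only [Metric.mem_closedBall, Complex.dist_eq, sub_zero]
      exact le_of_eq (phiF_abs _)
    · simp only [Metric.mem_closedBall, Complex.dist_eq, sub_zero]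
      exact le_of_eq (exp_int_abs _)
  obtain ⟨p, hpS, σ, hσ, hconv⟩ := hSc.isSeqCompact hmem
  have hconv1 : Filter.Tendsto
      (fun k => ((fun n => phiF (n + m' (σ k)), Complex.exp (Complex.I * (m' (σ k) : ℂ))) :
        (ℤ → ℂ) × ℂ).1) Filter.atTop (nhds p.1) := (continuous_fst.tendsto p).comp hconv
  have h1 : ∀ n : ℤ, Filter.Tendsto (fun k => phiF (n + m' (σ k))) Filter.atTop (nhds (p.1 n)) :=
    fun n => tendsto_pi_nhds.mp hconv1 n
  have hw : Filter.Tendsto (fun k => Complex.exp (Complex.I * (m' (σ k) : ℂ)))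
      Filter.atTop (nhds p.2) := (continuous_snd.tendsto p).comp hconv
  have hwabs : ‖p.2‖ = 1 := by
    have hca : Filter.Tendsto (fun k => ‖Complex.exp (Complex.I * (m' (σ k):ℂ))‖)
        Filter.atTop (nhds (‖p.2‖)) := (continuous_norm.tendsto p.2).comp hw
    have hc1 : Filter.Tendsto (fun _ : ℕ => (1:ℝ)) Filter.atTop (nhds (‖p.2‖)) :=
      hca.congr (fun k => exp_int_abs _)
    exact tendsto_nhds_unique hc1 tendsto_const_nhds
  have hw0 : p.2 ≠ 0 := by
    intro h; rw [h] at hwabs; simp at hwabs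
  have hψg : ∀ j : ℤ, 1 + Complex.exp (Complex.I * (j:ℂ)) * p.2 ≠ 0 →
      p.1 j = gF (Complex.exp (Complex.I * (j:ℂ)) * p.2) := by
    intro j hj
    have ht1 : Filter.Tendsto
        (fun k => Complex.exp (Complex.I*(j:ℂ)) * Complex.exp (Complex.I*(m' (σ k):ℂ)))
        Filter.atTop (nhds (Complex.exp (Complex.I*(j:ℂ)) * p.2)) := tendsto_const_nhds.mul hw
    have ht2 := ((gF_contAt hj).tendsto).comp ht1
    have heqf : ∀ k, gF (Complex.exp (Complex.I*(j:ℂ)) * Complex.exp (Complex.I*(m' (σ k):ℂ)))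
        = phiF (j + m' (σ k)) := fun k => by rw [phiF_eq, exp_int_add]
    exact tendsto_nhds_unique (h1 j) (ht2.congr heqf)
  refine ⟨σ, hσ, p.1, h1, ?_⟩
  intro n
  have hsa : Filter.Tendsto (fun k => Complex.exp (Complex.I * ((n - m' (σ k) : ℤ):ℂ)) * p.2)
      Filter.atTop (nhds (Complex.exp (Complex.I * (n:ℂ)))) := by
    have hq : Filter.Tendsto
        (fun k => Complex.exp (Complex.I*(n:ℂ)) / Complex.exp (Complex.I*(m' (σ k):ℂ)) * p.2)
        Filter.atTop (nhds (Complex.exp (Complex.I*(n:ℂ)) / p.2 * p.2)) :=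
      (tendsto_const_nhds.div hw hw0).mul tendsto_const_nhds
    rw [div_mul_cancel₀ _ hw0] at hq
    exact hq.congr (fun k => by rw [exp_int_sub])
  have hev : ∀ᶠ k in Filter.atTop,
      1 + Complex.exp (Complex.I * ((n - m' (σ k) : ℤ):ℂ)) * p.2 ≠ 0 := by
    by_contra hcon
    rw [Filter.not_eventually] at hcon
    have hmem' : ∃ᶠ k in Filter.atTop,
        (Complex.exp (Complex.I * ((n - m' (σ k) : ℤ):ℂ)) * p.2) ∈ {z : ℂ | 1 + z = 0} :=
      hcon.mono (fun k hk => not_not.mp hk)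
    have hclosed : IsClosed {z : ℂ | 1 + z = 0} :=
      isClosed_eq (continuous_const.add continuous_id) continuous_const
    have hmc := mem_closure_of_frequently_of_tendsto hmem' hsa
    rw [hclosed.closure_eq] at hmc
    exact one_add_exp_ne n hmc
  have hd := ((gF_contAt (one_add_exp_ne n)).tendsto).comp hsa
  have hc : (fun k => p.1 (n - m' (σ k))) =ᶠ[Filter.atTop]
      (fun k => gF (Complex.exp (Complex.I * ((n - m' (σ k):ℤ):ℂ)) * p.2)) :=
    hev.mono (fun k hk => hψg _ hk)
  rw [phiF_eq]
  exact hd.congr' hc.symm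

/-- `φ(n) = (1 + e^{in})/|1 + e^{in}|` is (Bochner) almost automorphic on `ℤ` but not
Bohr almost periodic on `ℤ`. -/
theorem phi_almostAutomorphic_not_ap :
    let φ : ℤ → ℂ := fun n =>
      (1 + Complex.exp (Complex.I * (n : ℂ))) /
        ((‖1 + Complex.exp (Complex.I * (n : ℂ))‖ : ℝ) : ℂ)
    ((∀ m' : ℕ → ℤ, ∃ σ : ℕ → ℕ, StrictMono σ ∧ ∃ ψ : ℤ → ℂ,
        (∀ n : ℤ, Tendsto (fun k => φ (n + m' (σ k))) atTop (nhds (ψ n))) ∧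
        (∀ n : ℤ, Tendsto (fun k => ψ (n - m' (σ k))) atTop (nhds (φ n)))) ∧
      (∃ ε > (0 : ℝ),
        ¬ RelDenseZ {τ : ℤ | ∀ n : ℤ, ‖φ (n + τ) - φ n‖ ≤ ε})) := by
  intro φ
  constructor
  · exact fun m' => part1 m'
  · refine ⟨1/2, by norm_num, ?_⟩
    rintro ⟨N, hN⟩
    obtain ⟨τ, hτE, hτIco⟩ := hN 1
    have hτ0 : τ = 0 := by
      apply tau_eq_zero
      intro n
      rw [← phi_dist n τ]
      exact hτE n
    rw [hτ0] at hτIco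
    have h1 := hτIco.1
    omega
end

section
/- There exist functions g₁, g₂ : ℝ → ℂ, each bounded, uniformly continuous and recurrent, such that g₁ − g₂ is not recurrent. In particular the set of bounded uniformly continuous recurrent functions from ℝ to ℂ is not a linear space. -/
open Filter Topology

noncomputable section SturmianAux

def al : ℝ := Real.sqrt 2 - 1

lemma al_irr : Irrational al := by
  have := irrational_sqrt_two.sub_intCast 1
  simpa [al] using this

lemma sqrt2_lt : Real.sqrt 2 < 1.5 := by
  rw [Real.sqrt_lt' (by norm_num)]; norm_num

lemma sqrt2_gt : 1 < Real.sqrt 2 := by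
  rw [show (1:ℝ) = Real.sqrt 1 by simp]
  exact Real.sqrt_lt_sqrt (by norm_num) (by norm_num)

lemma al_pos : 0 < al := by simp only [al]; linarith [sqrt2_gt]
lemma al_lt_one : al < 1 := by simp only [al]; linarith [sqrt2_lt]

def X (n : ℤ) : ℝ := ((⌊(n+1) * al⌋ - ⌊n * al⌋ : ℤ) : ℝ)

lemma X_nonneg (n : ℤ) : 0 ≤ X n := by
  have h : ⌊((n:ℤ):ℝ) * al⌋ ≤ ⌊(((n:ℤ)+1 : ℤ):ℝ) * al⌋ := by
    apply Int.floor_le_floor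
    have := al_pos
    push_cast
    nlinarith
  unfold X
  exact_mod_cast sub_nonneg.mpr h

lemma X_le_one (n : ℤ) : X n ≤ 1 := by
  have h : ⌊((n+1 : ℤ):ℝ) * al⌋ ≤ ⌊((n:ℤ):ℝ) * al + ((1:ℤ):ℝ)⌋ := by
    apply Int.floor_le_floor
    have := al_lt_one
    push_cast
    nlinarith
  rw [Int.floor_add_intCast] at h
  unfold X
  push_cast
  push_cast at h
  have h2 : (⌊((n:ℝ) + 1) * al⌋ : ℝ) ≤ (⌊(n:ℝ) * al⌋ : ℝ) + 1 := by exact_mod_cast h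
  linarith

lemma floor_add_of_fract (x y : ℝ) (h : Int.fract x + Int.fract y < 1) :
    ⌊x + y⌋ = ⌊x⌋ + ⌊y⌋ := by
  have hx := Int.fract_nonneg x
  have hy := Int.fract_nonneg y
  have ex : (⌊x⌋ : ℝ) + Int.fract x = x := Int.floor_add_fract x
  have ey : (⌊y⌋ : ℝ) + Int.fract y = y := Int.floor_add_fract y
  rw [Int.floor_eq_iff]
  constructor
  · push_cast; linarith
  · push_cast; linarith

end SturmianAux

noncomputable section Interp

/-- piecewise-linear interpolation of `X` -/
def Ip (t : ℝ) : ℝ := X ⌊t⌋ + Int.fract t * (X (⌊t⌋ + 1) - X ⌊t⌋)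

lemma Ip_int (n : ℤ) : Ip (n : ℝ) = X n := by
  simp [Ip]

lemma Ip_nonneg (t : ℝ) : 0 ≤ Ip t := by
  have h1 := X_nonneg ⌊t⌋
  have h2 := X_nonneg (⌊t⌋ + 1)
  have h3 := Int.fract_nonneg t
  have h4 := Int.fract_lt_one t
  unfold Ip; nlinarith

lemma Ip_le_one (t : ℝ) : Ip t ≤ 1 := by
  have h1 := X_le_one ⌊t⌋
  have h2 := X_le_one (⌊t⌋ + 1)
  have h3 := Int.fract_nonneg t
  have h4 := Int.fract_lt_one t
  have h5 := X_nonneg ⌊t⌋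
  have h6 := X_nonneg (⌊t⌋ + 1)
  unfold Ip; nlinarith

lemma X_diff_abs (n : ℤ) : |X (n+1) - X n| ≤ 1 := by
  have := X_nonneg n; have := X_le_one n
  have := X_nonneg (n+1); have := X_le_one (n+1)
  rw [abs_le]; constructor <;> linarith

lemma Ip_lip_aux : ∀ k : ℕ, ∀ s t : ℝ, s ≤ t → ⌊t⌋ ≤ ⌊s⌋ + k → |Ip t - Ip s| ≤ t - s := by
  intro k
  induction k with
  | zero =>
    intro s t hst hfl
    have hfl' : ⌊s⌋ ≤ ⌊t⌋ := Int.floor_le_floor hst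
    have heq : ⌊t⌋ = ⌊s⌋ := by omega
    have hfr : Int.fract t - Int.fract s = t - s := by
      unfold Int.fract; rw [heq]; ring
    have : Ip t - Ip s = (Int.fract t - Int.fract s) * (X (⌊s⌋ + 1) - X ⌊s⌋) := by
      unfold Ip; rw [heq]; ring
    rw [this, hfr, abs_mul]
    calc |t - s| * |X (⌊s⌋ + 1) - X ⌊s⌋| ≤ |t - s| * 1 := by
          exact mul_le_mul_of_nonneg_left (X_diff_abs ⌊s⌋) (abs_nonneg _)
      _ = t - s := by rw [mul_one, abs_of_nonneg (by linarith)]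
  | succ k ih =>
    intro s t hst hfl
    by_cases h : ⌊t⌋ ≤ ⌊s⌋ + k
    · exact ih s t hst h
    · have h1 : ⌊s⌋ + 1 ≤ ⌊t⌋ := by omega
      set s' : ℝ := ((⌊s⌋ + 1 : ℤ) : ℝ) with hs'
      have hss' : s ≤ s' := by
        have := Int.lt_floor_add_one s
        rw [hs']; push_cast; linarith
      have hs't : s' ≤ t := by
        have h2 : ((⌊s⌋ + 1 : ℤ):ℝ) ≤ ((⌊t⌋:ℤ):ℝ) := by exact_mod_cast h1
        have := Int.floor_le t
        rw [hs']; linarith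
      have hIs' : Ip s' = X (⌊s⌋ + 1) := Ip_int _
      have step1 : |Ip s' - Ip s| ≤ s' - s := by
        have hfs : Int.fract s = s - ⌊s⌋ := rfl
        have : Ip s' - Ip s = (1 - Int.fract s) * (X (⌊s⌋ + 1) - X ⌊s⌋) := by
          rw [hIs']; unfold Ip; ring
        rw [this, abs_mul]
        have h3 : |1 - Int.fract s| = 1 - Int.fract s := by
          rw [abs_of_nonneg]; linarith [Int.fract_lt_one s]
        rw [h3]
        calc (1 - Int.fract s) * |X (⌊s⌋ + 1) - X ⌊s⌋| ≤ (1 - Int.fract s) * 1 :=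
              mul_le_mul_of_nonneg_left (X_diff_abs ⌊s⌋) (by linarith [Int.fract_lt_one s])
          _ = s' - s := by rw [mul_one, hs', hfs]; push_cast; ring
      have step2 : |Ip t - Ip s'| ≤ t - s' := by
        apply ih s' t hs't
        rw [hs', Int.floor_intCast]; omega
      calc |Ip t - Ip s| ≤ |Ip t - Ip s'| + |Ip s' - Ip s| := abs_sub_le _ _ _
        _ ≤ (t - s') + (s' - s) := add_le_add step2 step1
        _ = t - s := by ring

lemma Ip_lip : LipschitzWith 1 Ip := by
  apply LipschitzWith.of_dist_le_mul
  intro x y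
  rw [Real.dist_eq, Real.dist_eq, NNReal.coe_one, one_mul]
  rcases le_total x y with h | h
  · have : ⌊y⌋ ≤ ⌊x⌋ + (⌊y⌋ - ⌊x⌋).toNat := by omega
    have := Ip_lip_aux (⌊y⌋ - ⌊x⌋).toNat x y h this
    rw [abs_sub_comm x y, abs_of_nonneg (by linarith : (0:ℝ) ≤ y - x)]
    rwa [abs_sub_comm] at this
  · have : ⌊x⌋ ≤ ⌊y⌋ + (⌊x⌋ - ⌊y⌋).toNat := by omega
    have := Ip_lip_aux (⌊x⌋ - ⌊y⌋).toNat y x h this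
    rwa [abs_of_nonneg (by linarith : (0:ℝ) ≤ x - y)]

end Interp

noncomputable section Core

lemma core (N : ℕ) : ∃ δ > (0:ℝ), ∀ m : ℤ, Int.fract ((m:ℝ) * al) < δ →
    ∀ s : ℝ, |s| ≤ N → Ip (s + m) = Ip s := by
  classical
  set F := Finset.Icc (-(N:ℤ)) ((N:ℤ)+2) with hF
  have hFne : F.Nonempty := ⟨0, by simp [hF, Finset.mem_Icc]; omega⟩
  set δ := F.inf' hFne (fun n => 1 - Int.fract ((n:ℝ) * al)) with hδ
  have hδpos : 0 < δ := by
    rw [hδ, Finset.lt_inf'_iff]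
    intro n _
    have := Int.fract_lt_one ((n:ℝ)*al)
    linarith
  refine ⟨δ, hδpos, ?_⟩
  intro m hm s hs
  have key : ∀ n : ℤ, n ∈ F → ⌊((n+m : ℤ):ℝ) * al⌋ = ⌊(n:ℝ)*al⌋ + ⌊(m:ℝ)*al⌋ := by
    intro n hn
    have hδn : δ ≤ 1 - Int.fract ((n:ℝ)*al) := Finset.inf'_le _ hn
    have hlt : Int.fract ((n:ℝ)*al) + Int.fract ((m:ℝ)*al) < 1 := by linarith
    have := floor_add_of_fract _ _ hlt
    rw [show (((n+m:ℤ)):ℝ) * al = (n:ℝ)*al + (m:ℝ)*al by push_cast; ring]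
    exact this
  have hXshift : ∀ n : ℤ, n ∈ F → n + 1 ∈ F → X (n + m) = X n := by
    intro n h1 h2
    unfold X
    have e1 : ⌊((n + m + 1 : ℤ):ℝ) * al⌋ = ⌊((n+1:ℤ):ℝ)*al⌋ + ⌊(m:ℝ)*al⌋ := by
      rw [show (n+m+1 : ℤ) = (n+1) + m by ring]
      exact key (n+1) h2
    have e2 : ⌊((n + m : ℤ):ℝ) * al⌋ = ⌊((n:ℤ):ℝ)*al⌋ + ⌊(m:ℝ)*al⌋ := key n h1
    push_cast at e1 e2 ⊢
    rw [e1, e2]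
    push_cast
    ring
  have hfloor : ⌊s⌋ ∈ Finset.Icc (-(N:ℤ)) ((N:ℤ)) := by
    rw [Finset.mem_Icc]
    rw [abs_le] at hs
    constructor
    · exact Int.le_floor.mpr (by push_cast; linarith [hs.1])
    · have : ⌊s⌋ ≤ ⌊((N:ℤ):ℝ)⌋ := Int.floor_le_floor (by push_cast; linarith [hs.2])
      simpa using this
  rw [Finset.mem_Icc] at hfloor
  have m1 : ⌊s⌋ ∈ F := by rw [hF, Finset.mem_Icc]; omega
  have m2 : ⌊s⌋ + 1 ∈ F := by rw [hF, Finset.mem_Icc]; omega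
  have m3 : ⌊s⌋ + 1 + 1 ∈ F := by rw [hF, Finset.mem_Icc]; omega
  unfold Ip
  rw [Int.floor_add_intCast, Int.fract_add_intCast]
  rw [hXshift ⌊s⌋ m1 m2]
  rw [show ⌊s⌋ + m + 1 = (⌊s⌋ + 1) + m by ring, hXshift (⌊s⌋+1) m2 m3]

end Core

section Pell

/-- coefficients of `(√2 - 1)^n = s + t√2` -/
def st : ℕ → ℤ × ℤ
  | 0 => (1, 0)
  | (n+1) => (2 * (st n).2 - (st n).1, (st n).1 - (st n).2)

lemma st_spec (n : ℕ) :
    (((st n).1 : ℝ) + ((st n).2 : ℝ) * Real.sqrt 2) = (Real.sqrt 2 - 1)^n := by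
  induction n with
  | zero => simp [st]
  | succ n ih =>
    have h2 : Real.sqrt 2 * Real.sqrt 2 = 2 := Real.mul_self_sqrt (by norm_num)
    rw [pow_succ, ← ih]
    simp only [st]
    push_cast
    have h3 : Real.sqrt 2 ^ 2 = 2 := Real.sq_sqrt (by norm_num)
    linear_combination (-((st n).2 : ℝ)) * h3

lemma st_sign (n : ℕ) :
    (Even n → 1 ≤ (st n).1 ∧ (st n).2 ≤ 0) ∧ (¬ Even n → (st n).1 ≤ -1 ∧ 1 ≤ (st n).2) := by
  induction n with
  | zero => simp [st]
  | succ n ih =>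
    rcases Nat.even_or_odd n with he | ho
    · have h := ih.1 he
      constructor
      · intro hcon; exact absurd hcon (by simp [Nat.even_add_one, he])
      · intro _; simp only [st]; omega
    · have h := ih.2 (Nat.not_even_iff_odd.mpr ho)
      constructor
      · intro _; simp only [st]; omega
      · intro hcon
        exact absurd (Nat.even_add_one.mpr (Nat.not_even_iff_odd.mpr ho)) hcon

lemma pow_al_mem (n : ℕ) (hn : 1 ≤ n) : 0 < (Real.sqrt 2 - 1)^n ∧ (Real.sqrt 2 - 1)^n < 1 := by
  have h1 : (0:ℝ) < Real.sqrt 2 - 1 := by linarith [sqrt2_gt]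
  have h2 : Real.sqrt 2 - 1 < 1 := by linarith [sqrt2_lt]
  exact ⟨pow_pos h1 n, pow_lt_one₀ (le_of_lt h1) h2 (by omega)⟩

/-- good denominators: for every δ > 0 there is `q ≥ 1` with `0 < fract (q α) < δ`. -/
lemma exists_good_q (δ : ℝ) (hδ : 0 < δ) :
    ∃ q : ℤ, 1 ≤ q ∧ 0 < Int.fract ((q:ℝ) * al) ∧ Int.fract ((q:ℝ) * al) < δ := by
  obtain ⟨n₀, hn₀⟩ := exists_pow_lt_of_lt_one hδ (by linarith [sqrt2_lt] : Real.sqrt 2 - 1 < 1)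
  set n := 2 * n₀ + 1 with hn
  have hodd : ¬ Even n := by simp [hn, Nat.even_add_one, Nat.even_mul]
  have hsign := (st_sign n).2 hodd
  set q : ℤ := (st n).2 with hq
  set s : ℤ := (st n).1 with hs
  refine ⟨q, hsign.2, ?_, ?_⟩
  all_goals {
    have hspec := st_spec n
    have hpow := pow_al_mem n (by omega)
    have hple : (Real.sqrt 2 - 1)^n < δ := by
      calc (Real.sqrt 2 - 1)^n ≤ (Real.sqrt 2 - 1)^n₀ :=
            pow_le_pow_of_le_one (by linarith [sqrt2_gt]) (by linarith [sqrt2_lt]) (by omega)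
        _ < δ := hn₀
    have key : (q:ℝ) * al = (Real.sqrt 2 - 1)^n - ((s + q : ℤ):ℝ) := by
      rw [← hspec]; push_cast; simp only [al]; ring
    have : Int.fract ((q:ℝ) * al) = (Real.sqrt 2 - 1)^n := by
      rw [key, Int.fract_sub_intCast, Int.fract_eq_self.mpr ⟨le_of_lt hpow.1, hpow.2⟩]
    rw [this]
    first
      | exact hpow.1
      | exact hple
  }

end Pell

section RelDenseShifts

lemma reldense_good_m (δ : ℝ) (hδ : 0 < δ) :
    ∃ L ≥ (0:ℝ), ∀ a : ℝ, ∃ m : ℤ,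
      a ≤ (m:ℝ) ∧ (m:ℝ) ≤ a + L ∧ Int.fract ((m:ℝ) * al) < δ := by
  obtain ⟨q, hq1, hθpos, hθδ⟩ := exists_good_q δ hδ
  set θ := Int.fract ((q:ℝ) * al) with hθ
  have hθ1 : θ < 1 := Int.fract_lt_one _
  set L : ℝ := 1 + (1/θ + 1) * q with hL
  have hqR : (1:ℝ) ≤ (q:ℝ) := by exact_mod_cast hq1
  have hLpos : 0 ≤ L := by
    have h1 : 0 < 1/θ := by positivity
    rw [hL]; nlinarith
  refine ⟨L, hLpos, ?_⟩
  intro a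
  set n₀ : ℤ := ⌈a⌉ with hn₀
  set c : ℝ := Int.fract ((n₀:ℝ) * al) with hc
  have hc0 : 0 ≤ c := Int.fract_nonneg _
  have hc1 : c < 1 := Int.fract_lt_one _
  set j : ℤ := ⌈(1 - c)/θ⌉ with hj
  have hjpos : 1 ≤ j := by
    rw [hj]
    apply Int.le_ceil_iff.mpr
    push_cast
    rw [lt_div_iff₀ hθpos]
    nlinarith
  have hjub : ((j:ℝ) - 1) * θ < 1 - c := by
    have := Int.ceil_lt_add_one ((1 - c)/θ)
    have h2 : (j:ℝ) < (1-c)/θ + 1 := by rw [hj]; exact_mod_cast this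
    calc ((j:ℝ) - 1) * θ < ((1-c)/θ) * θ := by
          apply mul_lt_mul_of_pos_right _ hθpos
          linarith
      _ = 1 - c := by field_simp
  have hjlb : 1 - c ≤ (j:ℝ) * θ := by
    have := Int.le_ceil ((1 - c)/θ)
    have h2 : (1-c)/θ ≤ (j:ℝ) := by rw [hj]; exact_mod_cast this
    calc 1 - c = ((1-c)/θ) * θ := by field_simp
      _ ≤ (j:ℝ) * θ := mul_le_mul_of_nonneg_right h2 (le_of_lt hθpos)
  set m : ℤ := n₀ + j * q with hm
  refine ⟨m, ?_, ?_, ?_⟩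
  · have h1 : a ≤ (n₀:ℝ) := Int.le_ceil a
    have h2 : (1:ℤ) ≤ j * q := by nlinarith
    have : ((n₀:ℤ):ℝ) ≤ ((m:ℤ):ℝ) := by exact_mod_cast by omega
    linarith
  · have h1 : (n₀:ℝ) ≤ a + 1 := by linarith [Int.ceil_lt_add_one a]
    have h2 : ((j:ℝ)) * q ≤ (1/θ + 1) * q := by
      apply mul_le_mul_of_nonneg_right _ (by linarith)
      have : (j:ℝ) ≤ (1-c)/θ + 1 := by
        linarith [ (by rw [hj]; exact_mod_cast Int.ceil_lt_add_one ((1-c)/θ) : (j:ℝ) < (1-c)/θ + 1) ]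
      have h3 : (1-c)/θ ≤ 1/θ := by
        apply (div_le_div_iff_of_pos_right hθpos).mpr
        linarith
      linarith
    have : (m:ℝ) = (n₀:ℝ) + (j:ℝ) * q := by rw [hm]; push_cast; ring
    rw [this, hL]
    linarith
  · have key : (m:ℝ) * al - (c + (j:ℝ)*θ - 1)
        = ((⌊(n₀:ℝ)*al⌋ + j * ⌊(q:ℝ)*al⌋ + 1 : ℤ) : ℝ) := by
      have e1 : (n₀:ℝ)*al = (⌊(n₀:ℝ)*al⌋ : ℝ) + c := by rw [hc]; exact (Int.floor_add_fract _).symm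
      have e2 : (q:ℝ)*al = (⌊(q:ℝ)*al⌋ : ℝ) + θ := by rw [hθ]; exact (Int.floor_add_fract _).symm
      have this2 : (m:ℝ) * al = (n₀:ℝ)*al + (j:ℝ)*((q:ℝ)*al) := by rw [hm]; push_cast; ring
      rw [e1, e2] at this2
      rw [this2]; push_cast; ring
    have hfr : Int.fract ((m:ℝ) * al) = c + (j:ℝ)*θ - 1 := by
      rw [Int.fract_eq_iff]
      refine ⟨by linarith, by nlinarith [hθδ, hθ1], ⟨_, key⟩⟩
    rw [hfr]
    nlinarith [hθδ]

end RelDenseShifts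

section Endgame

lemma fract_ne_zero_of_irr {z : ℝ} (hz : Irrational z) : Int.fract z ≠ 0 := by
  intro h
  have : z = (⌊z⌋ : ℝ) := by
    have := Int.self_sub_fract z
    rw [h, sub_zero] at this
    exact this
  exact hz.ne_int ⌊z⌋ this

lemma floor_neg_irr {z : ℝ} (hz : Irrational z) : ⌊-z⌋ = -⌊z⌋ - 1 := by
  have h1 : Int.fract (-z) = 1 - Int.fract z := Int.fract_neg (fract_ne_zero_of_irr hz)
  have e1 : ((⌊-z⌋:ℤ):ℝ) = -z - Int.fract (-z) := (Int.self_sub_fract (-z)).symm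
  have e2 : ((⌊z⌋:ℤ):ℝ) = z - Int.fract z := (Int.self_sub_fract z).symm
  have : ((⌊-z⌋:ℤ):ℝ) = ((-⌊z⌋ - 1 : ℤ):ℝ) := by push_cast; rw [e1, h1]; linarith [e2]
  exact_mod_cast this

lemma irr_mul_al {k : ℤ} (hk : k ≠ 0) : Irrational ((k:ℝ) * al) := al_irr.intCast_mul hk

lemma X_sym (k : ℤ) (hk : 1 ≤ k) : X (-1 - k) = X k := by
  unfold X
  have a1 : (((-1 - k : ℤ):ℝ) + 1) * al = -((k:ℝ) * al) := by push_cast; ring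
  have a2 : ((-1 - k : ℤ):ℝ) * al = -((((k:ℝ)) + 1) * al) := by push_cast; ring
  have i1 : Irrational ((k:ℝ) * al) := irr_mul_al (by omega)
  have i2 : Irrational (((k:ℝ) + 1) * al) := by
    have := irr_mul_al (k := k + 1) (by omega)
    have e : ((k + 1 : ℤ):ℝ) * al = ((k:ℝ) + 1) * al := by push_cast; ring
    rwa [e] at this
  rw [a1, a2, floor_neg_irr i1, floor_neg_irr i2]
  push_cast
  ring

lemma floor_al : ⌊al⌋ = 0 := Int.floor_eq_zero_iff.mpr ⟨al_pos.le, al_lt_one⟩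

lemma X_zero : X 0 = 0 := by
  unfold X
  norm_num [floor_al]

lemma X_neg_one : X (-1) = 1 := by
  unfold X
  have h2 : ⌊-al⌋ = -1 := by rw [floor_neg_irr al_irr, floor_al]; norm_num
  norm_num [h2]

end Endgame

section Reflect

lemma Ip_reflect (τ : ℝ) (hτ : 1 ≤ τ) : Ip (-1 - τ) = Ip τ := by
  set n : ℤ := ⌊τ⌋ with hn
  have hn1 : 1 ≤ n := by rw [hn]; exact_mod_cast Int.le_floor.mpr (by exact_mod_cast hτ)
  set θ : ℝ := Int.fract τ with hθ
  have hθ0 : 0 ≤ θ := Int.fract_nonneg τ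
  have hθ1 : θ < 1 := Int.fract_lt_one τ
  have hτeq : τ = (n:ℝ) + θ := by rw [hn, hθ]; unfold Int.fract; ring
  by_cases h0 : θ = 0
  · have hτint : τ = ((n:ℤ):ℝ) := by rw [hτeq, h0, add_zero]
    have h2 : -1 - ((n:ℤ):ℝ) = ((-1 - n : ℤ):ℝ) := by push_cast; ring
    rw [hτint, h2, Ip_int, Ip_int, X_sym n hn1]
  · have hθpos : 0 < θ := lt_of_le_of_ne hθ0 (Ne.symm h0)
    have hfl : ⌊-1 - τ⌋ = -2 - n := by
      rw [Int.floor_eq_iff]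
      constructor
      · push_cast; rw [hτeq]; linarith
      · push_cast; rw [hτeq]; linarith
    have hfr : Int.fract (-1 - τ) = 1 - θ := by
      unfold Int.fract
      rw [hfl, hτeq]; push_cast; ring
    unfold Ip
    rw [hfl, hfr, ← hn, ← hθ]
    have e1 : (-2 - n) + 1 = -1 - n := by ring
    rw [e1]
    have s1 : X (-2 - n) = X (n + 1) := by
      have : (-2 - n : ℤ) = -1 - (n + 1) := by ring
      rw [this, X_sym (n+1) (by omega)]
    have s2 : X (-1 - n) = X n := X_sym n hn1
    rw [s1, s2]
    ring

end Reflect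

section Main

noncomputable def gg1 : ℝ → ℂ := fun t => ((Ip t : ℝ) : ℂ)
noncomputable def gg2 : ℝ → ℂ := fun t => ((Ip (-1 - t) : ℝ) : ℂ)

lemma gg1_lip : LipschitzWith 1 gg1 := by
  have := Complex.isometry_ofReal.lipschitz.comp Ip_lip
  simpa using (show LipschitzWith (1 * 1) gg1 from this)

lemma gg2_lip : LipschitzWith 1 gg2 := by
  have hrefl : LipschitzWith 1 (fun t : ℝ => -1 - t) := by
    apply LipschitzWith.of_dist_le_mul
    intro x y
    rw [Real.dist_eq, Real.dist_eq, NNReal.coe_one, one_mul,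
      show (-1 - x) - (-1 - y) = y - x by ring, abs_sub_comm]
  have := (Complex.isometry_ofReal.lipschitz.comp Ip_lip).comp hrefl
  simpa using (show LipschitzWith (1 * 1 * 1) gg2 from this)

lemma gg1_bdd : Bornology.IsBounded (Set.range gg1) := by
  rw [isBounded_iff_forall_norm_le]
  refine ⟨1, ?_⟩
  rintro x ⟨t, rfl⟩
  rw [gg1, Complex.norm_real, Real.norm_eq_abs, abs_le]
  exact ⟨by linarith [Ip_nonneg t], Ip_le_one t⟩

lemma gg2_bdd : Bornology.IsBounded (Set.range gg2) := by
  rw [isBounded_iff_forall_norm_le]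
  refine ⟨1, ?_⟩
  rintro x ⟨t, rfl⟩
  rw [gg2, Complex.norm_real, Real.norm_eq_abs, abs_le]
  exact ⟨by linarith [Ip_nonneg (-1-t)], Ip_le_one (-1-t)⟩

lemma compact_bound {K : Set ℝ} (hK : IsCompact K) : ∃ N : ℕ, ∀ t ∈ K, |t| ≤ N := by
  obtain ⟨r, hr⟩ := (Metric.isBounded_iff_subset_closedBall 0).mp hK.isBounded
  refine ⟨⌈max r 0⌉₊, fun t ht => ?_⟩
  have h1 : dist t 0 ≤ r := Metric.mem_closedBall.mp (hr ht)
  rw [Real.dist_eq, sub_zero] at h1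
  calc |t| ≤ r := h1
    _ ≤ max r 0 := le_max_left _ _
    _ ≤ ⌈max r 0⌉₊ := Nat.le_ceil _

lemma gg1_rec : Recurrent gg1 := by
  refine ⟨gg1_lip.continuous, ?_⟩
  intro ε hε K hK
  obtain ⟨N, hN⟩ := compact_bound hK
  obtain ⟨δ, hδpos, hcore⟩ := core N
  obtain ⟨L, hL0, hgood⟩ := reldense_good_m δ hδpos
  refine ⟨L, hL0, fun a => ?_⟩
  obtain ⟨m, h1, h2, h3⟩ := hgood a
  refine ⟨(m:ℝ), ?_, h1, h2⟩
  intro t ht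
  have : Ip (t + (m:ℝ)) = Ip t := hcore m h3 t (hN t ht)
  simp [gg1, this]
  linarith

lemma gg2_rec : Recurrent gg2 := by
  refine ⟨gg2_lip.continuous, ?_⟩
  intro ε hε K hK
  obtain ⟨N, hN⟩ := compact_bound hK
  obtain ⟨δ, hδpos, hcore⟩ := core (N + 1)
  obtain ⟨L, hL0, hgood⟩ := reldense_good_m δ hδpos
  refine ⟨L, hL0, fun a => ?_⟩
  obtain ⟨m, h1, h2, h3⟩ := hgood (-a - L)
  refine ⟨((-m : ℤ):ℝ), ?_, ?_, ?_⟩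
  · intro t ht
    have hb : |(-1 : ℝ) - t| ≤ (N + 1 : ℕ) := by
      have := hN t ht
      push_cast
      rw [abs_le] at *
      constructor <;> [linarith [this.2]; linarith [this.1]]
    have key : Ip ((-1 - t) + (m:ℝ)) = Ip (-1 - t) := hcore m h3 (-1 - t) hb
    have e : -1 - (t + ((-m : ℤ):ℝ)) = (-1 - t) + (m:ℝ) := by push_cast; ring
    simp only [gg2, e, key]
    simp
    linarith
  · push_cast; linarith
  · push_cast; linarith

lemma not_rec_diff : ¬ Recurrent (fun t => gg1 t - gg2 t) := by
  intro hrec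
  obtain ⟨L, hL0, hmeets⟩ := hrec.2 (1/2) (by norm_num) {0} isCompact_singleton
  obtain ⟨τ, hτE, hτI⟩ := hmeets 1
  have hτ1 : 1 ≤ τ := hτI.1
  have hval := hτE 0 rfl
  have e1 : Ip (0 + τ) = Ip τ := by norm_num
  have e2 : Ip (-1 - (0 + τ)) = Ip τ := by
    rw [show -1 - (0 + τ) = -1 - τ by ring, Ip_reflect τ hτ1]
  have e3 : Ip (0:ℝ) = 0 := by
    rw [show (0:ℝ) = ((0:ℤ):ℝ) by push_cast; ring, Ip_int, X_zero]; norm_num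
  have e4 : Ip (-1 - (0:ℝ)) = 1 := by
    rw [show (-1 - (0:ℝ)) = ((-1:ℤ):ℝ) by push_cast; ring, Ip_int, X_neg_one]
  simp only [gg1, gg2, e1, e2, e3, e4] at hval
  rw [show ((Ip τ : ℝ):ℂ) - ((Ip τ : ℝ):ℂ) - (((0:ℝ):ℂ) - ((1:ℝ):ℂ)) = (((1:ℝ):ℂ)) by push_cast; ring] at hval
  rw [Complex.norm_real] at hval
  norm_num at hval

end Main

/-- There are two bounded uniformly continuous recurrent functions whose difference is not
recurrent; in particular the bounded uniformly continuous recurrent functions `ℝ → ℂ` do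
not form a linear space. -/
theorem exists_recurrent_sub_not_recurrent :
    ∃ g₁ g₂ : ℝ → ℂ,
      (Bornology.IsBounded (Set.range g₁) ∧ UniformContinuous g₁ ∧ Recurrent g₁) ∧
      (Bornology.IsBounded (Set.range g₂) ∧ UniformContinuous g₂ ∧ Recurrent g₂) ∧
      ¬ Recurrent (fun t => g₁ t - g₂ t) := by
  exact ⟨gg1, gg2, ⟨gg1_bdd, gg1_lip.uniformContinuous, gg1_rec⟩,
    ⟨gg2_bdd, gg2_lip.uniformContinuous, gg2_rec⟩, not_rec_diff⟩
end

section
/- Let g : ℝ → ℂ be given by g(t) = e^{it²}. Then: (a) for every ε > 0 and every finite set K ⊆ ℝ there exists a finite set F ⊆ ℝ with E(g, ε, K) + F = ℝ (g is recurrent with respect to the discrete topology on ℝ); but (b) g is not recurrent with respect to the usual topology: there exist ε > 0 and a compact set K ⊆ ℝ such that E(g, ε, K) is not relatively dense in ℝ. -/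
set_option maxHeartbeats 800000

open Filter Topology Real

noncomputable section

lemma norm_exp_I (x : ℝ) : ‖Complex.exp (Complex.I * (x : ℂ))‖ = 1 := by
  rw [mul_comm]
  exact Complex.norm_exp_ofReal_mul_I x

lemma norm_g_sub (t τ : ℝ) :
    ‖Complex.exp (Complex.I * ((t + τ : ℝ) : ℂ) ^ 2) - Complex.exp (Complex.I * (t : ℂ) ^ 2)‖
      = ‖Complex.exp (Complex.I * ((2 * t * τ + τ ^ 2 : ℝ) : ℂ)) - 1‖ := by
  have h1 : Complex.I * ((t + τ : ℝ) : ℂ) ^ 2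
      = Complex.I * (t : ℂ) ^ 2 + Complex.I * ((2 * t * τ + τ ^ 2 : ℝ) : ℂ) := by
    push_cast; ring
  rw [h1, Complex.exp_add]
  have h2 : Complex.exp (Complex.I * (t : ℂ) ^ 2) * Complex.exp (Complex.I * ((2 * t * τ + τ ^ 2 : ℝ) : ℂ))
      - Complex.exp (Complex.I * (t : ℂ) ^ 2)
      = Complex.exp (Complex.I * (t : ℂ) ^ 2) * (Complex.exp (Complex.I * ((2 * t * τ + τ ^ 2 : ℝ) : ℂ)) - 1) := by
    ring
  rw [h2, norm_mul]
  have h3 : ‖Complex.exp (Complex.I * (t : ℂ) ^ 2)‖ = 1 := by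
    have : Complex.I * (t : ℂ) ^ 2 = ((t ^ 2 : ℝ) : ℂ) * Complex.I := by push_cast; ring
    rw [this]
    have := Complex.norm_exp_ofReal_mul_I (t ^ 2)
    rw [Complex.ofReal_pow] at this
    simpa using this
  rw [h3, one_mul]

/-- upper bound -/
lemma exp_phase_le (φ : ℝ) (n : ℤ) (h : |φ - 2 * π * n| ≤ 1) :
    ‖Complex.exp (Complex.I * (φ : ℂ)) - 1‖ ≤ 2 * |φ - 2 * π * n| := by
  have h1 : Complex.exp (Complex.I * (φ : ℂ))
      = Complex.exp (Complex.I * ((φ - 2 * π * n : ℝ) : ℂ)) := by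
    have : Complex.I * (φ : ℂ)
        = Complex.I * ((φ - 2 * π * n : ℝ) : ℂ) + (n : ℂ) * (2 * (π : ℂ) * Complex.I) := by
      push_cast; ring
    rw [this, Complex.exp_add, Complex.exp_int_mul_two_pi_mul_I, mul_one]
  rw [h1]
  have h2 : ‖Complex.I * ((φ - 2 * π * n : ℝ) : ℂ)‖ = |φ - 2 * π * n| := by
    rw [norm_mul]
    simp only [Complex.norm_I, one_mul]
    exact Complex.norm_real _
  calc ‖Complex.exp (Complex.I * ((φ - 2 * π * n : ℝ) : ℂ)) - 1‖
      ≤ 2 * ‖Complex.I * ((φ - 2 * π * n : ℝ) : ℂ)‖ := by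
        exact Complex.norm_exp_sub_one_le (by rw [h2]; exact h)
    _ = 2 * |φ - 2 * π * n| := by rw [h2]

/-- exp(I(φ+π)) = -exp(Iφ) -/
lemma exp_phase_pi (φ : ℝ) :
    Complex.exp (Complex.I * ((φ + π : ℝ) : ℂ)) = - Complex.exp (Complex.I * (φ : ℂ)) := by
  have : Complex.I * ((φ + π : ℝ) : ℂ) = Complex.I * (φ : ℂ) + (π : ℂ) * Complex.I := by
    push_cast; ring
  rw [this, Complex.exp_add, Complex.exp_pi_mul_I]
  ring

lemma close_of_classEq (M : ℕ) (hM : 0 < M) (b x x' : ℝ)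
    (h : ⌊Int.fract (x * b) * M⌋ = ⌊Int.fract (x' * b) * M⌋) :
    ∃ n : ℤ, |(x - x') * b - n| ≤ 1 / M := by
  refine ⟨⌊x * b⌋ - ⌊x' * b⌋, ?_⟩
  have e : (x - x') * b - ((⌊x * b⌋ - ⌊x' * b⌋ : ℤ) : ℝ)
      = Int.fract (x * b) - Int.fract (x' * b) := by
    rw [Int.fract, Int.fract]; push_cast; ring
  rw [e]
  have h1 := Int.floor_le (Int.fract (x * b) * M)
  have h2 := Int.lt_floor_add_one (Int.fract (x * b) * M)
  have h3 := Int.floor_le (Int.fract (x' * b) * M)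
  have h4 := Int.lt_floor_add_one (Int.fract (x' * b) * M)
  rw [h] at h1 h2
  have hMpos : (0 : ℝ) < M := by exact_mod_cast hM
  have hMM : (1 / (M:ℝ)) * M = 1 := by field_simp
  have hA : (Int.fract (x * b) - Int.fract (x' * b)) * M ≤ 1 := by nlinarith
  have hB : (Int.fract (x' * b) - Int.fract (x * b)) * M ≤ 1 := by nlinarith
  rw [abs_le]
  constructor
  · nlinarith [hB, hMM, hMpos]
  · nlinarith [hA, hMM, hMpos]

lemma stage_net (S : Finset ℝ) (η : ℝ) (hη : 0 < η) :
    ∃ C : Set ℝ, C.Finite ∧ ∀ x : ℝ, ∃ c ∈ C, ∀ b ∈ S, ∃ n : ℤ, |(x + c) * b - n| ≤ η := by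
  classical
  obtain ⟨M, hM⟩ := exists_nat_gt (1 / η)
  have hM0 : 0 < M := by
    have h0 : (0:ℝ) < (M:ℝ) := lt_trans (one_div_pos.2 hη) hM
    exact_mod_cast h0
  have hMpos : (0 : ℝ) < M := by exact_mod_cast hM0
  have hinv : 1 / (M : ℝ) ≤ η := by
    rw [div_le_iff₀ hMpos]
    rw [div_lt_iff₀ hη] at hM
    nlinarith
  set cf : ℝ → (S → ℤ) := fun x => fun b => ⌊Int.fract (x * (b : ℝ)) * M⌋ with hcf
  have hrange : (Set.range cf).Finite := by
    apply Set.Finite.subset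
      (Set.Finite.pi (t := fun _ : S => Set.Icc (-1 : ℤ) M) fun _ => Set.finite_Icc _ _)
    rintro y ⟨x, rfl⟩
    intro b _
    have hf0 := Int.fract_nonneg (x * (b : ℝ))
    have hf1 := Int.fract_lt_one (x * (b : ℝ))
    simp only [hcf]
    constructor
    · exact le_trans (by norm_num) (Int.floor_nonneg.2 (by positivity))
    · have hle : Int.fract (x * (b:ℝ)) * M ≤ (M:ℝ) := by nlinarith
      calc ⌊Int.fract (x * (b:ℝ)) * M⌋ ≤ ⌊(M:ℝ)⌋ := Int.floor_mono hle
        _ = M := by simp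
  have hch : ∀ y : Set.range cf, ∃ x, cf x = (y : S → ℤ) := fun y => y.2
  choose rep hrep using hch
  haveI := hrange.to_subtype
  refine ⟨Set.range fun y : Set.range cf => -rep y, Set.finite_range _, ?_⟩
  intro x
  refine ⟨-rep ⟨cf x, Set.mem_range_self x⟩, ⟨_, rfl⟩, ?_⟩
  intro b hb
  have hclass : cf (rep ⟨cf x, Set.mem_range_self x⟩) = cf x := hrep _
  have hco := congrFun hclass ⟨b, hb⟩
  obtain ⟨n, hn⟩ := close_of_classEq M hM0 b x (rep ⟨cf x, Set.mem_range_self x⟩) hco.symm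
  refine ⟨n, le_trans ?_ (le_trans hn hinv)⟩
  apply le_of_eq
  ring_nf

lemma stage_large (S : Finset ℝ) (η : ℝ) (hη : 0 < η) (R : ℝ) :
    ∃ c : ℝ, R ≤ c ∧ ∀ b ∈ S, ∃ n : ℤ, |c * b - n| ≤ η := by
  classical
  obtain ⟨M, hM⟩ := exists_nat_gt (1 / η)
  have hM0 : 0 < M := by
    have h0 : (0:ℝ) < (M:ℝ) := lt_trans (one_div_pos.2 hη) hM
    exact_mod_cast h0
  have hMpos : (0 : ℝ) < M := by exact_mod_cast hM0
  have hinv : 1 / (M : ℝ) ≤ η := by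
    rw [div_le_iff₀ hMpos]
    rw [div_lt_iff₀ hη] at hM
    nlinarith
  set R' := max R 1 with hR'def
  have hR1 : (1 : ℝ) ≤ R' := le_max_right _ _
  set cf : ℝ → (S → ℤ) := fun x => fun b => ⌊Int.fract (x * (b : ℝ)) * M⌋ with hcf
  have hrange : {y : S → ℤ | ∃ x : ℝ, cf x = y}.Finite := by
    apply Set.Finite.subset
      (Set.Finite.pi (t := fun _ : S => Set.Icc (-1 : ℤ) M) fun _ => Set.finite_Icc _ _)
    rintro y ⟨x, rfl⟩
    intro b _
    have hf0 := Int.fract_nonneg (x * (b : ℝ))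
    have hf1 := Int.fract_lt_one (x * (b : ℝ))
    simp only [hcf]
    constructor
    · exact le_trans (by norm_num) (Int.floor_nonneg.2 (by positivity))
    · have hle : Int.fract (x * (b:ℝ)) * M ≤ (M:ℝ) := by nlinarith
      calc ⌊Int.fract (x * (b:ℝ)) * M⌋ ≤ ⌊(M:ℝ)⌋ := Int.floor_mono hle
        _ = M := by simp
  obtain ⟨j, -, j', -, hne, heq⟩ :=
    Set.infinite_univ.exists_ne_map_eq_of_mapsTo
      (f := fun j : ℕ => cf (j * R')) (fun j _ => (Set.mem_setOf.2 ⟨j * R', rfl⟩)) hrange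
  rcases hne.lt_or_gt with hlt | hlt
  case _ =>
    refine ⟨(j' - j : ℕ) * R', ?_, ?_⟩
    · have : (1 : ℝ) ≤ ((j' - j : ℕ) : ℝ) := by
        have : 1 ≤ j' - j := by omega
        exact_mod_cast this
      calc R ≤ R' := le_max_left _ _
        _ = 1 * R' := (one_mul _).symm
        _ ≤ ((j' - j : ℕ) : ℝ) * R' := by nlinarith
    · intro b hb
      have hco := congrFun heq ⟨b, hb⟩
      obtain ⟨n, hn⟩ := close_of_classEq M hM0 b (j' * R') (j * R') hco.symm
      refine ⟨n, le_trans ?_ (le_trans hn hinv)⟩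
      apply le_of_eq
      have : ((j' - j : ℕ) : ℝ) = (j' : ℝ) - j := by
        have : j ≤ j' := le_of_lt hlt
        push_cast [this]; ring
      rw [this]; ring_nf
  case _ =>
    refine ⟨(j - j' : ℕ) * R', ?_, ?_⟩
    · have : (1 : ℝ) ≤ ((j - j' : ℕ) : ℝ) := by
        have : 1 ≤ j - j' := by omega
        exact_mod_cast this
      calc R ≤ R' := le_max_left _ _
        _ = 1 * R' := (one_mul _).symm
        _ ≤ ((j - j' : ℕ) : ℝ) * R' := by nlinarith
    · intro b hb
      have hco := congrFun heq ⟨b, hb⟩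
      obtain ⟨n, hn⟩ := close_of_classEq M hM0 b (j * R') (j' * R') hco
      refine ⟨n, le_trans ?_ (le_trans hn hinv)⟩
      apply le_of_eq
      have : ((j - j' : ℕ) : ℝ) = (j : ℝ) - j' := by
        have : j' ≤ j := le_of_lt hlt
        push_cast [this]; ring
      rw [this]; ring_nf

lemma core_s7 (ε : ℝ) (hε : 0 < ε) (hε1 : ε ≤ 1) (K : Set ℝ) (hK : K.Finite) :
    ∃ A : Set ℝ, A.Finite ∧ ∀ r : ℝ, ∃ a ∈ A, ∀ t ∈ K, ∃ m : ℤ,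
      |2 * t * (r + a) + (r + a) ^ 2 - 2 * π * m| ≤ ε := by
  classical
  have hπ := Real.pi_pos
  have hπ4 := Real.pi_le_four
  -- a bound for K
  obtain ⟨B, hB⟩ := (hK.image fun t => |t|).bddAbove
  obtain ⟨T, hTdef⟩ : ∃ x : ℝ, x = max B 1 := ⟨_, rfl⟩
  have hT1 : (1:ℝ) ≤ T := hTdef ▸ le_max_right _ _
  have hT0 : (0:ℝ) ≤ T := le_trans zero_le_one hT1
  have hTbound : ∀ t ∈ K, |t| ≤ T :=
    fun t ht => le_trans (hB (Set.mem_image_of_mem _ ht)) (hTdef ▸ le_max_left _ _)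
  -- constants
  obtain ⟨γ, hγdef⟩ : ∃ x : ℝ, x = ε / 64 := ⟨_, rfl⟩
  have hγ : 0 < γ := by rw [hγdef]; positivity
  obtain ⟨η, hηdef⟩ : ∃ x : ℝ, x = ε / 128 := ⟨_, rfl⟩
  have hη : 0 < η := by rw [hηdef]; positivity
  have hηγ2 : η ≤ γ/2 := by rw [hηdef, hγdef]; linarith
  obtain ⟨V, hVdef⟩ : ∃ z : ℤ, z = ⌈(2:ℝ)/γ⌉ := ⟨_, rfl⟩
  have hV2 : (2:ℝ)/γ ≤ (V:ℝ) := by rw [hVdef]; exact Int.le_ceil _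
  have hV1 : (1:ℤ) ≤ V := by
    rw [hVdef]
    exact Int.ceil_pos.2 (by positivity)
  obtain ⟨W, hWdef⟩ : ∃ x : ℝ, x = (V:ℝ) := ⟨_, rfl⟩
  have hW1 : (1:ℝ) ≤ W := by rw [hWdef]; exact_mod_cast hV1
  have hW0 : (0:ℝ) ≤ W := le_trans zero_le_one hW1
  have hTW0 : (0:ℝ) ≤ 2*T*W := mul_nonneg (mul_nonneg (by norm_num) hT0) hW0
  have hWW0 : (0:ℝ) ≤ W*W := mul_nonneg hW0 hW0
  have hDpos : (0:ℝ) < 2*T*W + W*W + 1 := by linarith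
  obtain ⟨Hm, hHmdef⟩ : ∃ x : ℝ, x = ε / (4*(2*T*W + W*W + 1)) := ⟨_, rfl⟩
  have hHmpos : 0 < Hm := by rw [hHmdef]; positivity
  have hHm1 : Hm ≤ 1 := by
    rw [hHmdef, div_le_one (by linarith)]
    linarith
  obtain ⟨cs, hcsR, hcslin⟩ := stage_large (hK.toFinset.image (fun t => t/π)) η hη
    (max 1 (4*γ/Hm))
  have hcs1 : (1:ℝ) ≤ cs := le_trans (le_max_left _ _) hcsR
  have hcs0 : (0:ℝ) < cs := lt_of_lt_of_le one_pos hcs1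
  obtain ⟨h₂, hh₂def⟩ : ∃ x : ℝ, x = γ * π / cs := ⟨_, rfl⟩
  have hh₂pos : 0 < h₂ := by rw [hh₂def]; positivity
  have hh₂Hm : h₂ ≤ Hm := by
    have hcsB : 4*γ/Hm ≤ cs := le_trans (le_max_right _ _) hcsR
    rw [div_le_iff₀ hHmpos] at hcsB
    rw [hh₂def, div_le_iff₀ hcs0]
    have h1 : γ * π ≤ γ * 4 := mul_le_mul_of_nonneg_left hπ4 hγ.le
    linarith
  have hkey : cs * (h₂/π) = γ := by
    rw [hh₂def]
    field_simp
  obtain ⟨C₀, hC₀fin, hC₀⟩ := stage_net (insert (h₂/π) (hK.toFinset.image (fun t => t/π))) η hη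
  refine ⟨Set.image2 (fun c (v:ℤ) => c + cs + (v:ℝ) * h₂) C₀ (Set.Icc 0 V),
    Set.Finite.image2 _ hC₀fin (Set.finite_Icc _ _), ?_⟩
  intro r
  obtain ⟨c₀, hc₀mem, hc₀⟩ := hC₀ r
  obtain ⟨k, hk⟩ := hc₀ (h₂/π) (Finset.mem_insert_self _ _)
  obtain ⟨σ, hσdef⟩ : ∃ x : ℝ, x = r + c₀ + cs := ⟨_, rfl⟩
  obtain ⟨ω, hωdef⟩ : ∃ x : ℝ, x = σ * (h₂/π) - k := ⟨_, rfl⟩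
  have hωγ : |ω - γ| ≤ η := by
    have e : ω - γ = (r + c₀) * (h₂/π) - k := by
      rw [hωdef, hσdef, ← hkey]; ring
    rw [e]; exact hk
  rw [abs_le] at hωγ
  have hωlow : γ/2 ≤ ω := by linarith [hωγ.1]
  have hωhigh : ω ≤ 2*γ := by linarith [hωγ.2]
  have hωpos : 0 < ω := by linarith
  obtain ⟨y, hydef⟩ : ∃ x : ℝ, x = σ^2 / (2*π) := ⟨_, rfl⟩
  have hy : σ^2 = 2*π*y := by
    rw [hydef]; field_simp
  -- stage 2 : choose v
  obtain ⟨u, hudef⟩ : ∃ x : ℝ, x = 1 - Int.fract y := ⟨_, rfl⟩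
  have hu0 : 0 < u := by
    have := Int.fract_lt_one y
    rw [hudef]; linarith
  have hu1 : u ≤ 1 := by
    have := Int.fract_nonneg y
    rw [hudef]; linarith
  obtain ⟨v, hvdef⟩ : ∃ z : ℤ, z = ⌈u/ω⌉ := ⟨_, rfl⟩
  have hv0 : 0 ≤ v := by
    have h1 : (0:ℝ) ≤ u/ω := by positivity
    rw [hvdef]
    exact Int.ceil_nonneg h1
  have hvV : v ≤ V := by
    have h1 : u/ω ≤ 2/γ := by
      rw [div_le_div_iff₀ hωpos hγ]
      calc u * γ ≤ 1 * γ := mul_le_mul_of_nonneg_right hu1 hγ.le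
        _ = γ := one_mul γ
        _ ≤ 2 * ω := by linarith
    rw [hvdef]
    exact Int.ceil_le.2 (le_trans h1 hV2)
  have hvlow : u ≤ (v:ℝ) * ω := by
    have h1 : u/ω ≤ (v:ℝ) := by rw [hvdef]; exact Int.le_ceil _
    have e : (u/ω) * ω = u := div_mul_cancel₀ u (ne_of_gt hωpos)
    have h2 := mul_le_mul_of_nonneg_right h1 (le_of_lt hωpos)
    rw [e] at h2
    exact h2
  have hvhigh : (v:ℝ) * ω ≤ u + ω := by
    have h1 : (v:ℝ) < u/ω + 1 := by rw [hvdef]; exact Int.ceil_lt_add_one _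
    have e : (u/ω) * ω = u := div_mul_cancel₀ u (ne_of_gt hωpos)
    have h2 := mul_lt_mul_of_pos_right h1 hωpos
    rw [add_mul, e, one_mul] at h2
    exact le_of_lt h2
  obtain ⟨N, hNdef⟩ : ∃ z : ℤ, z = ⌊y⌋ + 1 := ⟨_, rfl⟩
  have hquad : |y + (v:ℝ)*ω - N| ≤ 2*γ := by
    have e : y + (v:ℝ)*ω - (N:ℝ) = (v:ℝ)*ω - u := by
      rw [hNdef, hudef]; push_cast; rw [Int.fract]; ring
    rw [e, abs_le]
    constructor <;> linarith
  -- the chosen a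
  refine ⟨c₀ + cs + (v:ℝ) * h₂, Set.mem_image2_of_mem hc₀mem (Set.mem_Icc.2 ⟨hv0, hvV⟩), ?_⟩
  intro t ht
  obtain ⟨n1, hn1⟩ := hc₀ (t/π)
    (Finset.mem_insert_of_mem (Finset.mem_image_of_mem _ (hK.mem_toFinset.2 ht)))
  obtain ⟨n2, hn2⟩ := hcslin (t/π) (Finset.mem_image_of_mem _ (hK.mem_toFinset.2 ht))
  refine ⟨n1 + n2 + v*k + N, ?_⟩
  have hra : r + (c₀ + cs + (v:ℝ) * h₂) = σ + (v:ℝ)*h₂ := by rw [hσdef]; ring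
  have hσh₂ : σ * h₂ = π * (ω + k) := by
    rw [hωdef]; field_simp; ring
  have hlin : |2*t*σ - 2*π*((n1:ℝ) + n2)| ≤ 2*π*(2*η) := by
    have e : 2*t*σ - 2*π*((n1:ℝ) + n2)
        = 2*π*(((r + c₀) * (t/π) - n1) + (cs * (t/π) - n2)) := by
      rw [hσdef]; field_simp; ring
    rw [e, abs_mul, abs_of_pos (by positivity : (0:ℝ) < 2*π)]
    have h1 := le_trans (abs_add_le ((r + c₀) * (t/π) - (n1:ℝ)) (cs * (t/π) - (n2:ℝ)))
      (by linarith [hn1, hn2] :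
        |(r + c₀) * (t/π) - (n1:ℝ)| + |cs * (t/π) - (n2:ℝ)| ≤ 2*η)
    exact mul_le_mul_of_nonneg_left h1 (by positivity)
  have iden : 2*t*(σ + (v:ℝ)*h₂) + (σ + (v:ℝ)*h₂)^2 - 2*π*((n1 + n2 + v*k + N : ℤ):ℝ)
      = (2*t*σ - 2*π*((n1:ℝ) + n2)) + 2*π*(y + (v:ℝ)*ω - (N:ℝ))
        + (2*t*(v:ℝ)*h₂ + (v:ℝ)^2*h₂^2) := by
    push_cast
    linear_combination hy + 2*(v:ℝ)*hσh₂
  have hsmall : |2*t*(v:ℝ)*h₂ + (v:ℝ)^2*h₂^2| ≤ ε/4 := by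
    have hvW : (v:ℝ) ≤ W := by rw [hWdef]; exact_mod_cast hvV
    have hvpos : (0:ℝ) ≤ (v:ℝ) := by exact_mod_cast hv0
    have htT : |t| ≤ T := hTbound t ht
    have ht0 : 0 ≤ |t| := abs_nonneg t
    have h1 : |2*t*(v:ℝ)*h₂| ≤ 2*T*W*h₂ := by
      have e : |2*t*(v:ℝ)*h₂| = 2 * |t| * (v:ℝ) * h₂ := by
        rw [abs_mul, abs_mul, abs_mul, abs_of_nonneg hvpos, abs_of_pos hh₂pos]
        norm_num
      rw [e]
      have s1 : 2 * |t| * (v:ℝ) ≤ 2 * T * W :=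
        mul_le_mul (by linarith) hvW hvpos (by linarith)
      exact mul_le_mul_of_nonneg_right s1 hh₂pos.le
    have h2 : (v:ℝ)^2*h₂^2 ≤ W*W*Hm := by
      have s1 : (v:ℝ)^2 ≤ W*W := by
        rw [pow_two]
        exact mul_le_mul hvW hvW hvpos hW0
      have s2 : h₂^2 ≤ Hm := by
        rw [pow_two]
        calc h₂ * h₂ ≤ Hm * Hm := mul_le_mul hh₂Hm hh₂Hm hh₂pos.le hHmpos.le
          _ ≤ 1 * Hm := mul_le_mul_of_nonneg_right hHm1 hHmpos.le
          _ = Hm := one_mul Hm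
      calc (v:ℝ)^2*h₂^2 ≤ W*W*h₂^2 :=
            mul_le_mul_of_nonneg_right s1 (by positivity)
        _ ≤ W*W*Hm := mul_le_mul_of_nonneg_left s2 hWW0
    have h3 : 2*T*W*h₂ ≤ 2*T*W*Hm := mul_le_mul_of_nonneg_left hh₂Hm hTW0
    have h4 : (2*T*W + W*W)*Hm ≤ ε/4 := by
      rw [hHmdef, mul_comm, div_mul_eq_mul_div,
        div_le_div_iff₀ (by linarith) (by norm_num : (0:ℝ) < 4)]
      linarith [hε.le]
    calc |2*t*(v:ℝ)*h₂ + (v:ℝ)^2*h₂^2|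
        ≤ |2*t*(v:ℝ)*h₂| + |(v:ℝ)^2*h₂^2| := abs_add_le _ _
      _ = |2*t*(v:ℝ)*h₂| + (v:ℝ)^2*h₂^2 := by
          rw [abs_of_nonneg (by positivity : (0:ℝ) ≤ (v:ℝ)^2*h₂^2)]
      _ ≤ 2*T*W*h₂ + W*W*Hm := by linarith
      _ ≤ (2*T*W + W*W)*Hm := by linarith [h3, add_mul (2*T*W) (W*W) Hm]
      _ ≤ ε/4 := h4
  rw [hra, iden]
  have b1 := abs_add_le ((2*t*σ - 2*π*((n1:ℝ) + n2)) + 2*π*(y + (v:ℝ)*ω - (N:ℝ)))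
    (2*t*(v:ℝ)*h₂ + (v:ℝ)^2*h₂^2)
  have b2 := abs_add_le (2*t*σ - 2*π*((n1:ℝ) + n2)) (2*π*(y + (v:ℝ)*ω - (N:ℝ)))
  have b3 : |2*π*(y + (v:ℝ)*ω - (N:ℝ))| ≤ 2*π*(2*γ) := by
    rw [abs_mul, abs_of_pos (by positivity : (0:ℝ) < 2*π)]
    exact mul_le_mul_of_nonneg_left hquad (by positivity)
  have hπε : π*ε ≤ 4*ε := mul_le_mul_of_nonneg_right hπ4 hε.le
  have c1 : 2*π*(2*η) ≤ ε/8 := by rw [hηdef]; ring_nf; ring_nf at hπε; linarith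
  have c2 : 2*π*(2*γ) ≤ ε/4 := by rw [hγdef]; ring_nf; ring_nf at hπε; linarith
  linarith [hlin, hsmall, b1, b2, b3]

open Pointwise in
/-- `g(t) = e^{it²}` is recurrent for the discrete topology on `ℝ` (finite sets of
`ε`-periods can be finitely translated to cover `ℝ`), but is not recurrent for the usual
topology on `ℝ`. -/
theorem exp_I_sq_discrete_recurrent_not_recurrent :
    (∀ ε > (0 : ℝ), ∀ K : Set ℝ, K.Finite →
      ∃ F : Set ℝ, F.Finite ∧
        Eset (fun t : ℝ => Complex.exp (Complex.I * (t : ℂ) ^ 2)) ε K + F = Set.univ) ∧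
    (∃ ε > (0 : ℝ), ∃ K : Set ℝ, IsCompact K ∧
      ¬ RelDense (Eset (fun t : ℝ => Complex.exp (Complex.I * (t : ℂ) ^ 2)) ε K)) := by
  constructor
  · -- part (a)
    intro ε hε K hK
    have hε₂pos : 0 < min ε 1 / 2 := by
      have := lt_min hε one_pos
      positivity
    obtain ⟨A, hAfin, hA⟩ := core_s7 (min ε 1 / 2) hε₂pos
      (by have := min_le_right ε 1; linarith) K hK
    refine ⟨(fun a => -a) '' A, hAfin.image _, ?_⟩
    rw [Set.eq_univ_iff_forall]
    intro r
    obtain ⟨a, haA, ha⟩ := hA r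
    rw [Set.mem_add]
    refine ⟨r + a, ?_, -a, Set.mem_image_of_mem _ haA, by ring⟩
    intro t ht
    obtain ⟨m, hm⟩ := ha t ht
    have h1 : |2 * t * (r + a) + (r + a) ^ 2 - 2 * π * m| ≤ 1 := by
      have := min_le_right ε 1
      calc |2 * t * (r + a) + (r + a) ^ 2 - 2 * π * m| ≤ min ε 1 / 2 := hm
        _ ≤ 1 := by linarith
    calc ‖Complex.exp (Complex.I * ((t + (r + a) : ℝ) : ℂ) ^ 2)
            - Complex.exp (Complex.I * (t : ℂ) ^ 2)‖
        = ‖Complex.exp (Complex.I * ((2 * t * (r + a) + (r + a) ^ 2 : ℝ) : ℂ)) - 1‖ :=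
          norm_g_sub t (r + a)
      _ ≤ 2 * |2 * t * (r + a) + (r + a) ^ 2 - 2 * π * m| := exp_phase_le _ m h1
      _ ≤ 2 * (min ε 1 / 2) := by linarith [hm]
      _ ≤ ε := by have := min_le_left ε 1; linarith
  · -- part (b)
    refine ⟨1/2, by norm_num, Set.Icc (-1) 1, isCompact_Icc, ?_⟩
    rintro ⟨L, hL0, hall⟩
    obtain ⟨τ, hτE, hτmem⟩ := hall (π/2)
    have hπ := Real.pi_pos
    have hτ : π/2 ≤ τ := hτmem.1
    have hτpos : 0 < τ := by linarith
    have hs0 : 0 < π/(2*τ) := by positivity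
    have hs1 : π/(2*τ) ≤ 1 := by
      rw [div_le_one (by linarith)]
      linarith
    have h1 : ‖Complex.exp (Complex.I * ((π/(2*τ) + τ : ℝ) : ℂ) ^ 2)
        - Complex.exp (Complex.I * ((π/(2*τ) : ℝ) : ℂ) ^ 2)‖ ≤ 1/2 :=
      hτE (π/(2*τ)) (Set.mem_Icc.2 ⟨by linarith, hs1⟩)
    have h0 : ‖Complex.exp (Complex.I * ((0 + τ : ℝ) : ℂ) ^ 2)
        - Complex.exp (Complex.I * ((0 : ℝ) : ℂ) ^ 2)‖ ≤ 1/2 :=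
      hτE 0 (Set.mem_Icc.2 ⟨by norm_num, by norm_num⟩)
    rw [norm_g_sub] at h1 h0
    have e1 : (2 * (π/(2*τ)) * τ + τ ^ 2 : ℝ) = τ^2 + π := by
      field_simp
      ring
    have e0 : (2 * 0 * τ + τ ^ 2 : ℝ) = τ^2 := by ring
    rw [e1, exp_phase_pi] at h1
    rw [e0] at h0
    have hz : ‖Complex.exp (Complex.I * ((τ^2 : ℝ) : ℂ))‖ = 1 := norm_exp_I _
    have key : (2:ℝ) ≤ 1 := by
      calc (2:ℝ) = ‖(2 : ℂ) * Complex.exp (Complex.I * ((τ^2 : ℝ) : ℂ))‖ := by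
            rw [norm_mul, hz, mul_one]
            norm_num
        _ = ‖(Complex.exp (Complex.I * ((τ^2 : ℝ) : ℂ)) - 1)
              - (-Complex.exp (Complex.I * ((τ^2 : ℝ) : ℂ)) - 1)‖ := by
            congr 1
            ring
        _ ≤ ‖Complex.exp (Complex.I * ((τ^2 : ℝ) : ℂ)) - 1‖
            + ‖-Complex.exp (Complex.I * ((τ^2 : ℝ) : ℂ)) - 1‖ := norm_sub_le _ _
        _ ≤ 1/2 + 1/2 := add_le_add h0 h1
        _ = 1 := by norm_num
    norm_num at key

end
end

section
/- Let X be a Banach space and f : ℝ → X recurrent. Then for every h > 0 the function M_h f, defined by M_h f(t) = (1/h) ∫₀^h f(t + s) ds, is recurrent. -/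
open Filter Topology Pointwise

/-- If `f` is recurrent then so is each mean `M_h f(t) = (1/h) ∫₀ʰ f(t+s) ds`, `h > 0`. -/
theorem recurrent_mean {X : Type*} [NormedAddCommGroup X] [NormedSpace ℝ X] [CompleteSpace X]
    (f : ℝ → X) (hf : Recurrent f) :
    ∀ h > (0 : ℝ), Recurrent (fun t => (1 / h) • ∫ s in (0 : ℝ)..h, f (t + s)) := by
  intro h hh
  obtain ⟨hfc, hfr⟩ := hf
  have hint : ∀ a b : ℝ, IntervalIntegrable f MeasureTheory.volume a b :=
    fun a b => hfc.intervalIntegrable a b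
  constructor
  · -- continuity
    have hF : Continuous fun b => ∫ x in (0:ℝ)..b, f x :=
      intervalIntegral.continuous_primitive hint 0
    have key : ∀ t : ℝ, (∫ s in (0:ℝ)..h, f (t + s))
        = (∫ x in (0:ℝ)..(t + h), f x) - ∫ x in (0:ℝ)..t, f x := by
      intro t
      have h1 : (∫ s in (0:ℝ)..h, f (t + s)) = ∫ s in (0:ℝ)..h, f (s + t) := by
        simp [add_comm]
      rw [h1, intervalIntegral.integral_comp_add_right f t, zero_add, add_comm h t,
        ← intervalIntegral.integral_interval_sub_left (hint 0 (t + h)) (hint 0 t)]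
    have : Continuous fun t => ∫ s in (0:ℝ)..h, f (t + s) := by
      simp only [key]
      exact (hF.comp (continuous_id.add continuous_const)).sub (hF.comp continuous_id)
    exact continuous_const.smul this
  · intro ε hε K hK
    obtain ⟨L, hL, hrel⟩ := hfr ε hε (K + Set.Icc 0 h) (hK.add isCompact_Icc)
    refine ⟨L, hL, fun a => ?_⟩
    obtain ⟨τ, hτE, hτI⟩ := hrel a
    refine ⟨τ, ?_, hτI⟩
    intro t ht
    have hle : ∀ s ∈ Set.Icc 0 h, ‖f (t + τ + s) - f (t + s)‖ ≤ ε := by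
      intro s hs
      have : t + s ∈ K + Set.Icc 0 h := Set.add_mem_add ht hs
      have := hτE (t + s) this
      have e : t + s + τ = t + τ + s := by ring
      rwa [e] at this
    have hi1 : IntervalIntegrable (fun s => f (t + τ + s)) MeasureTheory.volume 0 h :=
      (hfc.comp (continuous_const.add continuous_id)).intervalIntegrable 0 h
    have hi2 : IntervalIntegrable (fun s => f (t + s)) MeasureTheory.volume 0 h :=
      (hfc.comp (continuous_const.add continuous_id)).intervalIntegrable 0 h
    have hsub : (∫ s in (0:ℝ)..h, f (t + τ + s)) - ∫ s in (0:ℝ)..h, f (t + s)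
        = ∫ s in (0:ℝ)..h, (f (t + τ + s) - f (t + s)) :=
      (intervalIntegral.integral_sub hi1 hi2).symm
    have hnorm : ‖∫ s in (0:ℝ)..h, (f (t + τ + s) - f (t + s))‖ ≤ ε * |h - 0| := by
      apply intervalIntegral.norm_integral_le_of_norm_le_const
      intro s hs
      apply hle
      rw [Set.uIoc_of_le hh.le] at hs
      exact ⟨hs.1.le, hs.2⟩
    simp only
    rw [← smul_sub, hsub]
    rw [norm_smul]
    have : ‖(1/h : ℝ)‖ = 1 / h := by
      rw [Real.norm_eq_abs, abs_of_pos (by positivity)]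
    rw [this]
    calc (1/h) * ‖∫ s in (0:ℝ)..h, (f (t + τ + s) - f (t + s))‖
        ≤ (1/h) * (ε * |h - 0|) := by
          apply mul_le_mul_of_nonneg_left hnorm (by positivity)
      _ = ε := by
          rw [sub_zero, abs_of_pos hh]; field_simp
end

section
/- Let G be a topological abelian group, X a complex Banach space, and V a nonempty set of recurrent functions G → X satisfying condition (3.2). Then the collection of sets U of recurrent functions G → X with V ⊆ U and satisfying (3.2) has a maximal element with respect to set inclusion, and every such maximal element U is: closed under addition and under multiplication by complex scalars, contains all constant functions, is translation invariant (f ∈ U and a ∈ G imply f(· + a) ∈ U), and is closed under uniform convergence on G (if f_k ∈ U and f_k → f uniformly on G, then f ∈ U). -/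
open Filter Topology Pointwise

/-- Condition (3.2): every finite tuple from `U` is recurrent as a vector-valued
function, i.e. has relatively dense sets of joint `ε`-`K`-periods. -/
def Sat32 {G X : Type*} [AddCommGroup G] [TopologicalSpace G] [NormedAddCommGroup X]
    (U : Set (G → X)) : Prop :=
  ∀ n : ℕ, ∀ f : Fin n → (G → X), (∀ i, f i ∈ U) →
    ∀ ε > (0 : ℝ), ∀ K : Set G, IsCompact K →
      RelDenseG {τ : G | ∀ t ∈ K, ∀ i, ‖f i (t + τ) - f i t‖ ≤ ε}

lemma relDenseG_mono {G : Type*} [AddCommGroup G] [TopologicalSpace G] {E E' : Set G}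
    (h : E ⊆ E') (hE : RelDenseG E) : RelDenseG E' := by
  obtain ⟨L, hL, heq⟩ := hE
  refine ⟨L, hL, ?_⟩
  apply Set.eq_univ_of_univ_subset
  rw [← heq]
  exact Set.add_subset_add_right h

lemma relDenseG_univ {G : Type*} [AddCommGroup G] [TopologicalSpace G] :
    RelDenseG (Set.univ : Set G) := by
  refine ⟨{0}, isCompact_singleton, ?_⟩
  apply Set.eq_univ_of_univ_subset
  intro x _
  exact ⟨x, trivial, 0, rfl, add_zero x⟩

open Classical in
/-- Key lemma: if every `ε`-`K`-period set of `f₀` contains a joint period set of a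
finite family from `U`, then `insert f₀ U` still satisfies (3.2), and `f₀` is recurrent
provided it is continuous. -/
lemma key32 {G X : Type*} [AddCommGroup G] [TopologicalSpace G] [NormedAddCommGroup X]
    (U : Set (G → X)) (h32 : Sat32 U) (hne : U.Nonempty) (f₀ : G → X)
    (h : ∀ ε > (0 : ℝ), ∀ K : Set G, IsCompact K → ∃ m : ℕ, ∃ g : Fin m → (G → X),
      (∀ i, g i ∈ U) ∧ ∃ δ > (0 : ℝ), ∃ K' : Set G, IsCompact K' ∧
        {τ : G | ∀ t ∈ K', ∀ i, ‖g i (t + τ) - g i t‖ ≤ δ} ⊆ EsetG f₀ ε K) :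
    Sat32 (insert f₀ U) ∧
      (∀ ε > (0 : ℝ), ∀ K : Set G, IsCompact K → RelDenseG (EsetG f₀ ε K)) := by
  obtain ⟨v₀, hv₀⟩ := hne
  constructor
  · intro n f hf ε hε K hK
    obtain ⟨m, g, hg, δ, hδ, K', hK', hsub⟩ := h ε hε K hK
    set F : Fin (n + m) → (G → X) :=
      Fin.addCases (fun i => if f i ∈ U then f i else v₀) g with hF
    have hFU : ∀ j, F j ∈ U := by
      intro j
      refine Fin.addCases (motive := fun j => F j ∈ U) ?_ ?_ j
      · intro i
        simp only [hF, Fin.addCases_left]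
        split_ifs with hi
        exacts [hi, hv₀]
      · intro i
        simp only [hF, Fin.addCases_right]
        exact hg i
    have hrd := h32 (n + m) F hFU (min ε δ) (lt_min hε hδ) (K ∪ K') (hK.union hK')
    refine relDenseG_mono ?_ hrd
    intro τ hτ
    have hτf₀ : τ ∈ EsetG f₀ ε K := by
      apply hsub
      intro t ht i
      have h1 := hτ t (Set.mem_union_right K ht) (Fin.natAdd n i)
      simp only [hF, Fin.addCases_right] at h1
      exact h1.trans (min_le_right _ _)
    intro t ht i
    by_cases hi : f i ∈ U
    · have h1 := hτ t (Set.mem_union_left K' ht) (Fin.castAdd m i)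
      simp only [hF, Fin.addCases_left, if_pos hi] at h1
      exact h1.trans (min_le_left _ _)
    · have heq : f i = f₀ := by
        rcases hf i with h' | h'
        · exact h'
        · exact absurd h' hi
      rw [heq]
      exact hτf₀ t ht
  · intro ε hε K hK
    obtain ⟨m, g, hg, δ, hδ, K', hK', hsub⟩ := h ε hε K hK
    exact relDenseG_mono hsub (h32 m g hg δ hδ K' hK')

/-- From maximality, deduce membership of `f₀`. -/
lemma mem_of_maximal {G X : Type*} [AddCommGroup G] [TopologicalSpace G]
    [NormedAddCommGroup X]
    (V U : Set (G → X)) (hU : (∀ f ∈ U, RecurrentG f) ∧ V ⊆ U ∧ Sat32 U)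
    (hmax : ∀ U' : Set (G → X), ((∀ f ∈ U', RecurrentG f) ∧ V ⊆ U' ∧ Sat32 U') →
      U ⊆ U' → U' = U)
    (hne : U.Nonempty) (f₀ : G → X) (hc : Continuous f₀)
    (h : ∀ ε > (0 : ℝ), ∀ K : Set G, IsCompact K → ∃ m : ℕ, ∃ g : Fin m → (G → X),
      (∀ i, g i ∈ U) ∧ ∃ δ > (0 : ℝ), ∃ K' : Set G, IsCompact K' ∧
        {τ : G | ∀ t ∈ K', ∀ i, ‖g i (t + τ) - g i t‖ ≤ δ} ⊆ EsetG f₀ ε K) :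
    f₀ ∈ U := by
  obtain ⟨h32, hrec⟩ := key32 U hU.2.2 hne f₀ h
  have hP : (∀ f ∈ insert f₀ U, RecurrentG f) ∧ V ⊆ insert f₀ U ∧ Sat32 (insert f₀ U) := by
    refine ⟨?_, hU.2.1.trans (Set.subset_insert _ _), h32⟩
    intro f hf
    rcases hf with h' | h'
    · subst h'; exact ⟨hc, hrec⟩
    · exact hU.1 f h'
  have := hmax (insert f₀ U) hP (Set.subset_insert _ _)
  rw [← this]
  exact Set.mem_insert _ _

/-- The collection of sets of recurrent functions containing `V` and satisfying (3.2)
has a maximal element, and every maximal element is closed under addition and complex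
scalar multiplication, contains the constants, is translation invariant, and is closed
under uniform convergence. -/
theorem exists_maximal_rec_class {G X : Type*} [AddCommGroup G] [TopologicalSpace G]
    [IsTopologicalAddGroup G] [NormedAddCommGroup X] [NormedSpace ℂ X] [CompleteSpace X]
    (V : Set (G → X)) (hV : V.Nonempty) (hVrec : ∀ f ∈ V, RecurrentG f) (hV32 : Sat32 V) :
    (∃ U : Set (G → X),
        ((∀ f ∈ U, RecurrentG f) ∧ V ⊆ U ∧ Sat32 U) ∧
        ∀ U' : Set (G → X), ((∀ f ∈ U', RecurrentG f) ∧ V ⊆ U' ∧ Sat32 U') →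
          U ⊆ U' → U' = U) ∧
    (∀ U : Set (G → X),
        ((∀ f ∈ U, RecurrentG f) ∧ V ⊆ U ∧ Sat32 U) →
        (∀ U' : Set (G → X), ((∀ f ∈ U', RecurrentG f) ∧ V ⊆ U' ∧ Sat32 U') →
          U ⊆ U' → U' = U) →
        ((∀ g ∈ U, ∀ h ∈ U, g + h ∈ U) ∧
         (∀ (c : ℂ), ∀ g ∈ U, c • g ∈ U) ∧
         (∀ x : X, (fun _ : G => x) ∈ U) ∧
         (∀ g ∈ U, ∀ a : G, (fun t => g (t + a)) ∈ U) ∧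
         (∀ (fk : ℕ → G → X) (f : G → X), (∀ k, fk k ∈ U) →
            TendstoUniformly fk f atTop → f ∈ U))) := by
  set S : Set (Set (G → X)) :=
    {U | (∀ f ∈ U, RecurrentG f) ∧ V ⊆ U ∧ Sat32 U} with hS
  constructor
  · -- existence of a maximal element, via Zorn's lemma
    have hzorn : ∀ c ⊆ S, IsChain (· ⊆ ·) c → c.Nonempty →
        ∃ ub ∈ S, ∀ s ∈ c, s ⊆ ub := by
      intro c hcS hc ⟨c₀, hc₀⟩
      refine ⟨⋃₀ c, ⟨?_, ?_, ?_⟩, fun s hs => Set.subset_sUnion_of_mem hs⟩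
      · rintro f ⟨W, hWc, hfW⟩
        exact (hcS hWc).1 f hfW
      · exact (hcS hc₀).2.1.trans (Set.subset_sUnion_of_mem hc₀)
      · intro n f hf ε hε K hK
        rcases Nat.eq_zero_or_pos n with hn | hn
        · subst hn
          have : {τ : G | ∀ t ∈ K, ∀ i : Fin 0, ‖f i (t + τ) - f i t‖ ≤ ε} = Set.univ := by
            apply Set.eq_univ_of_forall
            intro τ t _ i
            exact i.elim0
          rw [this]
          exact relDenseG_univ
        · choose W hWc hfW using fun i => hf i
          have : Nonempty (Fin n) := ⟨⟨0, hn⟩⟩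
          obtain ⟨M, hMr, hMmax⟩ := Set.Finite.exists_maximalFor id (Set.range W)
            (Set.finite_range W) (Set.range_nonempty W)
          obtain ⟨i₀, hi₀⟩ := hMr
          have hMc : M ∈ c := hi₀ ▸ hWc i₀
          have hWM : ∀ i, W i ⊆ M := by
            intro i
            by_cases h' : W i = M
            · exact h'.le
            · rcases hc hMc (hWc i) (fun h'' => h' h''.symm) with h1 | h1
              · exact hMmax (Set.mem_range_self i) h1
              · exact h1
          exact (hcS hMc).2.2 n f (fun i => hWM i (hfW i)) ε hε K hK
    obtain ⟨m, _, hmem, hm⟩ := zorn_subset_nonempty S hzorn V ⟨hVrec, subset_rfl, hV32⟩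
    exact ⟨m, hmem, fun U' hU' hsub => subset_antisymm (hm hU' hsub) hsub⟩
  · -- closure properties of any maximal element
    intro U hU hmax
    have hUne : U.Nonempty := hV.mono hU.2.1
    have hUrec := hU.1
    refine ⟨?_, ?_, ?_, ?_, ?_⟩
    · -- addition
      intro g hg h hh
      refine mem_of_maximal V U hU hmax hUne (g + h)
        ((hUrec g hg).1.add (hUrec h hh).1) ?_
      intro ε hε K hK
      refine ⟨2, ![g, h], ?_, ε / 2, by linarith, K, hK, ?_⟩
      · intro i
        fin_cases i <;> simpa using ‹_›
      · intro τ hτ t ht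
        have h1 := hτ t ht 0
        have h2 := hτ t ht 1
        simp only [Matrix.cons_val_zero, Matrix.cons_val_one, Matrix.head_cons] at h1 h2
        have : (g + h) (t + τ) - (g + h) t = (g (t + τ) - g t) + (h (t + τ) - h t) := by
          simp [Pi.add_apply]; abel
        rw [this]
        calc ‖(g (t + τ) - g t) + (h (t + τ) - h t)‖
            ≤ ‖g (t + τ) - g t‖ + ‖h (t + τ) - h t‖ := norm_add_le _ _
          _ ≤ ε / 2 + ε / 2 := add_le_add h1 h2
          _ = ε := by ring
    · -- scalar multiplication
      intro c g hg
      refine mem_of_maximal V U hU hmax hUne (c • g)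
        ((hUrec g hg).1.const_smul c) ?_
      intro ε hε K hK
      have hd : (0 : ℝ) < ε / (‖c‖ + 1) := by positivity
      refine ⟨1, ![g], ?_, ε / (‖c‖ + 1), hd, K, hK, ?_⟩
      · intro i; fin_cases i; simpa using hg
      · intro τ hτ t ht
        have h1 := hτ t ht 0
        simp only [Matrix.cons_val_zero] at h1
        have : (c • g) (t + τ) - (c • g) t = c • (g (t + τ) - g t) := by
          simp [smul_sub]
        rw [this, norm_smul]
        calc ‖c‖ * ‖g (t + τ) - g t‖ ≤ (‖c‖ + 1) * (ε / (‖c‖ + 1)) := by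
              apply mul_le_mul (by linarith) h1 (norm_nonneg _) (by positivity)
          _ = ε := by field_simp
    · -- constants
      intro x
      refine mem_of_maximal V U hU hmax hUne (fun _ : G => x) continuous_const ?_
      intro ε hε K hK
      refine ⟨0, Fin.elim0, fun i => i.elim0, 1, one_pos, K, hK, ?_⟩
      intro τ _ t _
      simp [le_of_lt hε]
    · -- translation
      intro g hg a
      refine mem_of_maximal V U hU hmax hUne (fun t => g (t + a))
        ((hUrec g hg).1.comp (continuous_id.add continuous_const)) ?_
      intro ε hε K hK
      refine ⟨1, ![g], ?_, ε, hε, (fun t => t + a) '' K,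
        hK.image (continuous_id.add continuous_const), ?_⟩
      · intro i; fin_cases i; simpa using hg
      · intro τ hτ t ht
        have h1 := hτ (t + a) ⟨t, ht, rfl⟩ 0
        simp only [Matrix.cons_val_zero] at h1
        show ‖g (t + τ + a) - g (t + a)‖ ≤ ε
        have heq : t + τ + a = t + a + τ := by abel
        rw [heq]
        exact h1
    · -- uniform limits
      intro fk f hk hconv
      have hfc : Continuous f :=
        hconv.continuous (Eventually.of_forall fun k => (hUrec _ (hk k)).1).frequently
      refine mem_of_maximal V U hU hmax hUne f hfc ?_
      intro ε hε K hK
      have h3 : (0 : ℝ) < ε / 3 := by linarith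
      obtain ⟨k, hkε⟩ := ((Metric.tendstoUniformly_iff.mp hconv) (ε / 3) h3).exists
      refine ⟨1, ![fk k], ?_, ε / 3, h3, K, hK, ?_⟩
      · intro i; fin_cases i; simpa using hk k
      · intro τ hτ t ht
        have h1 := hτ t ht 0
        simp only [Matrix.cons_val_zero] at h1
        have e1 : ‖f (t + τ) - fk k (t + τ)‖ ≤ ε / 3 := by
          have := hkε (t + τ)
          rw [dist_eq_norm] at this
          exact this.le
        have e2 : ‖fk k t - f t‖ ≤ ε / 3 := by
          have := hkε t
          rw [dist_eq_norm] at this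
          simpa [norm_sub_rev] using this.le
        calc ‖f (t + τ) - f t‖
            = ‖(f (t + τ) - fk k (t + τ)) + (fk k (t + τ) - fk k t) + (fk k t - f t)‖ := by
              congr 1; abel
          _ ≤ ‖f (t + τ) - fk k (t + τ)‖ + ‖fk k (t + τ) - fk k t‖ + ‖fk k t - f t‖ :=
              norm_add₃_le
          _ ≤ ε / 3 + ε / 3 + ε / 3 := by
              exact add_le_add (add_le_add e1 h1) e2
          _ = ε := by ring
end
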